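/- arXiv:1609.04559 — 13 statements merged into one kernel-verified Lean document; each statement's English description precedes it below -/
import Mathlib

section
/- Let λ ≥ 0, let c : ℝ → (0,∞) be continuous, and let Φ_c(x) = ∫₀^x dw/c(w). Suppose q : ℝ × (0,∞) → ℝ is twice continuously differentiable and satisfies the classical telegraph equation ∂²q/∂t² + 2λ ∂q/∂t = ∂²q/∂y². Then the function p(x,t) = q(Φ_c(x), t) satisfies the telegraph equation with space-varying velocity: ∂²p/∂t² + 2λ ∂p/∂t = c(x) ∂/∂x( c(x) ∂p/∂x ) for all x ∈ ℝ and t > 0. -/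
open Real MeasureTheory

/-- `Φ_c x = ∫₀ˣ dw / c(w)`. -/
noncomputable def Phi (c : ℝ → ℝ) (x : ℝ) : ℝ := ∫ w in (0:ℝ)..x, (c w)⁻¹

theorem telegraph_space_varying_velocity_from_classical
    (lam : ℝ) (hlam : 0 ≤ lam)
    (c : ℝ → ℝ) (hc : Continuous c) (hcpos : ∀ x, 0 < c x)
    (q : ℝ → ℝ → ℝ)
    (hq : ContDiffOn ℝ 2 (fun z : ℝ × ℝ => q z.1 z.2) (Set.univ ×ˢ Set.Ioi (0:ℝ)))
    (heq : ∀ y : ℝ, ∀ t : ℝ, 0 < t →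
      iteratedDeriv 2 (fun s => q y s) t + 2 * lam * deriv (fun s => q y s) t
        = iteratedDeriv 2 (fun z => q z t) y)
    (p : ℝ → ℝ → ℝ)
    (hp : ∀ x, ∀ t : ℝ, p x t = q (Phi c x) t) :
    ∀ x : ℝ, ∀ t : ℝ, 0 < t →
      iteratedDeriv 2 (fun s => p x s) t + 2 * lam * deriv (fun s => p x s) t
        = c x * deriv (fun y => c y * deriv (fun z => p z t) y) x := by
  intro x t ht
  have hcinv : Continuous fun w => (c w)⁻¹ := hc.inv₀ fun w => (hcpos w).ne'
  have hPhi : ∀ z : ℝ, HasDerivAt (Phi c) (c z)⁻¹ z := by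
    intro z
    have := (hcinv.integral_hasStrictDerivAt (0 : ℝ) z).hasDerivAt
    exact this
  -- f is the spatial slice of q
  set f : ℝ → ℝ := fun z => q z t with hf_def
  have hft : ContDiff ℝ 2 f := by
    rw [← contDiffOn_univ]
    have hmap : Set.MapsTo (fun z : ℝ => (z, t)) Set.univ (Set.univ ×ˢ Set.Ioi (0:ℝ)) := by
      intro z _; exact ⟨trivial, ht⟩
    exact hq.comp ((contDiff_id.prodMk contDiff_const).contDiffOn) hmap
  have hfd : Differentiable ℝ f := hft.differentiable two_ne_zero
  have hfd2 : Differentiable ℝ (deriv f) := by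
    have : ContDiff ℝ ((1:ℕ∞) + 1) f := hft
    rw [contDiff_succ_iff_deriv] at this
    exact this.2.2.differentiable (by simp)
  -- first spatial derivative of p
  have hpt : (fun z => p z t) = fun z => f (Phi c z) := by
    funext z; exact hp z t
  have hd1 : ∀ z : ℝ, deriv (fun z => p z t) z = deriv f (Phi c z) * (c z)⁻¹ := by
    intro z
    rw [hpt]
    exact (((hfd (Phi c z)).hasDerivAt).comp z (hPhi z)).deriv
  have hstep : (fun y => c y * deriv (fun z => p z t) y) = fun y => deriv f (Phi c y) := by
    funext y
    rw [hd1 y]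
    have hy := (hcpos y).ne'
    field_simp
  have hd2 : deriv (fun y => c y * deriv (fun z => p z t) y) x
      = deriv (deriv f) (Phi c x) * (c x)⁻¹ := by
    rw [hstep]
    exact (((hfd2 (Phi c x)).hasDerivAt).comp x (hPhi x)).deriv
  have hiter : deriv (deriv f) = iteratedDeriv 2 f := by
    rw [iteratedDeriv_succ, iteratedDeriv_one]
  have hpx : (fun s => p x s) = fun s => q (Phi c x) s := by
    funext s; exact hp x s
  rw [hpx, heq (Phi c x) t ht, hd2, hiter]
  have hx := (hcpos x).ne'
  field_simp
  rfl
end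

section
/- Let λ > 0 and c > 0. The absolutely continuous component of the telegraph process law, namely the function p(x,t) = (e^{−λt}/2)[ λ I₀( (λ/c)√(c²t² − x²) ) + ∂/∂t I₀( (λ/c)√(c²t² − x²) ) ], satisfies the telegraph equation ∂²p/∂t² + 2λ ∂p/∂t = c² ∂²p/∂x² for all (x,t) with t > 0 and |x| < ct. -/
open Real MeasureTheory

/-- Modified Bessel function of order zero, `I₀(z) = ∑ₖ (z/2)^{2k} / (k!)²`. -/
noncomputable def besselI0 (z : ℝ) : ℝ := ∑' k : ℕ, (z/2)^(2*k) / ((k.factorial : ℝ))^2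



/-- sum of power series with coefficients `a`. -/
noncomputable def Sa (a : ℕ → ℝ) (u : ℝ) : ℝ := ∑' k : ℕ, a k * u ^ k

/-- formal derivative of coefficient sequence. -/
def Dc (a : ℕ → ℝ) : ℕ → ℝ := fun k => (k + 1) * a (k + 1)

/-- boundedness by 1/k!. -/
def Bd (a : ℕ → ℝ) : Prop := ∀ k : ℕ, |a k| ≤ 1 / (k.factorial : ℝ)

lemma Bd.D {a : ℕ → ℝ} (h : Bd a) : Bd (Dc a) := by
  intro k
  have hk := h (k + 1)
  have hfac : ((k+1).factorial : ℝ) = (k+1) * k.factorial := by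
    push_cast [Nat.factorial_succ]; ring
  have hpos : (0:ℝ) < k.factorial := by positivity
  have hpos1 : (0:ℝ) < (k:ℝ) + 1 := by positivity
  unfold Dc
  rw [abs_mul]
  have h1 : |((k:ℝ) + 1)| = (k:ℝ) + 1 := abs_of_pos hpos1
  push_cast at hk ⊢
  rw [h1]
  calc ((k:ℝ)+1) * |a (k+1)| ≤ ((k:ℝ)+1) * (1 / ((k+1).factorial : ℝ)) := by
        apply mul_le_mul_of_nonneg_left hk hpos1.le
    _ = 1 / (k.factorial : ℝ) := by
        rw [hfac]; field_simp

lemma summable_term {a : ℕ → ℝ} (h : Bd a) (u : ℝ) :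
    Summable (fun k : ℕ => a k * u ^ k) := by
  apply Summable.of_norm
  apply Summable.of_nonneg_of_le (fun k => norm_nonneg _) (fun k => ?_)
    (Real.summable_pow_div_factorial |u|)
  rw [norm_mul, norm_pow, Real.norm_eq_abs, Real.norm_eq_abs]
  calc |a k| * |u| ^ k ≤ (1 / (k.factorial : ℝ)) * |u| ^ k := by
        apply mul_le_mul_of_nonneg_right (h k) (by positivity)
    _ = |u| ^ k / k.factorial := by ring

lemma term_deriv_bound {a : ℕ → ℝ} (h : Bd a) {R : ℝ} (hR : 1 ≤ R) {y : ℝ}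
    (hy : |y| ≤ R) (k : ℕ) : |a k * ((k:ℝ) * y ^ (k - 1))| ≤ (2*R) ^ k / k.factorial := by
  have h0 : (0:ℝ) < R := lt_of_lt_of_le one_pos hR
  have hyR : |y| ^ (k-1) ≤ R ^ k := by
    calc |y| ^ (k-1) ≤ R ^ (k-1) := pow_le_pow_left₀ (abs_nonneg _) hy _
      _ ≤ R ^ k := pow_le_pow_right₀ hR (Nat.sub_le k 1)
  have hk2 : (k:ℝ) ≤ 2 ^ k := by exact_mod_cast Nat.le_of_lt ((Nat.lt_two_pow_self (n := k)))
  rw [abs_mul, abs_mul]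
  have : |a k| * (|(k:ℝ)| * |y ^ (k-1)|) ≤ (1/(k.factorial:ℝ)) * (2^k * R^k) := by
    apply mul_le_mul (h k) ?_ (by positivity) (by positivity)
    rw [abs_pow]
    apply mul_le_mul (by rwa [Nat.abs_cast]) hyR (by positivity) (by positivity)
  calc |a k| * (|(k:ℝ)| * |y ^ (k-1)|) ≤ (1/(k.factorial:ℝ)) * (2^k * R^k) := this
    _ = (2*R)^k / k.factorial := by rw [mul_pow]; ring

lemma summable_deriv_term {a : ℕ → ℝ} (h : Bd a) (u : ℝ) :
    Summable (fun k : ℕ => a k * ((k:ℝ) * u ^ (k - 1))) := by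
  apply Summable.of_norm
  apply Summable.of_nonneg_of_le (fun k => norm_nonneg _) (fun k => ?_)
    ((Real.summable_pow_div_factorial (2*(|u|+1))))
  rw [Real.norm_eq_abs]
  have h1 : (1:ℝ) ≤ |u| + 1 := by linarith [abs_nonneg u]
  have := term_deriv_bound h h1 (le_of_lt (by linarith [abs_nonneg u] : |u| < |u| + 1)) k
  simpa using this

lemma hasDerivAt_Sa {a : ℕ → ℝ} (h : Bd a) (u : ℝ) :
    HasDerivAt (Sa a) (Sa (Dc a) u) u := by
  set R := |u| + 1 with hRdef
  have hR1 : (1:ℝ) ≤ R := by rw [hRdef]; linarith [abs_nonneg u]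
  have hR0 : (0:ℝ) < R := lt_of_lt_of_le one_pos hR1
  have huR : u ∈ Set.Ioo (-R) R := by
    constructor <;> [linarith [neg_abs_le u]; linarith [le_abs_self u]]
  have key : HasDerivAt (fun z => ∑' k : ℕ, a k * z ^ k)
      (∑' k : ℕ, a k * ((k:ℝ) * u ^ (k - 1))) u := by
    apply hasDerivAt_tsum_of_isPreconnected
      (u := fun k : ℕ => (2*R) ^ k / k.factorial)
      (Real.summable_pow_div_factorial (2*R)) isOpen_Ioo (convex_Ioo _ _).isPreconnected
      (fun k y _ => (hasDerivAt_pow k y).const_mul (a k))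
      (fun k y hy => ?_) huR (summable_term h u) huR
    rw [Real.norm_eq_abs]
    exact term_deriv_bound h hR1 (abs_le.2 ⟨hy.1.le, hy.2.le⟩) k
  have heq : (∑' k : ℕ, a k * ((k:ℝ) * u ^ (k - 1))) = Sa (Dc a) u := by
    rw [Summable.tsum_eq_zero_add (summable_deriv_term h u)]
    simp only [Nat.cast_zero, zero_mul, mul_zero, zero_add]
    unfold Sa Dc
    apply tsum_congr
    intro k
    push_cast
    ring_nf
  rw [heq] at key
  exact key


/-- coefficients of `g(u) = ∑ u^k/(4^k (k!)^2)`, so `besselI0 z = g (z^2)`. -/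
noncomputable def aa0 : ℕ → ℝ := fun k => 1 / (4 ^ k * ((k.factorial : ℝ)) ^ 2)

lemma bd_aa0 : Bd aa0 := by
  intro k
  unfold aa0
  have h1 : (0:ℝ) < k.factorial := by positivity
  have h4 : (1:ℝ) ≤ 4 ^ k := one_le_pow₀ (by norm_num : (1:ℝ) ≤ 4)
  have hfk : (1:ℝ) ≤ (k.factorial : ℝ) := by exact_mod_cast Nat.one_le_iff_ne_zero.2 k.factorial_ne_zero
  rw [abs_of_pos (by positivity)]
  rw [div_le_div_iff₀ (by positivity) (by positivity)]
  nlinarith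

lemma besselI0_eq_Sa (z : ℝ) : (∑' k : ℕ, (z/2)^(2*k) / ((k.factorial : ℝ))^2) = Sa aa0 (z^2) := by
  unfold Sa aa0
  apply tsum_congr
  intro k
  have h1 : (z/2)^(2*k) = (z^2)^k / 4^k := by
    rw [pow_mul]
    rw [div_pow, div_pow]
    norm_num
  rw [h1]
  rw [div_div]
  rw [div_mul_eq_mul_div, one_mul]

lemma ode1 (u : ℝ) : 4 * u * Sa (Dc (Dc aa0)) u + 4 * Sa (Dc aa0) u = Sa aa0 u := by
  have bd1 := bd_aa0.D
  have bd2 := bd1.D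
  have h1 : 4 * u * Sa (Dc (Dc aa0)) u = ∑' k : ℕ, 4 * Dc (Dc aa0) k * u ^ (k+1) := by
    unfold Sa
    rw [← tsum_mul_left]
    apply tsum_congr; intro k; ring
  have h2 : 4 * Sa (Dc aa0) u = 4 * Dc aa0 0 + ∑' k : ℕ, 4 * Dc aa0 (k+1) * u ^ (k+1) := by
    unfold Sa
    rw [← tsum_mul_left, Summable.tsum_eq_zero_add ((summable_term bd1 u).mul_left 4)]
    simp only [pow_zero, mul_one]
    congr 1
    apply tsum_congr; intro k; ring
  have hs1 : Summable (fun k : ℕ => 4 * Dc (Dc aa0) k * u ^ (k+1)) := by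
    have := ((summable_term bd2 u).mul_left (4*u))
    apply this.congr; intro k; ring
  have hs2 : Summable (fun k : ℕ => 4 * Dc aa0 (k+1) * u ^ (k+1)) := by
    have := (((summable_term bd1 u).mul_left 4).comp_injective (add_left_injective 1))
    apply this.congr; intro k; simp [Function.comp]; ring
  rw [h1, h2]
  have h3 : Sa aa0 u = aa0 0 + ∑' k : ℕ, aa0 (k+1) * u ^ (k+1) := by
    unfold Sa
    rw [Summable.tsum_eq_zero_add (summable_term bd_aa0 u)]
    simp only [pow_zero, mul_one]
  rw [h3]
  have hcoef : ∀ k : ℕ, 4 * Dc (Dc aa0) k + 4 * Dc aa0 (k+1) = aa0 (k+1) := by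
    intro k
    unfold Dc aa0
    have f1 : ((k+1).factorial : ℝ) = (k+1) * k.factorial := by push_cast [Nat.factorial_succ]; ring
    have f2 : ((k+2).factorial : ℝ) = (k+2) * (k+1) * k.factorial := by
      push_cast [Nat.factorial_succ]; ring
    have hk : (0:ℝ) < k.factorial := by positivity
    push_cast
    rw [f1, f2]
    have h4 : (4:ℝ)^(k+1) = 4 * 4^k := by ring
    have h5 : (4:ℝ)^(k+2) = 16 * 4^k := by ring
    rw [h4, h5]
    field_simp
    ring
  calc (∑' k : ℕ, 4 * Dc (Dc aa0) k * u ^ (k+1)) + (4 * Dc aa0 0 + ∑' k : ℕ, 4 * Dc aa0 (k+1) * u ^ (k+1)) = 4 * Dc aa0 0 + ∑' k : ℕ, (4 * Dc (Dc aa0) k * u^(k+1) + 4 * Dc aa0 (k+1) * u^(k+1)) := by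
        rw [Summable.tsum_add hs1 hs2]; ring
    _ = aa0 0 + ∑' k : ℕ, aa0 (k+1) * u ^ (k+1) := by
        congr 1
        · unfold Dc aa0; norm_num
        · apply tsum_congr; intro k
          rw [← hcoef k]; ring

lemma ode2 (u : ℝ) : 4 * u * Sa (Dc (Dc (Dc aa0))) u + 8 * Sa (Dc (Dc aa0)) u = Sa (Dc aa0) u := by
  have bd1 := bd_aa0.D
  have bd2 := bd1.D
  have hL : HasDerivAt (fun v => 4 * v * Sa (Dc (Dc aa0)) v + 4 * Sa (Dc aa0) v)
      (4 * Sa (Dc (Dc aa0)) u + 4 * u * Sa (Dc (Dc (Dc aa0))) u + 4 * Sa (Dc (Dc aa0)) u) u := by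
    have h1 : HasDerivAt (fun v : ℝ => 4 * v) 4 u := by simpa using (hasDerivAt_id u).const_mul 4
    have h2 := hasDerivAt_Sa bd2 u
    have h3 := hasDerivAt_Sa bd1 u
    have := (h1.mul h2).add (h3.const_mul 4)
    refine this.congr_deriv ?_; ring
  have hfun : (fun v => 4 * v * Sa (Dc (Dc aa0)) v + 4 * Sa (Dc aa0) v) = Sa aa0 := funext ode1
  rw [hfun] at hL
  have huniq := hL.unique (hasDerivAt_Sa bd_aa0 u)
  linarith


noncomputable def UU (lam c x t : ℝ) : ℝ := lam^2*t^2 - (lam/c)^2*x^2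

noncomputable def PP (lam c x t : ℝ) : ℝ :=
  Real.exp (-(lam*t))/2 * (lam * Sa aa0 (UU lam c x t)
    + 2*lam^2*(t * Sa (Dc aa0) (UU lam c x t)))

noncomputable def PPt (lam c x t : ℝ) : ℝ :=
  Real.exp (-(lam*t))/2 * (-lam^2 * Sa aa0 (UU lam c x t)
    + 2*lam^2 * Sa (Dc aa0) (UU lam c x t)
    + 4*lam^4*(t^2 * Sa (Dc (Dc aa0)) (UU lam c x t)))

noncomputable def PPtt (lam c x t : ℝ) : ℝ :=
  Real.exp (-(lam*t))/2 * (lam^3 * Sa aa0 (UU lam c x t)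
    - 2*lam^3 * Sa (Dc aa0) (UU lam c x t)
    - 2*lam^4*(t * Sa (Dc aa0) (UU lam c x t))
    + 12*lam^4*(t * Sa (Dc (Dc aa0)) (UU lam c x t))
    - 4*lam^5*(t^2 * Sa (Dc (Dc aa0)) (UU lam c x t))
    + 8*lam^6*(t^3 * Sa (Dc (Dc (Dc aa0))) (UU lam c x t)))

noncomputable def PPx (lam c x t : ℝ) : ℝ :=
  Real.exp (-(lam*t))/2 * (-2*(lam/c)^2*lam*(x * Sa (Dc aa0) (UU lam c x t))
    - 4*(lam/c)^2*lam^2*(t*(x * Sa (Dc (Dc aa0)) (UU lam c x t))))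

noncomputable def PPxx (lam c x t : ℝ) : ℝ :=
  Real.exp (-(lam*t))/2 * (-2*(lam/c)^2*lam * Sa (Dc aa0) (UU lam c x t)
    + 4*(lam/c)^4*lam*(x^2 * Sa (Dc (Dc aa0)) (UU lam c x t))
    - 4*(lam/c)^2*lam^2*(t * Sa (Dc (Dc aa0)) (UU lam c x t))
    + 8*(lam/c)^4*lam^2*(t*(x^2 * Sa (Dc (Dc (Dc aa0))) (UU lam c x t))))

lemma hUt (lam c x t : ℝ) : HasDerivAt (fun s => UU lam c x s) (2*lam^2*t) t := by
  unfold UU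
  have := ((hasDerivAt_pow 2 t).const_mul (lam^2)).sub_const ((lam/c)^2*x^2)
  refine this.congr_deriv ?_
  push_cast; ring

lemma hUx (lam c x t : ℝ) : HasDerivAt (fun y => UU lam c y t) (-(2*(lam/c)^2*x)) x := by
  unfold UU
  have := ((hasDerivAt_pow 2 x).const_mul ((lam/c)^2)).const_sub (lam^2*t^2)
  refine this.congr_deriv ?_
  push_cast; ring

lemma hcomp_t {a : ℕ → ℝ} (ha : Bd a) (lam c x t : ℝ) :
    HasDerivAt (fun s => Sa a (UU lam c x s)) (Sa (Dc a) (UU lam c x t) * (2*lam^2*t)) t := by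
  have h := (hasDerivAt_Sa ha (UU lam c x t)).comp t (hUt lam c x t)
  simpa [Function.comp_def] using h

lemma hcomp_x {a : ℕ → ℝ} (ha : Bd a) (lam c x t : ℝ) :
    HasDerivAt (fun y => Sa a (UU lam c y t)) (Sa (Dc a) (UU lam c x t) * (-(2*(lam/c)^2*x))) x := by
  have h := (hasDerivAt_Sa ha (UU lam c x t)).comp x (hUx lam c x t)
  simpa [Function.comp_def] using h

lemma hEder (lam t : ℝ) : HasDerivAt (fun s => Real.exp (-(lam*s))/2)
    (-lam * (Real.exp (-(lam*t))/2)) t := by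
  have h1 : HasDerivAt (fun s : ℝ => -(lam*s)) (-lam) t := by
    simpa [Pi.neg_def] using ((hasDerivAt_id t).const_mul lam).neg
  have := h1.exp.div_const 2
  refine this.congr_deriv ?_
  ring

lemma hPP_t (lam c x t : ℝ) : HasDerivAt (fun s => PP lam c x s) (PPt lam c x t) t := by
  have h0 := hcomp_t bd_aa0 lam c x t
  have h1 := hcomp_t bd_aa0.D lam c x t
  have H := (hEder lam t).mul
    ((h0.const_mul lam).add (((hasDerivAt_id' t).mul h1).const_mul (2*lam^2)))
  unfold PP PPt
  refine H.congr_deriv ?_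
  simp only [Pi.add_apply, Pi.mul_apply]
  ring

lemma hPPt_t (lam c x t : ℝ) : HasDerivAt (fun s => PPt lam c x s) (PPtt lam c x t) t := by
  have h0 := hcomp_t bd_aa0 lam c x t
  have h1 := hcomp_t bd_aa0.D lam c x t
  have h2 := hcomp_t bd_aa0.D.D lam c x t
  have H := (hEder lam t).mul
    (((h0.const_mul (-lam^2)).add (h1.const_mul (2*lam^2))).add
      (((hasDerivAt_pow 2 t).mul h2).const_mul (4*lam^4)))
  unfold PPt PPtt
  refine H.congr_deriv ?_
  simp only [Pi.add_apply, Pi.mul_apply]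
  push_cast; ring

lemma hPP_x (lam c x t : ℝ) : HasDerivAt (fun y => PP lam c y t) (PPx lam c x t) x := by
  have h0 := hcomp_x bd_aa0 lam c x t
  have h1 := hcomp_x bd_aa0.D lam c x t
  have H := (((h0.const_mul lam).add ((h1.const_mul t).const_mul (2*lam^2))).const_mul
    (Real.exp (-(lam*t))/2))
  unfold PP PPx
  refine H.congr_deriv ?_
  ring

lemma hPPx_x (lam c x t : ℝ) : HasDerivAt (fun y => PPx lam c y t) (PPxx lam c x t) x := by
  have h1 := hcomp_x bd_aa0.D lam c x t
  have h2 := hcomp_x bd_aa0.D.D lam c x t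
  have H := (((((hasDerivAt_id' x).mul h1).const_mul (-2*(lam/c)^2*lam)).sub
      ((((hasDerivAt_id' x).mul h2).const_mul t).const_mul (4*(lam/c)^2*lam^2))).const_mul
    (Real.exp (-(lam*t))/2))
  unfold PPx PPxx
  refine H.congr_deriv ?_
  ring

lemma telegraph_PP (lam c : ℝ) (hc : c ≠ 0) (x t : ℝ) :
    PPtt lam c x t + 2 * lam * PPt lam c x t = c^2 * PPxx lam c x t := by
  have hκ : (lam/c)^2 * c^2 = lam^2 := by field_simp
  have h1 := ode1 (UU lam c x t)
  have h2 := ode2 (UU lam c x t)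
  unfold PPtt PPt PPxx UU at *
  set E := Real.exp (-(lam*t))/2
  set G0 := Sa aa0 (lam^2*t^2 - (lam/c)^2*x^2)
  set G1 := Sa (Dc aa0) (lam^2*t^2 - (lam/c)^2*x^2)
  set G2 := Sa (Dc (Dc aa0)) (lam^2*t^2 - (lam/c)^2*x^2)
  set G3 := Sa (Dc (Dc (Dc aa0))) (lam^2*t^2 - (lam/c)^2*x^2)
  have hcc : c^2 * (c⁻¹)^2 = 1 := by field_simp
  linear_combination (E*lam^3) * h1 + (E*2*lam^4*t) * h2 +
    (E*(4*(lam/c)^2*lam*x^2*G2 + 8*(lam/c)^2*lam^2*t*x^2*G3 - 2*lam*G1 - 4*lam^2*t*G2)) * hκ +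
    (Real.exp (-(lam*t)) * (2*lam^3*G1 + 4*lam^4*t*G2 - 4*lam^5*G2*x^2*(c⁻¹)^2
      - 8*lam^6*t*G3*x^2*(c⁻¹)^2)) * hcc

theorem telegraph_ac_component_satisfies_telegraph_equation
    (lam c : ℝ) (hlam : 0 < lam) (hc : 0 < c)
    (p : ℝ → ℝ → ℝ)
    (hp : ∀ x, ∀ t : ℝ, p x t = (Real.exp (-(lam*t)) / 2) *
      (lam * besselI0 ((lam/c) * Real.sqrt (c^2*t^2 - x^2))
        + deriv (fun τ => besselI0 ((lam/c) * Real.sqrt (c^2*τ^2 - x^2))) t)) :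
    ∀ x t : ℝ, 0 < t → |x| < c*t →
      iteratedDeriv 2 (fun s => p x s) t + 2 * lam * deriv (fun s => p x s) t
        = c^2 * iteratedDeriv 2 (fun y => p y t) x := by
  have hc0 : c ≠ 0 := ne_of_gt hc
  -- p agrees with PP on the open region
  have key : ∀ X T : ℝ, 0 < c^2*T^2 - X^2 → p X T = PP lam c X T := by
    intro X T hr
    have hV : IsOpen {τ : ℝ | 0 < c^2*τ^2 - X^2} :=
      isOpen_lt continuous_const (by fun_prop)
    have heqV : ∀ τ ∈ {τ : ℝ | 0 < c^2*τ^2 - X^2},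
        besselI0 ((lam/c)*Real.sqrt (c^2*τ^2 - X^2)) = Sa aa0 (UU lam c X τ) := by
      intro τ hτ
      unfold besselI0
      rw [besselI0_eq_Sa]
      congr 1
      rw [mul_pow, Real.sq_sqrt (le_of_lt hτ)]
      unfold UU
      field_simp
    have hder : deriv (fun τ => besselI0 ((lam/c)*Real.sqrt (c^2*τ^2 - X^2))) T
        = Sa (Dc aa0) (UU lam c X T) * (2*lam^2*T) := by
      have hev : (fun τ => besselI0 ((lam/c)*Real.sqrt (c^2*τ^2 - X^2)))
          =ᶠ[nhds T] (fun τ => Sa aa0 (UU lam c X τ)) :=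
        Filter.eventually_of_mem (hV.mem_nhds hr) heqV
      rw [hev.deriv_eq]
      exact (hcomp_t bd_aa0 lam c X T).deriv
    rw [hp, heqV T hr, hder]
    unfold PP
    ring
  intro x t ht hxt
  obtain ⟨hx1, hx2⟩ := abs_lt.mp hxt
  have hreg : 0 < c^2*t^2 - x^2 := by nlinarith
  have hVt : IsOpen {τ : ℝ | 0 < c^2*τ^2 - x^2} :=
    isOpen_lt continuous_const (by fun_prop)
  have hVx : IsOpen {y : ℝ | 0 < c^2*t^2 - y^2} :=
    isOpen_lt continuous_const (by fun_prop)
  have d1 : deriv (fun s => p x s) t = PPt lam c x t := by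
    have ev1 : (fun s => p x s) =ᶠ[nhds t] (fun s => PP lam c x s) :=
      Filter.eventually_of_mem (hVt.mem_nhds hreg) (fun τ hτ => key x τ hτ)
    rw [ev1.deriv_eq]
    exact (hPP_t lam c x t).deriv
  have d2 : iteratedDeriv 2 (fun s => p x s) t = PPtt lam c x t := by
    have ev2 : deriv (fun s => p x s) =ᶠ[nhds t] (fun s => PPt lam c x s) := by
      filter_upwards [hVt.mem_nhds hreg] with τ hτ
      have evτ : (fun s => p x s) =ᶠ[nhds τ] (fun s => PP lam c x s) :=
        Filter.eventually_of_mem (hVt.mem_nhds hτ) (fun σ hσ => key x σ hσ)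
      rw [evτ.deriv_eq]
      exact (hPP_t lam c x τ).deriv
    rw [show (2:ℕ) = 1+1 from rfl, iteratedDeriv_succ, iteratedDeriv_one, ev2.deriv_eq]
    exact (hPPt_t lam c x t).deriv
  have d3 : iteratedDeriv 2 (fun y => p y t) x = PPxx lam c x t := by
    have ev3 : deriv (fun y => p y t) =ᶠ[nhds x] (fun y => PPx lam c y t) := by
      filter_upwards [hVx.mem_nhds hreg] with y hy
      have evy : (fun z => p z t) =ᶠ[nhds y] (fun z => PP lam c z t) :=
        Filter.eventually_of_mem (hVx.mem_nhds hy) (fun z hz => key z t hz)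
      rw [evy.deriv_eq]
      exact (hPP_x lam c y t).deriv
    rw [show (2:ℕ) = 1+1 from rfl, iteratedDeriv_succ, iteratedDeriv_one, ev3.deriv_eq]
    exact (hPPx_x lam c x t).deriv
  rw [d1, d2, d3]
  exact telegraph_PP lam c hc0 x t
end

section
/- Let λ₁, λ₂ > 0, set B = (λ₁−λ₂)/(λ₁+λ₂), let c : ℝ → (0,∞) be continuous, and let Φ_c(x) = ∫₀^x dw/c(w). Suppose q : ℝ × ℝ → ℝ is twice continuously differentiable and satisfies the classical telegraph equation ∂²q/∂s² + (λ₁+λ₂) ∂q/∂s = ∂²q/∂y². Then the function p(x,t) = q( Φ_c(x) + Bt , B Φ_c(x) + t ), obtained through the Lorentz-type change of variables x′ = Φ_c(x) + Bt, t′ = B Φ_c(x) + t, satisfies the telegraph-type equation with space-varying velocity and drift: ∂²p/∂t² + (λ₁+λ₂) ∂p/∂t = c(x) ∂/∂x( c(x) ∂p/∂x ) + c(x)(λ₁−λ₂) ∂p/∂x. -/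
open Real MeasureTheory

theorem telegraph_with_drift_via_Lorentz_transformation
    (lam₁ lam₂ : ℝ) (hlam₁ : 0 < lam₁) (hlam₂ : 0 < lam₂)
    (B : ℝ) (hB : B = (lam₁ - lam₂) / (lam₁ + lam₂))
    (c : ℝ → ℝ) (hc : Continuous c) (hcpos : ∀ x, 0 < c x)
    (q : ℝ → ℝ → ℝ)
    (hq : ContDiff ℝ 2 (fun z : ℝ × ℝ => q z.1 z.2))
    (heq : ∀ y s : ℝ,
      iteratedDeriv 2 (fun σ => q y σ) s + (lam₁ + lam₂) * deriv (fun σ => q y σ) s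
        = iteratedDeriv 2 (fun z => q z s) y)
    (p : ℝ → ℝ → ℝ)
    (hp : ∀ x t : ℝ, p x t = q (Phi c x + B * t) (B * Phi c x + t)) :
    ∀ x t : ℝ,
      iteratedDeriv 2 (fun s => p x s) t + (lam₁ + lam₂) * deriv (fun s => p x s) t
        = c x * deriv (fun y => c y * deriv (fun z => p z t) y) x
          + c x * (lam₁ - lam₂) * deriv (fun y => p y t) x := by
  intro x t
  set F : ℝ × ℝ → ℝ := fun z => q z.1 z.2 with hFdef
  have hcont : Continuous fun w => (c w)⁻¹ := hc.inv₀ fun w => (hcpos w).ne'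
  have hΦ : ∀ y, HasDerivAt (Phi c) (c y)⁻¹ y := fun y =>
    (hcont.integral_hasStrictDerivAt 0 y).hasDerivAt
  have hF2 : ContDiff ℝ 2 F := hq
  have hF1 : Differentiable ℝ F := hF2.differentiable (by norm_num)
  set H : ℝ × ℝ → (ℝ × ℝ) →L[ℝ] ℝ := fderiv ℝ F with hHdef
  have hH1 : ContDiff ℝ 1 H := hF2.fderiv_right (by norm_num)
  have hHdiff : Differentiable ℝ H := hH1.differentiable (by norm_num)
  set H2 : ℝ × ℝ → (ℝ × ℝ) →L[ℝ] (ℝ × ℝ) →L[ℝ] ℝ := fderiv ℝ H with hH2def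
  -- generic chain-rule lemmas along curves
  have key1 : ∀ (γ : ℝ → ℝ × ℝ) (v : ℝ × ℝ) (s : ℝ), HasDerivAt γ v s →
      HasDerivAt (fun s => F (γ s)) (H (γ s) v) s := fun γ v s hγ =>
    (hF1 (γ s)).hasFDerivAt.comp_hasDerivAt s hγ
  have key2 : ∀ (γ : ℝ → ℝ × ℝ) (v w : ℝ × ℝ) (s : ℝ), HasDerivAt γ v s →
      HasDerivAt (fun s => H (γ s) w) ((H2 (γ s) v) w) s := by
    intro γ v w s hγ
    have h1 : HasDerivAt (fun s => H (γ s)) (H2 (γ s) v) s :=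
      (hHdiff (γ s)).hasFDerivAt.comp_hasDerivAt s hγ
    simpa using h1.clm_apply (hasDerivAt_const s w)
  -- time curve
  have hL : ∀ s : ℝ, HasDerivAt (fun s : ℝ => (Phi c x + B * s, B * Phi c x + s))
      ((B, 1) : ℝ × ℝ) s := by
    intro s
    have h1 : HasDerivAt (fun s : ℝ => Phi c x + B * s) B s := by
      simpa using (HasDerivAt.const_mul B (hasDerivAt_id s)).const_add (Phi c x)
    have h2 : HasDerivAt (fun s : ℝ => B * Phi c x + s) 1 s := by
      simpa using (hasDerivAt_id s).const_add (B * Phi c x)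
    exact h1.prodMk h2
  have hpt : (fun s => p x s) = fun s => F (Phi c x + B * s, B * Phi c x + s) := by
    funext s; rw [hp]
  have hdt : ∀ s, HasDerivAt (fun s => p x s)
      (H (Phi c x + B * s, B * Phi c x + s) (B, 1)) s := by
    intro s; rw [hpt]; exact key1 _ _ s (hL s)
  have hderiv_t : deriv (fun s => p x s)
      = fun s => H (Phi c x + B * s, B * Phi c x + s) (B, 1) := by
    funext s; exact (hdt s).deriv
  have hiter_t : iteratedDeriv 2 (fun s => p x s) t
      = (H2 (Phi c x + B * t, B * Phi c x + t) (B, 1)) (B, 1) := by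
    rw [show (2:ℕ) = 1 + 1 from rfl, iteratedDeriv_succ, iteratedDeriv_one, hderiv_t]
    exact (key2 _ (B, 1) (B, 1) t (hL t)).deriv
  -- space curve
  have hG : ∀ y : ℝ, HasDerivAt (fun y : ℝ => (Phi c y + B * t, B * Phi c y + t))
      (((c y)⁻¹, B * (c y)⁻¹) : ℝ × ℝ) y := fun y =>
    ((hΦ y).add_const (B * t)).prodMk (((hΦ y).const_mul B).add_const t)
  have hsm : ∀ y : ℝ, (((c y)⁻¹, B * (c y)⁻¹) : ℝ × ℝ) = (c y)⁻¹ • ((1:ℝ), B) := by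
    intro y; simp [Prod.ext_iff, mul_comm]
  have hpx : (fun z => p z t) = fun y => F (Phi c y + B * t, B * Phi c y + t) := by
    funext y; rw [hp]
  have hdx : ∀ y, HasDerivAt (fun z => p z t)
      (H (Phi c y + B * t, B * Phi c y + t) ((c y)⁻¹, B * (c y)⁻¹)) y := by
    intro y; rw [hpx]; exact key1 _ _ y (hG y)
  have hcinner : (fun y => c y * deriv (fun z => p z t) y)
      = fun y => H (Phi c y + B * t, B * Phi c y + t) (1, B) := by
    funext y
    rw [(hdx y).deriv, hsm y, _root_.map_smul, smul_eq_mul, ← mul_assoc,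
      mul_inv_cancel₀ (hcpos y).ne', one_mul]
  have houter : deriv (fun y => c y * deriv (fun z => p z t) y) x
      = (c x)⁻¹ * ((H2 (Phi c x + B * t, B * Phi c x + t) (1, B)) (1, B)) := by
    rw [hcinner]
    have h := key2 _ ((c x)⁻¹, B * (c x)⁻¹) (1, B) x (hG x)
    rw [h.deriv, hsm x, _root_.map_smul]
    simp
  have hdx_val : deriv (fun y => p y t) x
      = (c x)⁻¹ * (H (Phi c x + B * t, B * Phi c x + t) (1, B)) := by
    rw [(hdx x).deriv, hsm x, _root_.map_smul, smul_eq_mul]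
  -- rewrite the telegraph equation hypothesis in terms of H and H2
  have hcs : ∀ y s : ℝ, HasDerivAt (fun σ : ℝ => ((y : ℝ), σ)) ((0, 1) : ℝ × ℝ) s :=
    fun y s => (hasDerivAt_const s y).prodMk (hasDerivAt_id s)
  have hcy : ∀ y s : ℝ, HasDerivAt (fun z : ℝ => (z, (s : ℝ))) ((1, 0) : ℝ × ℝ) y :=
    fun y s => (hasDerivAt_id y).prodMk (hasDerivAt_const y s)
  have hq_s : ∀ y s : ℝ, deriv (fun σ => q y σ) s = H (y, s) (0, 1) := fun y s =>
    (key1 _ _ s (hcs y s)).deriv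
  have hq_ss : ∀ y s : ℝ, iteratedDeriv 2 (fun σ => q y σ) s = (H2 (y, s) (0, 1)) (0, 1) := by
    intro y s
    rw [show (2:ℕ) = 1 + 1 from rfl, iteratedDeriv_succ, iteratedDeriv_one]
    have hder : deriv (fun σ => q y σ) = fun σ => H (y, σ) (0, 1) :=
      funext fun σ => hq_s y σ
    rw [hder]
    exact (key2 _ (0, 1) (0, 1) s (hcs y s)).deriv
  have hq_yy : ∀ y s : ℝ, iteratedDeriv 2 (fun z => q z s) y = (H2 (y, s) (1, 0)) (1, 0) := by
    intro y s
    rw [show (2:ℕ) = 1 + 1 from rfl, iteratedDeriv_succ, iteratedDeriv_one]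
    have hder : deriv (fun z => q z s) = fun z => H (z, s) (1, 0) :=
      funext fun z => (key1 _ _ z (hcy z s)).deriv
    rw [hder]
    exact (key2 _ (1, 0) (1, 0) y (hcy y s)).deriv
  have htele : ∀ z : ℝ × ℝ, (H2 z (0, 1)) (0, 1) + (lam₁ + lam₂) * H z (0, 1)
      = (H2 z (1, 0)) (1, 0) := by
    intro z
    have := heq z.1 z.2
    rwa [hq_ss, hq_s, hq_yy] at this
  -- bilinear expansions
  have hgen1 : ∀ (z : ℝ × ℝ) (v : ℝ × ℝ), H z v = v.1 * H z (1, 0) + v.2 * H z (0, 1) := by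
    intro z v
    obtain ⟨v1, v2⟩ := v
    have hv : ((v1, v2) : ℝ × ℝ) = v1 • (1, 0) + v2 • (0, 1) := by simp [Prod.ext_iff]
    rw [hv, map_add, _root_.map_smul, _root_.map_smul]
    simp
  have hgen2 : ∀ (z : ℝ × ℝ) (v w : ℝ × ℝ), (H2 z v) w
      = v.1 * w.1 * (H2 z (1, 0)) (1, 0) + v.1 * w.2 * (H2 z (1, 0)) (0, 1)
        + v.2 * w.1 * (H2 z (0, 1)) (1, 0) + v.2 * w.2 * (H2 z (0, 1)) (0, 1) := by
    intro z v w
    obtain ⟨v1, v2⟩ := v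
    obtain ⟨w1, w2⟩ := w
    have hv : ((v1, v2) : ℝ × ℝ) = v1 • (1, 0) + v2 • (0, 1) := by simp [Prod.ext_iff]
    have hw : ((w1, w2) : ℝ × ℝ) = w1 • (1, 0) + w2 • (0, 1) := by simp [Prod.ext_iff]
    conv_lhs => rw [hv, hw]
    simp only [map_add, _root_.map_smul, ContinuousLinearMap.add_apply,
      ContinuousLinearMap.smul_apply, smul_eq_mul]
    ring
  -- assemble
  rw [hiter_t, (hdt t).deriv, houter, hdx_val]
  set z0 : ℝ × ℝ := (Phi c x + B * t, B * Phi c x + t) with hz0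
  set a := (H2 z0 (1, 0)) (1, 0) with ha
  set b := (H2 z0 (1, 0)) (0, 1) with hb
  set b' := (H2 z0 (0, 1)) (1, 0) with hb'
  set d := (H2 z0 (0, 1)) (0, 1) with hd
  set e1 := H z0 (1, 0) with he1
  set e2 := H z0 (0, 1) with he2
  have hT := htele z0
  rw [← ha, ← hd, ← he2] at hT
  have hcc : c x * (c x)⁻¹ = 1 := mul_inv_cancel₀ (hcpos x).ne'
  have hsum : lam₁ + lam₂ ≠ 0 := by positivity
  have hBl : B * (lam₁ + lam₂) = lam₁ - lam₂ := by
    rw [hB]; field_simp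
  rw [hgen2 z0 (B, 1) (B, 1), hgen2 z0 (1, B) (1, B), hgen1 z0 (B, 1), hgen1 z0 (1, B)]
  simp only [← ha, ← hb, ← hb', ← hd, ← he1, ← he2]
  norm_num
  linear_combination (-(a + B * b + B * b' + B ^ 2 * d + (lam₁ - lam₂) * (e1 + B * e2))) * hcc
    + (1 - B ^ 2) * hT + (e1 + B * e2) * hBl
end

section
/- Let λ : (0,∞) → ℝ be continuously differentiable, let c > 0, and let Λ(t) = ∫₀^t λ(s) ds (assumed finite for all t > 0). If v : ℝ × (0,∞) → ℝ is twice continuously differentiable and satisfies the Klein–Gordon-type equation ∂²v/∂t² − (λ′(t) + λ(t)²) v = c² ∂²v/∂x², then p(x,t) = e^{−Λ(t)} v(x,t) satisfies the non-homogeneous telegraph equation ∂²p/∂t² + 2λ(t) ∂p/∂t = c² ∂²p/∂x² for all x ∈ ℝ and t > 0. -/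
open Real MeasureTheory

theorem nonhomogeneous_telegraph_from_Klein_Gordon
    (lam : ℝ → ℝ) (hlam : ContDiffOn ℝ 1 lam (Set.Ioi (0:ℝ)))
    (c : ℝ) (hc : 0 < c)
    (hint : ∀ t : ℝ, 0 < t → IntervalIntegrable lam volume 0 t)
    (Λ : ℝ → ℝ) (hΛ : ∀ t : ℝ, Λ t = ∫ s in (0:ℝ)..t, lam s)
    (v : ℝ → ℝ → ℝ)
    (hv : ContDiffOn ℝ 2 (fun z : ℝ × ℝ => v z.1 z.2) (Set.univ ×ˢ Set.Ioi (0:ℝ)))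
    (heq : ∀ x : ℝ, ∀ t : ℝ, 0 < t →
      iteratedDeriv 2 (fun s => v x s) t - (deriv lam t + (lam t)^2) * v x t
        = c^2 * iteratedDeriv 2 (fun y => v y t) x)
    (p : ℝ → ℝ → ℝ)
    (hp : ∀ x t : ℝ, p x t = Real.exp (-(Λ t)) * v x t) :
    ∀ x : ℝ, ∀ t : ℝ, 0 < t →
      iteratedDeriv 2 (fun s => p x s) t + 2 * lam t * deriv (fun s => p x s) t
        = c^2 * iteratedDeriv 2 (fun y => p y t) x := by
  intro x t ht
  have hopen : IsOpen (Set.univ ×ˢ Set.Ioi (0:ℝ)) := (isOpen_univ (X := ℝ)).prod isOpen_Ioi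
  set g : ℝ → ℝ := fun s => Real.exp (-(Λ s)) with hgdef
  set F : ℝ → ℝ := fun s => v x s with hFdef
  set w : ℝ → ℝ := deriv F with hwdef
  -- derivative of Λ
  have hΛfun : Λ = fun u => ∫ s in (0:ℝ)..u, lam s := funext hΛ
  have hΛd : ∀ s ∈ Set.Ioi (0:ℝ), HasDerivAt Λ (lam s) s := by
    intro s hs
    have hcont : ContinuousAt lam s := hlam.continuousOn.continuousAt (isOpen_Ioi.mem_nhds hs)
    have hmeas : StronglyMeasurableAtFilter lam (nhds s) volume :=
      hlam.continuousOn.stronglyMeasurableAtFilter isOpen_Ioi s hs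
    have := intervalIntegral.integral_hasDerivAt_right (hint s hs) hmeas hcont
    rw [hΛfun]
    exact this
  -- derivative of g
  have hgd : ∀ s ∈ Set.Ioi (0:ℝ), HasDerivAt g (-(lam s) * g s) s := by
    intro s hs
    have := ((hΛd s hs).neg).exp
    simpa [hgdef, mul_comm] using this
  -- F is C² on Ioi 0
  have hFc : ∀ s ∈ Set.Ioi (0:ℝ), ContDiffAt ℝ 2 F s := by
    intro s hs
    have h1 : ContDiffAt ℝ 2 (fun z : ℝ × ℝ => v z.1 z.2) (x, s) :=
      hv.contDiffAt (hopen.mem_nhds ⟨Set.mem_univ _, hs⟩)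
    have h2 : ContDiffAt ℝ 2 (fun s : ℝ => ((x, s) : ℝ × ℝ)) s :=
      (contDiff_const.prodMk contDiff_id).contDiffAt
    exact h1.comp s h2
  have hFcOn : ContDiffOn ℝ 2 F (Set.Ioi (0:ℝ)) := fun s hs => (hFc s hs).contDiffWithinAt
  have hwc : ContDiffOn ℝ 1 w (Set.Ioi (0:ℝ)) :=
    hFcOn.deriv_of_isOpen isOpen_Ioi (by norm_num)
  have hFd : ∀ s ∈ Set.Ioi (0:ℝ), HasDerivAt F (w s) s := fun s hs =>
    ((hFc s hs).differentiableAt two_ne_zero).hasDerivAt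
  have hwd : HasDerivAt w (deriv w t) t :=
    (((hwc.contDiffAt (isOpen_Ioi.mem_nhds ht)).differentiableAt one_ne_zero)).hasDerivAt
  have hlamd : HasDerivAt lam (deriv lam t) t :=
    ((hlam.contDiffAt (isOpen_Ioi.mem_nhds ht)).differentiableAt one_ne_zero).hasDerivAt
  -- p x ∙ as a product
  have hP : (fun s => p x s) = fun s => g s * F s := funext fun s => hp x s
  have hPd : ∀ s ∈ Set.Ioi (0:ℝ), HasDerivAt (fun s => p x s)
      (-(lam s) * g s * F s + g s * w s) s := by
    intro s hs
    rw [hP]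
    exact (hgd s hs).mul (hFd s hs)
  -- first derivative function agrees with D near t
  set D : ℝ → ℝ := fun s => -(lam s) * g s * F s + g s * w s with hDdef
  have hDeq : deriv (fun s => p x s) =ᶠ[nhds t] D :=
    Filter.eventuallyEq_of_mem (isOpen_Ioi.mem_nhds ht) (fun s hs => (hPd s hs).deriv)
  have hderiv1 : deriv (fun s => p x s) t = D t := (hPd t ht).deriv
  -- derivative of D at t
  have hDd : HasDerivAt D
      ((-(deriv lam t) * g t + -(lam t) * (-(lam t) * g t)) * F t
        + -(lam t) * g t * w t
        + ((-(lam t) * g t) * w t + g t * deriv w t)) t := by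
    have h1 : HasDerivAt (fun s => -(lam s) * g s)
        (-(deriv lam t) * g t + -(lam t) * (-(lam t) * g t)) t :=
      hlamd.neg.mul (hgd t ht)
    exact ((h1.mul (hFd t ht)).add ((hgd t ht).mul hwd))
  have hit2t : iteratedDeriv 2 (fun s => p x s) t = deriv D t := by
    rw [show (2:ℕ) = 1 + 1 from rfl, iteratedDeriv_succ, iteratedDeriv_one]
    exact Filter.EventuallyEq.deriv_eq hDeq
  have hderivD : deriv D t = (-(deriv lam t) * g t + -(lam t) * (-(lam t) * g t)) * F t
        + -(lam t) * g t * w t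
        + ((-(lam t) * g t) * w t + g t * deriv w t) := hDd.deriv
  -- the equation for v in terms of w
  have hveq : deriv w t - (deriv lam t + (lam t)^2) * F t
      = c^2 * iteratedDeriv 2 (fun y => v y t) x := by
    have := heq x t ht
    rwa [show (2:ℕ) = 1 + 1 from rfl, iteratedDeriv_succ, iteratedDeriv_one] at this
  -- spatial side
  have hGc : ContDiff ℝ 2 (fun y => v y t) := by
    rw [contDiff_iff_contDiffAt]
    intro y
    have h1 : ContDiffAt ℝ 2 (fun z : ℝ × ℝ => v z.1 z.2) (y, t) :=
      hv.contDiffAt (hopen.mem_nhds ⟨Set.mem_univ _, ht⟩)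
    have h2 : ContDiffAt ℝ 2 (fun y : ℝ => ((y, t) : ℝ × ℝ)) y :=
      (contDiff_id.prodMk contDiff_const).contDiffAt
    exact h1.comp y h2
  have hGd : Differentiable ℝ (fun y => v y t) := hGc.differentiable two_ne_zero
  have hG'd : Differentiable ℝ (deriv fun y => v y t) := by
    have := hGc.differentiable_iteratedDeriv 1 (by norm_num)
    rwa [iteratedDeriv_one] at this
  have hspace : iteratedDeriv 2 (fun y => p y t) x
      = g t * iteratedDeriv 2 (fun y => v y t) x := by
    have hPt : (fun y => p y t) = fun y => g t * v y t := funext fun y => hp y t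
    rw [hPt, show (2:ℕ) = 1 + 1 from rfl, iteratedDeriv_succ, iteratedDeriv_one,
      iteratedDeriv_succ, iteratedDeriv_one]
    have e1 : deriv (fun y => g t * v y t) = fun y => g t * deriv (fun y' => v y' t) y :=
      funext fun y => deriv_const_mul _ (hGd y)
    rw [e1, deriv_const_mul _ (hG'd x)]
  rw [hit2t, hderiv1, hderivD, hspace, hDdef]
  have hexp : g t * (deriv w t - (deriv lam t + (lam t)^2) * F t)
      = g t * (c^2 * iteratedDeriv 2 (fun y => v y t) x) := by rw [hveq]
  linear_combination hexp
end

section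
/- Let λ > 0 and c > 0. The function p(x,t) = (1/(2c cosh(λt))) · ∂/∂t I₀( (λ/c)√(c²t² − x²) ) satisfies the non-homogeneous telegraph equation ∂²p/∂t² + 2λ tanh(λt) ∂p/∂t = c² ∂²p/∂x² for all (x,t) with t > 0 and |x| < ct. -/
open Real MeasureTheory

namespace TelAux

/-- Formal sum of a power series with coefficients `c`. -/
noncomputable def Sc (c : ℕ → ℝ) (u : ℝ) : ℝ := ∑' k : ℕ, c k * u ^ k

/-- Shifted (derivative) coefficients. -/
noncomputable def shift (c : ℕ → ℝ) (k : ℕ) : ℝ := ((k : ℝ) + 1) * c (k + 1)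

/-- Growth bound ensuring entireness. -/
def Bnd (c : ℕ → ℝ) (C B : ℝ) : Prop := ∀ k : ℕ, |c k| ≤ C * B ^ k / (k.factorial : ℝ)

lemma bnd_shift {c : ℕ → ℝ} {C B : ℝ} (hB : 0 ≤ B) (h : Bnd c C B) :
    Bnd (shift c) (C * B) B := by
  intro k
  have h1 := h (k + 1)
  have hfact : ((k+1).factorial : ℝ) = ((k:ℝ)+1) * (k.factorial : ℝ) := by
    rw [Nat.factorial_succ]; push_cast; ring
  have hk1 : (0:ℝ) < (k:ℝ) + 1 := by positivity
  have : |shift c k| = ((k:ℝ)+1) * |c (k+1)| := by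
    rw [shift, abs_mul, abs_of_pos hk1]
  rw [this]
  calc ((k:ℝ)+1) * |c (k+1)| ≤ ((k:ℝ)+1) * (C * B ^ (k+1) / ((k+1).factorial : ℝ)) := by
        exact mul_le_mul_of_nonneg_left h1 (le_of_lt hk1)
    _ = C * B * B ^ k / (k.factorial : ℝ) := by
        rw [hfact]
        have hf : (k.factorial : ℝ) ≠ 0 := by positivity
        field_simp
        ring

lemma summable_aux {c : ℕ → ℝ} {C B : ℝ} (hB : 0 ≤ B) (h : Bnd c C B) (r : ℝ) (hr : 0 ≤ r) :
    Summable (fun k : ℕ => |c k| * r ^ k) := by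
  refine Summable.of_nonneg_of_le (fun k => by positivity) (fun k => ?_)
    ((Real.summable_pow_div_factorial (B * r)).mul_left C)
  calc |c k| * r ^ k ≤ (C * B ^ k / (k.factorial : ℝ)) * r ^ k :=
        mul_le_mul_of_nonneg_right (h k) (by positivity)
    _ = C * ((B * r) ^ k / (k.factorial : ℝ)) := by rw [mul_pow]; ring

lemma summable_Sc {c : ℕ → ℝ} {C B : ℝ} (hB : 0 ≤ B) (h : Bnd c C B) (u : ℝ) :
    Summable (fun k : ℕ => c k * u ^ k) := by
  apply Summable.of_abs
  have := summable_aux hB h |u| (abs_nonneg u)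
  apply this.congr
  intro k
  rw [abs_mul, abs_pow]

end TelAux

namespace TelAux

lemma summable_mul_nat {c : ℕ → ℝ} {C B : ℝ} (hB : 0 ≤ B) (h : Bnd c C B) (u : ℝ) :
    Summable (fun k : ℕ => (k : ℝ) * c k * u ^ k) := by
  rw [← summable_nat_add_iff 1]
  have h1 : Summable (fun k : ℕ => u * (shift c k * u ^ k)) :=
    (summable_Sc hB (bnd_shift hB h) u).mul_left u
  apply h1.congr
  intro k
  rw [shift]
  push_cast
  ring

lemma hasDerivAt_Sc {c : ℕ → ℝ} {C B : ℝ} (hB : 0 ≤ B) (h : Bnd c C B) (u : ℝ) :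
    HasDerivAt (Sc c) (Sc (shift c) u) u := by
  classical
  set R : ℝ := |u| + 1 with hRdef
  have hR1 : 1 ≤ R := by have := abs_nonneg u; linarith [hRdef.le]
  have hR0 : 0 < R := lt_of_lt_of_le one_pos hR1
  have hmem : u ∈ Metric.ball (0:ℝ) R := by
    simp [Metric.mem_ball, Real.dist_eq, hRdef]
  have hw : Summable (fun k : ℕ => ((k : ℝ) * |c k|) * R ^ k) := by
    refine Summable.of_nonneg_of_le (fun k => by positivity) (fun k => ?_)
      ((Real.summable_pow_div_factorial (2 * B * R)).mul_left C)
    have hk2 : (k : ℝ) ≤ 2 ^ k := by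
      exact_mod_cast (Nat.lt_two_pow_self (n := k)).le
    calc ((k : ℝ) * |c k|) * R ^ k ≤ (2 ^ k * (C * B ^ k / (k.factorial : ℝ))) * R ^ k := by
          apply mul_le_mul_of_nonneg_right _ (by positivity)
          exact mul_le_mul hk2 (h k) (abs_nonneg _) (by positivity)
      _ = C * ((2 * B * R) ^ k / (k.factorial : ℝ)) := by
          rw [mul_pow, mul_pow]; ring
  have key : HasDerivAt (fun z : ℝ => ∑' n : ℕ, c n * z ^ n)
      (∑' n : ℕ, c n * ((n : ℝ) * u ^ (n - 1))) u := by
    refine hasDerivAt_tsum_of_isPreconnected hw Metric.isOpen_ball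
      (convex_ball (0:ℝ) R).isPreconnected
      (fun n y _ => (hasDerivAt_pow n y).const_mul (c n)) (fun n y hy => ?_) hmem
      (summable_Sc hB h u) hmem
    have hyR : |y| ≤ R := by
      have := Metric.mem_ball.mp hy
      rw [Real.dist_eq, sub_zero] at this
      exact this.le
    have h1 : |y| ^ (n - 1) ≤ R ^ n :=
      le_trans (pow_le_pow_left₀ (abs_nonneg y) hyR _)
        (pow_le_pow_right₀ hR1 (Nat.sub_le n 1))
    calc ‖c n * ((n : ℝ) * y ^ (n - 1))‖ = |c n| * ((n : ℝ) * |y| ^ (n - 1)) := by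
          rw [Real.norm_eq_abs, abs_mul, abs_mul, abs_pow, Nat.abs_cast]
      _ ≤ |c n| * ((n : ℝ) * R ^ n) :=
          mul_le_mul_of_nonneg_left (mul_le_mul_of_nonneg_left h1 (Nat.cast_nonneg n)) (abs_nonneg _)
      _ = ((n : ℝ) * |c n|) * R ^ n := by ring
  have hsum2 : Summable (fun n : ℕ => c n * ((n : ℝ) * u ^ (n - 1))) := by
    apply Summable.of_abs
    refine Summable.of_nonneg_of_le (fun k => abs_nonneg _) (fun n => ?_) hw
    have huR : |u| ≤ R := by simp [hRdef]
    have h1 : |u| ^ (n - 1) ≤ R ^ n :=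
      le_trans (pow_le_pow_left₀ (abs_nonneg u) huR _)
        (pow_le_pow_right₀ hR1 (Nat.sub_le n 1))
    calc |c n * ((n : ℝ) * u ^ (n - 1))| = |c n| * ((n : ℝ) * |u| ^ (n - 1)) := by
          rw [abs_mul, abs_mul, abs_pow, Nat.abs_cast]
      _ ≤ |c n| * ((n : ℝ) * R ^ n) :=
          mul_le_mul_of_nonneg_left (mul_le_mul_of_nonneg_left h1 (Nat.cast_nonneg n)) (abs_nonneg _)
      _ = ((n : ℝ) * |c n|) * R ^ n := by ring
  have heq : (∑' n : ℕ, c n * ((n : ℝ) * u ^ (n - 1))) = Sc (shift c) u := by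
    rw [Summable.tsum_eq_zero_add hsum2]
    simp only [Nat.cast_zero, zero_mul, mul_zero, zero_add]
    rw [Sc]
    apply tsum_congr
    intro n
    rw [shift]
    simp only [Nat.add_sub_cancel]
    push_cast
    ring
  rw [← heq]
  exact key

end TelAux

namespace TelAux

lemma key_identity {c : ℕ → ℝ} {C B : ℝ} (hB : 0 ≤ B) (h : Bnd c C B)
    (b2 m : ℝ) (hrel : ∀ k : ℕ, ((k:ℝ) + 1) * ((k:ℝ) + m + 1) * c (k+1) = b2 * c k) (u : ℝ) :
    u * Sc (shift (shift c)) u + (m + 1) * Sc (shift c) u = b2 * Sc c u := by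
  have hs1 : Bnd (shift c) (C * B) B := bnd_shift hB h
  have h1sum : Summable (fun k : ℕ => shift c k * u ^ k) := summable_Sc hB hs1 u
  have hg : Summable (fun j : ℕ => (j : ℝ) * shift c j * u ^ j) := summable_mul_nat hB hs1 u
  have step1 : u * Sc (shift (shift c)) u = ∑' j : ℕ, (j : ℝ) * shift c j * u ^ j := by
    rw [Sc, ← tsum_mul_left, Summable.tsum_eq_zero_add hg]
    simp only [Nat.cast_zero, zero_mul, zero_add]
    apply tsum_congr
    intro k
    rw [shift]
    push_cast
    ring
  have step2 : u * Sc (shift (shift c)) u + (m + 1) * Sc (shift c) u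
      = ∑' j : ℕ, ((j : ℝ) + m + 1) * shift c j * u ^ j := by
    rw [step1, Sc, ← tsum_mul_left, ← Summable.tsum_add hg (h1sum.mul_left (m+1))]
    apply tsum_congr
    intro j
    ring
  rw [step2, Sc, ← tsum_mul_left]
  apply tsum_congr
  intro j
  rw [shift]
  linear_combination (u ^ j) * hrel j

noncomputable def acoef (b : ℝ) (k : ℕ) : ℝ := b ^ (2*k) / ((k.factorial : ℝ))^2

lemma bnd_acoef (b : ℝ) : Bnd (acoef b) 1 (b^2) := by
  intro k
  have h1 : (1:ℝ) ≤ (k.factorial : ℝ) := by exact_mod_cast Nat.one_le_iff_ne_zero.mpr k.factorial_ne_zero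
  have h2 : (0:ℝ) < (k.factorial : ℝ) := by positivity
  have hsq : (k.factorial : ℝ) ≤ ((k.factorial : ℝ))^2 := by nlinarith
  have habs : |acoef b k| = (b^2) ^ k / ((k.factorial : ℝ))^2 := by
    rw [acoef, pow_mul, abs_div, abs_of_nonneg (by positivity : (0:ℝ) ≤ (b^2)^k),
      abs_of_nonneg (by positivity : (0:ℝ) ≤ ((k.factorial : ℝ))^2)]
  rw [habs, one_mul]
  gcongr

end TelAux


namespace TelAux

variable (lam c : ℝ)

/-- coefficient sequences -/
noncomputable def A1 : ℕ → ℝ := shift (acoef (lam/(2*c)))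
noncomputable def A2 : ℕ → ℝ := shift (A1 lam c)
noncomputable def A3 : ℕ → ℝ := shift (A2 lam c)

noncomputable def Pf (y s : ℝ) : ℝ :=
  (2*c)⁻¹ * ((Real.cosh (lam*s))⁻¹ * (Sc (A1 lam c) (c^2*s^2 - y^2) * (2*c^2*s)))

noncomputable def DtP (y s : ℝ) : ℝ :=
  (2*c)⁻¹ * ( -(lam*Real.sinh (lam*s)) * ((Real.cosh (lam*s))⁻¹)^2
      * (Sc (A1 lam c) (c^2*s^2 - y^2) * (2*c^2*s))
    + (Real.cosh (lam*s))⁻¹ * (Sc (A2 lam c) (c^2*s^2 - y^2) * (2*c^2*s) * (2*c^2*s)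
      + Sc (A1 lam c) (c^2*s^2 - y^2) * (2*c^2)) )

noncomputable def DttP (y s : ℝ) : ℝ :=
  (2*c)⁻¹ * (
    (-(lam^2*Real.cosh (lam*s)) * ((Real.cosh (lam*s))⁻¹)^2
      + 2*lam^2*(Real.sinh (lam*s))^2*((Real.cosh (lam*s))⁻¹)^3)
      * (Sc (A1 lam c) (c^2*s^2 - y^2) * (2*c^2*s))
    + 2 * (-(lam*Real.sinh (lam*s)) * ((Real.cosh (lam*s))⁻¹)^2)
      * (Sc (A2 lam c) (c^2*s^2 - y^2) * (4*c^4*s^2) + Sc (A1 lam c) (c^2*s^2 - y^2) * (2*c^2))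
    + (Real.cosh (lam*s))⁻¹ * (Sc (A3 lam c) (c^2*s^2 - y^2) * (8*c^6*s^3)
      + Sc (A2 lam c) (c^2*s^2 - y^2) * (12*c^4*s)) )

noncomputable def DxP (t y : ℝ) : ℝ :=
  (2*c)⁻¹ * ((Real.cosh (lam*t))⁻¹ *
    (Sc (A2 lam c) (c^2*t^2 - y^2) * (-(2*y)) * (2*c^2*t)))

noncomputable def DxxP (t y : ℝ) : ℝ :=
  (2*c)⁻¹ * ((Real.cosh (lam*t))⁻¹ *
    ((Sc (A3 lam c) (c^2*t^2 - y^2) * (4*y^2) - Sc (A2 lam c) (c^2*t^2 - y^2) * 2) * (2*c^2*t)))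

variable {lam c}

lemma bndA1 : Bnd (A1 lam c) (1 * (lam/(2*c))^2) ((lam/(2*c))^2) :=
  bnd_shift (sq_nonneg _) (bnd_acoef _)
lemma bndA2 : Bnd (A2 lam c) (1 * (lam/(2*c))^2 * (lam/(2*c))^2) ((lam/(2*c))^2) :=
  bnd_shift (sq_nonneg _) bndA1
lemma bndA3 : Bnd (A3 lam c) (1 * (lam/(2*c))^2 * (lam/(2*c))^2 * (lam/(2*c))^2) ((lam/(2*c))^2) :=
  bnd_shift (sq_nonneg _) bndA2

lemma hD1 (v : ℝ) : HasDerivAt (Sc (A1 lam c)) (Sc (A2 lam c) v) v :=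
  hasDerivAt_Sc (sq_nonneg _) bndA1 v
lemma hD2 (v : ℝ) : HasDerivAt (Sc (A2 lam c)) (Sc (A3 lam c) v) v :=
  hasDerivAt_Sc (sq_nonneg _) bndA2 v

lemma hUder (co x s : ℝ) : HasDerivAt (fun τ : ℝ => co^2*τ^2 - x^2) (2*co^2*s) s := by
  have h := ((hasDerivAt_pow 2 s).const_mul (co^2)).sub_const (x^2)
  refine h.congr_deriv ?_
  push_cast
  ring

lemma hCoshDer (s : ℝ) : HasDerivAt (fun τ : ℝ => Real.cosh (lam*τ)) (lam * Real.sinh (lam*s)) s := by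
  have h := ((hasDerivAt_id' s).const_mul lam).cosh
  convert h using 1
  ring

lemma hInvDer (s : ℝ) : HasDerivAt (fun τ : ℝ => (Real.cosh (lam*τ))⁻¹)
    (-(lam*Real.sinh (lam*s)) * ((Real.cosh (lam*s))⁻¹)^2) s := by
  have h := (hCoshDer (lam := lam) s).inv (ne_of_gt (Real.cosh_pos (lam*s)))
  refine h.congr_deriv ?_
  rw [inv_pow]
  ring

lemma hLinDer (co s : ℝ) : HasDerivAt (fun τ : ℝ => 2*co^2*τ) (2*co^2) s := by
  simpa using (hasDerivAt_id' s).const_mul (2*co^2)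

lemma hasDerivAt_Pf_t (x s : ℝ) :
    HasDerivAt (fun s' => Pf lam c x s') (DtP lam c x s) s := by
  have h1 : HasDerivAt (fun τ => Sc (A1 lam c) (c^2*τ^2 - x^2))
      (Sc (A2 lam c) (c^2*s^2 - x^2) * (2*c^2*s)) s :=
    (hD1 _).comp s (hUder c x s)
  have hQ : HasDerivAt (fun τ => Sc (A1 lam c) (c^2*τ^2 - x^2) * (2*c^2*τ))
      (Sc (A2 lam c) (c^2*s^2 - x^2) * (2*c^2*s) * (2*c^2*s)
        + Sc (A1 lam c) (c^2*s^2 - x^2) * (2*c^2)) s :=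
    h1.mul (hLinDer c s)
  have h := ((hInvDer (lam := lam) s).mul hQ).const_mul ((2*c)⁻¹)
  exact h

lemma hasDerivAt_DtP (x s : ℝ) :
    HasDerivAt (fun s' => DtP lam c x s') (DttP lam c x s) s := by
  have h1 : HasDerivAt (fun τ => Sc (A1 lam c) (c^2*τ^2 - x^2))
      (Sc (A2 lam c) (c^2*s^2 - x^2) * (2*c^2*s)) s :=
    (hD1 _).comp s (hUder c x s)
  have h2 : HasDerivAt (fun τ => Sc (A2 lam c) (c^2*τ^2 - x^2))
      (Sc (A3 lam c) (c^2*s^2 - x^2) * (2*c^2*s)) s :=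
    (hD2 _).comp s (hUder c x s)
  have hQ : HasDerivAt (fun τ => Sc (A1 lam c) (c^2*τ^2 - x^2) * (2*c^2*τ))
      (Sc (A2 lam c) (c^2*s^2 - x^2) * (2*c^2*s) * (2*c^2*s)
        + Sc (A1 lam c) (c^2*s^2 - x^2) * (2*c^2)) s :=
    h1.mul (hLinDer c s)
  -- derivative of the sinh factor
  have hN : HasDerivAt (fun τ : ℝ => -(lam*Real.sinh (lam*τ))) (-(lam^2*Real.cosh (lam*s))) s := by
    have h := (((hasDerivAt_id' s).const_mul lam).sinh.const_mul lam).neg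
    refine h.congr_deriv ?_
    ring
  have hW : HasDerivAt (fun τ : ℝ => ((Real.cosh (lam*τ))⁻¹)^2)
      (2 * (Real.cosh (lam*s))⁻¹ ^ 1 * (-(lam*Real.sinh (lam*s)) * ((Real.cosh (lam*s))⁻¹)^2)) s :=
    (hInvDer s).pow 2
  have hT1 : HasDerivAt (fun τ => -(lam*Real.sinh (lam*τ)) * ((Real.cosh (lam*τ))⁻¹)^2
      * (Sc (A1 lam c) (c^2*τ^2 - x^2) * (2*c^2*τ)))
      ( (-(lam^2*Real.cosh (lam*s)) * ((Real.cosh (lam*s))⁻¹)^2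
          + -(lam*Real.sinh (lam*s)) * (2 * (Real.cosh (lam*s))⁻¹ ^ 1
            * (-(lam*Real.sinh (lam*s)) * ((Real.cosh (lam*s))⁻¹)^2)))
        * (Sc (A1 lam c) (c^2*s^2 - x^2) * (2*c^2*s))
      + -(lam*Real.sinh (lam*s)) * ((Real.cosh (lam*s))⁻¹)^2
        * (Sc (A2 lam c) (c^2*s^2 - x^2) * (2*c^2*s) * (2*c^2*s)
          + Sc (A1 lam c) (c^2*s^2 - x^2) * (2*c^2)) ) s :=
    (hN.mul hW).mul hQ
  -- derivative of QD
  have hQD1 : HasDerivAt (fun τ => Sc (A2 lam c) (c^2*τ^2 - x^2) * (2*c^2*τ) * (2*c^2*τ))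
      ( (Sc (A3 lam c) (c^2*s^2 - x^2) * (2*c^2*s) * (2*c^2*s)
          + Sc (A2 lam c) (c^2*s^2 - x^2) * (2*c^2)) * (2*c^2*s)
        + Sc (A2 lam c) (c^2*s^2 - x^2) * (2*c^2*s) * (2*c^2) ) s :=
    ((h2.mul (hLinDer c s)).mul (hLinDer c s))
  have hQD2 : HasDerivAt (fun τ => Sc (A1 lam c) (c^2*τ^2 - x^2) * (2*c^2))
      (Sc (A2 lam c) (c^2*s^2 - x^2) * (2*c^2*s) * (2*c^2)) s :=
    h1.mul_const (2*c^2)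
  have hQD := hQD1.add hQD2
  have hT2 := (hInvDer (lam := lam) s).mul (hQD1.add hQD2)
  have h := ((hT1.add hT2).const_mul ((2*c)⁻¹))
  have heq : (fun s' => DtP lam c x s') = fun τ =>
      (2*c)⁻¹ * ( -(lam*Real.sinh (lam*τ)) * ((Real.cosh (lam*τ))⁻¹)^2
          * (Sc (A1 lam c) (c^2*τ^2 - x^2) * (2*c^2*τ))
        + (Real.cosh (lam*τ))⁻¹ * (Sc (A2 lam c) (c^2*τ^2 - x^2) * (2*c^2*τ) * (2*c^2*τ)
          + Sc (A1 lam c) (c^2*τ^2 - x^2) * (2*c^2)) ) := by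
    funext τ; rw [DtP]
  rw [heq]
  refine h.congr_deriv ?_
  rw [DttP, Pi.add_apply]
  ring

lemma hasDerivAt_Pf_x (t y : ℝ) :
    HasDerivAt (fun y' => Pf lam c y' t) (DxP lam c t y) y := by
  have hU : HasDerivAt (fun z : ℝ => c^2*t^2 - z^2) (-(2*y)) y := by
    have h := (hasDerivAt_pow 2 y).const_sub (c^2*t^2)
    refine h.congr_deriv ?_
    push_cast; ring
  have h1 : HasDerivAt (fun z => Sc (A1 lam c) (c^2*t^2 - z^2))
      (Sc (A2 lam c) (c^2*t^2 - y^2) * (-(2*y))) y := (hD1 _).comp y hU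
  have h := ((h1.mul_const (2*c^2*t)).const_mul ((Real.cosh (lam*t))⁻¹)).const_mul ((2*c)⁻¹)
  exact h

lemma hasDerivAt_DxP (t y : ℝ) :
    HasDerivAt (fun y' => DxP lam c t y') (DxxP lam c t y) y := by
  have hU : HasDerivAt (fun z : ℝ => c^2*t^2 - z^2) (-(2*y)) y := by
    have h := (hasDerivAt_pow 2 y).const_sub (c^2*t^2)
    refine h.congr_deriv ?_
    push_cast; ring
  have h2 : HasDerivAt (fun z => Sc (A2 lam c) (c^2*t^2 - z^2))
      (Sc (A3 lam c) (c^2*t^2 - y^2) * (-(2*y))) y := (hD2 _).comp y hU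
  have hneg : HasDerivAt (fun z : ℝ => -(2*z)) (-2 : ℝ) y := by
    refine ((hasDerivAt_id' y).const_mul (2:ℝ)).neg.congr_deriv ?_; ring
  have h := (((h2.mul hneg).mul_const (2*c^2*t)).const_mul
      ((Real.cosh (lam*t))⁻¹)).const_mul ((2*c)⁻¹)
  refine h.congr_deriv ?_
  rw [DxxP]
  ring

end TelAux

namespace TelAux

lemma acoef_rec (b : ℝ) (n : ℕ) :
    acoef b (n+1) * (((n:ℝ)+1)^2) = b^2 * acoef b n := by
  have hF : ((n.factorial : ℕ) : ℝ) ≠ 0 := by positivity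
  have hn1 : ((n:ℝ)+1) ≠ 0 := by positivity
  rw [acoef, acoef, Nat.factorial_succ, show 2*(n+1) = 2+2*n from by ring, pow_add]
  push_cast
  field_simp

lemma relA1 {lam c : ℝ} (k : ℕ) :
    ((k:ℝ)+1) * (((k:ℝ)+1)+1) * A1 lam c (k+1) = (lam/(2*c))^2 * A1 lam c k := by
  have hk := acoef_rec (lam/(2*c)) (k+1)
  push_cast at hk
  simp only [A1, shift]
  push_cast
  linear_combination ((k:ℝ)+1) * hk

lemma pde_identity {lam c : ℝ} (hc : 0 < c) (x t : ℝ) (hreg : 0 < c^2*t^2 - x^2) :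
    DttP lam c x t + 2*lam*Real.tanh (lam*t) * DtP lam c x t = c^2 * DxxP lam c t x := by
  have hCne : Real.cosh (lam*t) ≠ 0 := ne_of_gt (Real.cosh_pos (lam*t))
  have hu : (c^2*t^2 - x^2) ≠ 0 := ne_of_gt hreg
  have hcne : c ≠ 0 := ne_of_gt hc
  have hident : (c^2*t^2-x^2) * Sc (A3 lam c) (c^2*t^2-x^2)
      + (1+1) * Sc (A2 lam c) (c^2*t^2-x^2)
      = (lam/(2*c))^2 * Sc (A1 lam c) (c^2*t^2-x^2) :=
    key_identity (sq_nonneg (lam/(2*c))) bndA1 ((lam/(2*c))^2) 1 (fun k => relA1 k) _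
  rw [DttP, DtP, DxxP, Real.tanh_eq_sinh_div_cosh]
  have hS3 : Sc (A3 lam c) (c^2*t^2-x^2)
      = ((lam/(2*c))^2 * Sc (A1 lam c) (c^2*t^2-x^2) - 2 * Sc (A2 lam c) (c^2*t^2-x^2))
        / (c^2*t^2-x^2) := by
    rw [eq_div_iff hu]
    linarith [hident]
  rw [hS3]
  field_simp
  ring

end TelAux

namespace TelAux

lemma hD0 {lam c : ℝ} (v : ℝ) :
    HasDerivAt (Sc (acoef (lam/(2*c)))) (Sc (A1 lam c) v) v :=
  hasDerivAt_Sc (sq_nonneg _) (bnd_acoef _) v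

end TelAux


lemma besselI0_eq_Sc {lam c : ℝ} (hc : c ≠ 0) (v : ℝ) (hv : 0 ≤ v) :
    besselI0 ((lam/c) * Real.sqrt v) = TelAux.Sc (TelAux.acoef (lam/(2*c))) v := by
  rw [besselI0, TelAux.Sc]
  apply tsum_congr
  intro k
  rw [TelAux.acoef]
  have h2 : (lam/c) * Real.sqrt v / 2 = (lam/(2*c)) * Real.sqrt v := by
    field_simp
  rw [h2, mul_pow, pow_mul (Real.sqrt v), Real.sq_sqrt hv]
  ring

theorem telegraph_tanh_rate_law
    (lam c : ℝ) (hlam : 0 < lam) (hc : 0 < c)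
    (p : ℝ → ℝ → ℝ)
    (hp : ∀ x, ∀ t : ℝ, p x t = (1 / (2 * c * Real.cosh (lam * t))) *
      deriv (fun τ => besselI0 ((lam/c) * Real.sqrt (c^2*τ^2 - x^2))) t) :
    ∀ x t : ℝ, 0 < t → |x| < c*t →
      iteratedDeriv 2 (fun s => p x s) t
        + 2 * lam * Real.tanh (lam * t) * deriv (fun s => p x s) t
        = c^2 * iteratedDeriv 2 (fun y => p y t) x := by
  intro x t ht hxt
  have hcne : c ≠ 0 := ne_of_gt hc
  have hreg : 0 < c^2*t^2 - x^2 := by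
    nlinarith [sq_abs x, abs_nonneg x, hxt]
  have hpP : ∀ y s : ℝ, 0 < c^2*s^2 - y^2 → p y s = TelAux.Pf lam c y s := by
    intro y s hr
    rw [hp]
    have hopen : IsOpen {τ : ℝ | 0 < c^2*τ^2 - y^2} :=
      isOpen_lt continuous_const (by continuity)
    have hev : (fun τ => besselI0 ((lam/c)*Real.sqrt (c^2*τ^2 - y^2)))
        =ᶠ[nhds s] (fun τ => TelAux.Sc (TelAux.acoef (lam/(2*c))) (c^2*τ^2 - y^2)) := by
      filter_upwards [hopen.mem_nhds hr] with τ hτ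
      exact besselI0_eq_Sc hcne _ (le_of_lt hτ)
    have hder : HasDerivAt (fun τ => TelAux.Sc (TelAux.acoef (lam/(2*c))) (c^2*τ^2 - y^2))
        (TelAux.Sc (TelAux.A1 lam c) (c^2*s^2 - y^2) * (2*c^2*s)) s :=
      (TelAux.hD0 _).comp s (TelAux.hUder c y s)
    rw [hev.deriv_eq, hder.deriv, TelAux.Pf]
    have hcosh : Real.cosh (lam*s) ≠ 0 := ne_of_gt (Real.cosh_pos _)
    field_simp
  have hopent : IsOpen {s : ℝ | 0 < c^2*s^2 - x^2} :=
    isOpen_lt continuous_const (by continuity)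
  have ev1 : (fun s => p x s) =ᶠ[nhds t] (fun s => TelAux.Pf lam c x s) := by
    filter_upwards [hopent.mem_nhds hreg] with s hs using hpP x s hs
  have hopenx : IsOpen {y : ℝ | 0 < c^2*t^2 - y^2} :=
    isOpen_lt continuous_const (by continuity)
  have ev2 : (fun y => p y t) =ᶠ[nhds x] (fun y => TelAux.Pf lam c y t) := by
    filter_upwards [hopenx.mem_nhds hreg] with y hy using hpP y t hy
  have d1 : deriv (fun s => p x s) t = TelAux.DtP lam c x t := by
    rw [ev1.deriv_eq]
    exact (TelAux.hasDerivAt_Pf_t x t).deriv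
  have e2 : deriv (fun s => TelAux.Pf lam c x s) = fun s => TelAux.DtP lam c x s :=
    funext fun s => (TelAux.hasDerivAt_Pf_t x s).deriv
  have d2 : iteratedDeriv 2 (fun s => p x s) t = TelAux.DttP lam c x t := by
    rw [show (2:ℕ) = 1+1 from rfl, iteratedDeriv_succ, iteratedDeriv_one]
    rw [ev1.deriv.deriv_eq, e2]
    exact (TelAux.hasDerivAt_DtP x t).deriv
  have e2x : deriv (fun y => TelAux.Pf lam c y t) = fun y => TelAux.DxP lam c t y :=
    funext fun y => (TelAux.hasDerivAt_Pf_x t y).deriv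
  have d2x : iteratedDeriv 2 (fun y => p y t) x = TelAux.DxxP lam c t x := by
    rw [show (2:ℕ) = 1+1 from rfl, iteratedDeriv_succ, iteratedDeriv_one]
    rw [ev2.deriv.deriv_eq, e2x]
    exact (TelAux.hasDerivAt_DxP t x).deriv
  rw [d1, d2, d2x]
  exact TelAux.pde_identity hc x t hreg
end

section
/- Let λ > 0 and c > 0. The function p(x,t) = λ I₀( (λ/c)√(c²t² − x²) ) / (2c sinh(λt)) satisfies the non-homogeneous telegraph equation ∂²p/∂t² + 2λ coth(λt) ∂p/∂t = c² ∂²p/∂x² for all (x,t) with t > 0 and |x| < ct. -/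
open Real MeasureTheory

noncomputable def pser (c : ℕ → ℝ) (u : ℝ) : ℝ := ∑' k : ℕ, c k * u ^ k

noncomputable def pshift (c : ℕ → ℝ) : ℕ → ℝ := fun k => ((k : ℝ) + 1) * c (k + 1)

noncomputable def bcoef (a : ℝ) : ℕ → ℝ := fun k => a ^ k / ((k.factorial : ℝ)) ^ 2

lemma fact_cast_pos (k : ℕ) : (0:ℝ) < (k.factorial : ℝ) := by
  exact_mod_cast k.factorial_pos

lemma pshift_bound {c : ℕ → ℝ} {M b : ℝ} (hb : 0 ≤ b)
    (h : ∀ k, |c k| ≤ M * b ^ k / k.factorial) :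
    ∀ k, |pshift c k| ≤ (M * b) * b ^ k / k.factorial := by
  intro k
  have h1 := h (k + 1)
  have hfact : (((k+1).factorial : ℝ)) = ((k:ℝ) + 1) * k.factorial := by
    rw [Nat.factorial_succ]; push_cast; ring
  have habs : |pshift c k| = ((k:ℝ) + 1) * |c (k + 1)| := by
    rw [pshift, abs_mul, abs_of_nonneg (by positivity)]
  rw [habs]
  have hk0 : (0:ℝ) < (k.factorial : ℝ) := fact_cast_pos k
  calc ((k:ℝ) + 1) * |c (k + 1)| ≤ ((k:ℝ) + 1) * (M * b ^ (k+1) / (k+1).factorial) := by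
        apply mul_le_mul_of_nonneg_left h1 (by positivity)
    _ = (M * b) * b ^ k / k.factorial := by
        rw [hfact, pow_succ]
        field_simp

lemma bcoef_bound (a : ℝ) (ha : 0 ≤ a) :
    ∀ k, |bcoef a k| ≤ 1 * a ^ k / k.factorial := by
  intro k
  have hk1 : (1:ℝ) ≤ (k.factorial : ℝ) := by exact_mod_cast k.factorial_pos
  rw [bcoef, abs_of_nonneg (by positivity), one_mul]
  apply div_le_div_of_nonneg_left (by positivity) (by positivity)
  nlinarith

lemma summable_bound {c : ℕ → ℝ} {M b : ℝ}
    (h : ∀ k, |c k| ≤ M * b ^ k / k.factorial) (R : ℝ) (hb : 0 ≤ b) (hR : 0 ≤ R) :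
    Summable (fun k : ℕ => |c k| * ((k : ℝ) + 1) * R ^ k) := by
  have hM : 0 ≤ M := by
    have := (abs_nonneg (c 0)).trans (h 0)
    simpa using this
  apply Summable.of_nonneg_of_le (fun k => by positivity) (fun k => ?_)
    ((Real.summable_pow_div_factorial (2 * b * R)).mul_left M)
  have h2 : ((k:ℝ) + 1) ≤ 2 ^ k := by
    have := Nat.lt_two_pow_self (n := k)
    exact_mod_cast Nat.succ_le_of_lt this
  have hk0 : (0:ℝ) < (k.factorial : ℝ) := fact_cast_pos k
  calc |c k| * ((k:ℝ) + 1) * R ^ k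
      ≤ (M * b ^ k / k.factorial) * 2 ^ k * R ^ k := by
        apply mul_le_mul_of_nonneg_right _ (by positivity)
        apply mul_le_mul (h k) h2 (by positivity) ((abs_nonneg _).trans (h k))
    _ = M * ((2 * b * R) ^ k / k.factorial) := by
        rw [mul_pow, mul_pow]
        field_simp

lemma summable_pser {c : ℕ → ℝ} {M b : ℝ} (hb : 0 ≤ b)
    (h : ∀ k, |c k| ≤ M * b ^ k / k.factorial) (u : ℝ) :
    Summable (fun k : ℕ => c k * u ^ k) := by
  apply Summable.of_norm_bounded (summable_bound h |u| hb (abs_nonneg u))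
  intro k
  rw [Real.norm_eq_abs, abs_mul, abs_pow]
  have : |c k| * |u| ^ k ≤ (|c k| * ((k:ℝ)+1)) * |u| ^ k := by
    apply mul_le_mul_of_nonneg_right _ (by positivity)
    nlinarith [abs_nonneg (c k), Nat.cast_nonneg (α := ℝ) k]
  linarith

lemma pser_hasDerivAt {c : ℕ → ℝ} {M b : ℝ} (hb : 0 ≤ b)
    (h : ∀ k, |c k| ≤ M * b ^ k / k.factorial) (u : ℝ) :
    HasDerivAt (pser c) (pser (pshift c) u) u := by
  set R : ℝ := |u| + 1 with hR
  have hR1 : (1:ℝ) ≤ R := by rw [hR]; linarith [abs_nonneg u]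
  have hR0 : (0:ℝ) ≤ R := by linarith
  have hmem : u ∈ Metric.ball (0:ℝ) R := by
    simp [Metric.mem_ball, Real.dist_eq, hR]
  have hbd : ∀ (k : ℕ) (v : ℝ), v ∈ Metric.ball (0:ℝ) R →
      ‖c k * ((k:ℝ) * v ^ (k - 1))‖ ≤ |c k| * ((k:ℝ) + 1) * R ^ k := by
    intro k v hv
    have hvR : |v| ≤ R := by
      have : |v| < R := by simpa [Metric.mem_ball, Real.dist_eq] using hv
      linarith
    rw [Real.norm_eq_abs, abs_mul, abs_mul, abs_pow, Nat.abs_cast]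
    have h1 : |v| ^ (k-1) ≤ R ^ (k-1) := pow_le_pow_left₀ (abs_nonneg v) hvR _
    have h2 : R ^ (k-1) ≤ R ^ k := pow_le_pow_right₀ hR1 (Nat.sub_le k 1)
    have h3 : (k:ℝ) ≤ (k:ℝ) + 1 := by linarith
    calc |c k| * ((k:ℝ) * |v| ^ (k-1)) ≤ |c k| * (((k:ℝ)+1) * R ^ k) := by
          apply mul_le_mul_of_nonneg_left _ (abs_nonneg _)
          apply mul_le_mul h3 (h1.trans h2) (by positivity) (by positivity)
      _ = |c k| * ((k:ℝ)+1) * R ^ k := by ring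
  have key : HasDerivAt (fun v => ∑' k : ℕ, c k * v ^ k)
      (∑' k : ℕ, c k * ((k:ℝ) * u ^ (k - 1))) u := by
    apply hasDerivAt_tsum_of_isPreconnected (summable_bound h R hb hR0)
      Metric.isOpen_ball (convex_ball (0:ℝ) R).isPreconnected
      (fun k v _ => (hasDerivAt_pow k v).const_mul (c k)) hbd hmem
      (summable_pser hb h u) hmem
  have hs2 : Summable (fun k : ℕ => c k * ((k:ℝ) * u ^ (k - 1))) :=
    Summable.of_norm_bounded (summable_bound h R hb hR0) (fun k => hbd k u hmem)
  have heq : (∑' k : ℕ, c k * ((k:ℝ) * u ^ (k - 1))) = ∑' k : ℕ, pshift c k * u ^ k := by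
    rw [Summable.tsum_eq_zero_add hs2]
    simp only [Nat.cast_zero, zero_mul, mul_zero, zero_add]
    apply tsum_congr
    intro k
    rw [pshift]
    push_cast
    ring_nf
  unfold pser
  rw [← heq]
  exact key

lemma pser_ode (a u : ℝ) (ha : 0 ≤ a) :
    u * pser (pshift (pshift (bcoef a))) u + pser (pshift (bcoef a)) u
      = a * pser (bcoef a) u := by
  have hb0 := bcoef_bound a ha
  have hb1 := pshift_bound ha hb0
  have hb2 := pshift_bound ha hb1
  have hs0 : Summable (fun k : ℕ => bcoef a k * u ^ k) := summable_pser ha hb0 u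
  have hs1 : Summable (fun k : ℕ => pshift (bcoef a) k * u ^ k) := summable_pser ha hb1 u
  have hs2 : Summable (fun k : ℕ => pshift (pshift (bcoef a)) k * u ^ k) := summable_pser ha hb2 u
  have e1 : u * pser (pshift (pshift (bcoef a))) u
      = ∑' k : ℕ, pshift (pshift (bcoef a)) k * u ^ (k + 1) := by
    rw [pser, ← tsum_mul_left]
    exact tsum_congr fun k => by ring
  have hsum3 : Summable (fun k : ℕ => (a * bcoef a k - pshift (bcoef a) k) * u ^ k) :=
    ((hs0.mul_left a).sub hs1).congr (fun k => by ring)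
  have e2 : a * pser (bcoef a) u - pser (pshift (bcoef a)) u
      = ∑' k : ℕ, (a * bcoef a k - pshift (bcoef a) k) * u ^ k := by
    rw [pser, pser, ← tsum_mul_left, ← Summable.tsum_sub (hs0.mul_left a) hs1]
    exact tsum_congr fun k => by ring
  have hzero : (a * bcoef a 0 - pshift (bcoef a) 0) * u ^ 0 = 0 := by
    simp [bcoef, pshift, Nat.factorial]
  have e4 : ∀ k : ℕ, a * bcoef a (k + 1) - pshift (bcoef a) (k + 1)
      = pshift (pshift (bcoef a)) k := by
    intro k
    simp only [bcoef, pshift]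
    have f1 : (((k+1).factorial : ℝ)) = ((k:ℝ) + 1) * k.factorial := by
      rw [Nat.factorial_succ]; push_cast; ring
    have f2 : (((k+1+1).factorial : ℝ)) = ((k:ℝ) + 2) * (k+1).factorial := by
      rw [Nat.factorial_succ]; push_cast; ring
    have hk0 : ((k.factorial : ℝ)) ≠ 0 := ne_of_gt (fact_cast_pos k)
    rw [f2, f1]
    push_cast
    field_simp
    ring
  have e3 : (∑' k : ℕ, (a * bcoef a k - pshift (bcoef a) k) * u ^ k)
      = ∑' k : ℕ, pshift (pshift (bcoef a)) k * u ^ (k + 1) := by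
    rw [Summable.tsum_eq_zero_add hsum3, hzero, zero_add]
    exact tsum_congr fun k => by rw [e4]
  have : u * pser (pshift (pshift (bcoef a))) u
      = a * pser (bcoef a) u - pser (pshift (bcoef a)) u := by
    rw [e1, e2, e3]
  linarith

/-- The hyperbolic cotangent. -/
noncomputable def coth (t : ℝ) : ℝ := Real.cosh t / Real.sinh t

lemma iteratedDeriv_two (f : ℝ → ℝ) : iteratedDeriv 2 f = deriv (deriv f) := by
  show iteratedDeriv (1 + 1) f = _
  rw [iteratedDeriv_succ, iteratedDeriv_one]

theorem telegraph_coth_rate_law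
    (lam c : ℝ) (hlam : 0 < lam) (hc : 0 < c)
    (p : ℝ → ℝ → ℝ)
    (hp : ∀ x, ∀ t : ℝ,
      p x t = lam * besselI0 ((lam/c) * Real.sqrt (c^2*t^2 - x^2))
        / (2 * c * Real.sinh (lam * t))) :
    ∀ x t : ℝ, 0 < t → |x| < c*t →
      iteratedDeriv 2 (fun s => p x s) t
        + 2 * lam * coth (lam * t) * deriv (fun s => p x s) t
        = c^2 * iteratedDeriv 2 (fun y => p y t) x := by
  intro x t ht hxt
  have hc' : c ≠ 0 := ne_of_gt hc
  have hlam' : lam ≠ 0 := ne_of_gt hlam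
  set a : ℝ := lam^2/(4*c^2) with ha_def
  have ha : 0 ≤ a := by positivity
  have hb0 := bcoef_bound a ha
  have hb1 := pshift_bound ha hb0
  set F : ℝ → ℝ := pser (bcoef a) with hF_def
  set F1 : ℝ → ℝ := pser (pshift (bcoef a)) with hF1_def
  set F2 : ℝ → ℝ := pser (pshift (pshift (bcoef a))) with hF2_def
  have hF : ∀ v : ℝ, HasDerivAt F (F1 v) v := fun v => pser_hasDerivAt ha hb0 v
  have hF1 : ∀ v : ℝ, HasDerivAt F1 (F2 v) v := fun v => pser_hasDerivAt ha hb1 v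
  have hODE : ∀ v : ℝ, v * F2 v + F1 v = a * F v := fun v => pser_ode a v ha
  -- representation of p
  have hrep : ∀ w : ℝ, 0 ≤ w → besselI0 (lam / c * Real.sqrt w) = F w := by
    intro w hw
    rw [hF_def, besselI0, pser]
    apply tsum_congr
    intro k
    rw [pow_mul]
    have hsq : (lam / c * Real.sqrt w / 2) ^ 2 = a * w := by
      have h1 : (lam / c * Real.sqrt w / 2) ^ 2 = (lam/c)^2 * (Real.sqrt w)^2 / 4 := by ring
      rw [h1, Real.sq_sqrt hw, div_pow, ha_def]
      ring
    rw [hsq, bcoef, mul_pow]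
    ring
  have hP : ∀ y s : ℝ, |y| < c * s → p y s
      = lam * F (c^2*s^2 - y^2) / (2 * c * Real.sinh (lam * s)) := by
    intro y s hys
    have h1 : |y| * |y| < (c*s) * (c*s) :=
      mul_lt_mul'' hys hys (abs_nonneg y) (abs_nonneg y)
    rw [abs_mul_abs_self] at h1
    have hw : 0 ≤ c^2*s^2 - y^2 := by nlinarith
    rw [hp y s, hrep _ hw]
  have hmemS : ∀ s : ℝ, |x| < c * s → 0 < s := by
    intro s hs
    have hcs : 0 < c * s := lt_of_le_of_lt (abs_nonneg x) hs
    nlinarith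
  -- open sets
  have hSopen : IsOpen {s : ℝ | |x| < c * s} := by
    have : {s : ℝ | |x| < c * s} = (fun s => c * s) ⁻¹' Set.Ioi |x| := rfl
    rw [this]; exact isOpen_Ioi.preimage (continuous_const.mul continuous_id)
  have htS : t ∈ {s : ℝ | |x| < c * s} := hxt
  have hTopen : IsOpen {y : ℝ | |y| < c * t} := by
    have : {y : ℝ | |y| < c * t} = (fun y : ℝ => |y|) ⁻¹' Set.Iio (c*t) := rfl
    rw [this]; exact isOpen_Iio.preimage continuous_abs
  have hxT : x ∈ {y : ℝ | |y| < c * t} := hxt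
  -- elementary derivatives
  have hU : ∀ s : ℝ, HasDerivAt (fun r : ℝ => c^2*r^2 - x^2) (2*c^2*s) s := by
    intro s
    have h := ((hasDerivAt_pow 2 s).const_mul (c^2)).sub_const (x^2)
    refine h.congr_deriv ?_
    push_cast; ring
  have hSinh : ∀ s : ℝ, HasDerivAt (fun r : ℝ => 2*c*Real.sinh (lam*r))
      (2*c*(Real.cosh (lam*s)*lam)) s := by
    intro s
    have h1 : HasDerivAt (fun r : ℝ => lam * r) lam s := by
      simpa using (hasDerivAt_id s).const_mul lam
    exact ((Real.hasDerivAt_sinh (lam*s)).comp s h1).const_mul (2*c)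
  have hsht : Real.sinh (lam*t) ≠ 0 := ne_of_gt (Real.sinh_pos_iff.mpr (by positivity))
  have hdent : (2*c*Real.sinh (lam*t)) ≠ 0 := mul_ne_zero (by positivity) hsht
  -- first derivative in t on S
  have hq1at : ∀ s ∈ {s : ℝ | |x| < c * s}, HasDerivAt (fun r => p x r)
      ((lam * (F1 (c^2*s^2 - x^2) * (2*c^2*s)) * (2*c*Real.sinh (lam*s))
        - lam * F (c^2*s^2 - x^2) * (2*c*(Real.cosh (lam*s)*lam)))
        / (2*c*Real.sinh (lam*s))^2) s := by
    intro s hs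
    have h0s : 0 < s := hmemS s hs
    have hshs : Real.sinh (lam*s) ≠ 0 := ne_of_gt (Real.sinh_pos_iff.mpr (by positivity))
    have hden : (2*c*Real.sinh (lam*s)) ≠ 0 := mul_ne_zero (by positivity) hshs
    have hN : HasDerivAt (fun r => lam * F (c^2*r^2 - x^2))
        (lam * (F1 (c^2*s^2 - x^2) * (2*c^2*s))) s := by
      simpa [Function.comp] using ((hF (c^2*s^2 - x^2)).comp s (hU s)).const_mul lam
    have hq := hN.div (hSinh s) hden
    apply hq.congr_of_eventuallyEq
    filter_upwards [hSopen.mem_nhds hs] with r hr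
    exact hP x r hr
  have hd1 : ∀ s ∈ {s : ℝ | |x| < c * s}, deriv (fun r => p x r) s
      = (lam * (F1 (c^2*s^2 - x^2) * (2*c^2*s)) * (2*c*Real.sinh (lam*s))
        - lam * F (c^2*s^2 - x^2) * (2*c*(Real.cosh (lam*s)*lam)))
        / (2*c*Real.sinh (lam*s))^2 := fun s hs => (hq1at s hs).deriv
  have hEq : deriv (fun r => p x r) =ᶠ[nhds t] (fun s =>
      (lam * (F1 (c^2*s^2 - x^2) * (2*c^2*s)) * (2*c*Real.sinh (lam*s))
        - lam * F (c^2*s^2 - x^2) * (2*c*(Real.cosh (lam*s)*lam)))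
        / (2*c*Real.sinh (lam*s))^2) := by
    filter_upwards [hSopen.mem_nhds htS] with s hs
    exact hd1 s hs
  -- second derivative in t
  have hA : HasDerivAt (fun s => lam * (F1 (c^2*s^2 - x^2) * (2*c^2*s)))
      (lam * ((F2 (c^2*t^2 - x^2) * (2*c^2*t)) * (2*c^2*t) + F1 (c^2*t^2 - x^2) * (2*c^2))) t := by
    have h1 : HasDerivAt (fun s => F1 (c^2*s^2 - x^2)) (F2 (c^2*t^2 - x^2) * (2*c^2*t)) t := by
      exact (hF1 (c^2*t^2 - x^2)).comp t (hU t)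
    have h2 : HasDerivAt (fun s : ℝ => 2*c^2*s) (2*c^2) t := by
      simpa using (hasDerivAt_id t).const_mul (2*c^2)
    exact (h1.mul h2).const_mul lam
  have hB : HasDerivAt (fun s => lam * F (c^2*s^2 - x^2))
      (lam * (F1 (c^2*t^2 - x^2) * (2*c^2*t))) t := by
    simpa [Function.comp] using ((hF (c^2*t^2 - x^2)).comp t (hU t)).const_mul lam
  have hC : HasDerivAt (fun s : ℝ => 2*c*(Real.cosh (lam*s)*lam))
      (2*c*(Real.sinh (lam*t)*lam*lam)) t := by
    have h1 : HasDerivAt (fun r : ℝ => lam * r) lam t := by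
      simpa using (hasDerivAt_id t).const_mul lam
    have h2 : HasDerivAt (fun s : ℝ => Real.cosh (lam*s)) (Real.sinh (lam*t)*lam) t := by
      exact (Real.hasDerivAt_cosh (lam*t)).comp t h1
    exact (h2.mul_const lam).const_mul (2*c)
  have hD2 := (hSinh t).fun_pow 2
  have hq2 := ((hA.fun_mul (hSinh t)).fun_sub (hB.fun_mul hC)).fun_div hD2 (pow_ne_zero 2 hdent)
  have e6 : deriv (fun s =>
      (lam * (F1 (c^2*s^2 - x^2) * (2*c^2*s)) * (2*c*Real.sinh (lam*s))
        - lam * F (c^2*s^2 - x^2) * (2*c*(Real.cosh (lam*s)*lam)))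
        / (2*c*Real.sinh (lam*s))^2) t = _ := hq2.deriv
  -- x direction
  have hUy : ∀ y : ℝ, HasDerivAt (fun z : ℝ => c^2*t^2 - z^2) (-(2*y)) y := by
    intro y
    have h := (hasDerivAt_pow 2 y).const_sub (c^2*t^2)
    refine h.congr_deriv ?_
    push_cast; ring
  have hr1at : ∀ y ∈ {y : ℝ | |y| < c * t}, HasDerivAt (fun z => p z t)
      (lam * (F1 (c^2*t^2 - y^2) * (-(2*y))) / (2*c*Real.sinh (lam*t))) y := by
    intro y hy
    have hN : HasDerivAt (fun z => lam * F (c^2*t^2 - z^2))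
        (lam * (F1 (c^2*t^2 - y^2) * (-(2*y)))) y := by
      simpa [Function.comp] using ((hF (c^2*t^2 - y^2)).comp y (hUy y)).const_mul lam
    have h := hN.div_const (2*c*Real.sinh (lam*t))
    apply h.congr_of_eventuallyEq
    filter_upwards [hTopen.mem_nhds hy] with z hz
    exact hP z t hz
  have hEqx : deriv (fun z => p z t) =ᶠ[nhds x] (fun y =>
      lam * (F1 (c^2*t^2 - y^2) * (-(2*y))) / (2*c*Real.sinh (lam*t))) := by
    filter_upwards [hTopen.mem_nhds hxT] with y hy
    exact (hr1at y hy).deriv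
  have hNx : HasDerivAt (fun y => lam * (F1 (c^2*t^2 - y^2) * (-(2*y))))
      (lam * ((F2 (c^2*t^2 - x^2) * (-(2*x))) * (-(2*x)) + F1 (c^2*t^2 - x^2) * (-2))) x := by
    have h1 : HasDerivAt (fun y => F1 (c^2*t^2 - y^2)) (F2 (c^2*t^2 - x^2) * (-(2*x))) x := by
      exact (hF1 (c^2*t^2 - x^2)).comp x (hUy x)
    have h2 : HasDerivAt (fun y : ℝ => -(2*y)) (-2) x := by
      exact ((hasDerivAt_id x).const_mul 2).neg.congr_deriv (by norm_num)
    exact (h1.mul h2).const_mul lam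
  have hr2 := hNx.div_const (2*c*Real.sinh (lam*t))
  have e8 : deriv (fun y =>
      lam * (F1 (c^2*t^2 - y^2) * (-(2*y))) / (2*c*Real.sinh (lam*t))) x = _ := hr2.deriv
  -- assemble
  have hu0 : (0:ℝ) < c^2*t^2 - x^2 := by
    have h1 : |x| * |x| < (c*t) * (c*t) :=
      mul_lt_mul'' hxt hxt (abs_nonneg x) (abs_nonneg x)
    rw [abs_mul_abs_self] at h1
    nlinarith
  have key := hODE (c^2*t^2 - x^2)
  have hF2eq : F2 (c^2*t^2 - x^2)
      = (a * F (c^2*t^2 - x^2) - F1 (c^2*t^2 - x^2)) / (c^2*t^2 - x^2) := by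
    field_simp
    linarith
  rw [iteratedDeriv_two, iteratedDeriv_two, hEq.deriv_eq, hEqx.deriv_eq, e6, e8,
    hd1 t htS, hF2eq, coth, ha_def]
  push_cast
  field_simp
  ring
end

section
/- Let λ > 0, c > 0 and t > 0. Then ∫_{−ct}^{ct} λ I₀( (λ/c)√(c²t² − x²) ) / (2c sinh(λt)) dx = 1; equivalently, ∫_{−t}^{t} I₀( λ√(t² − y²) ) dy = (2/λ) sinh(λt). Hence x ↦ λ I₀((λ/c)√(c²t²−x²))/(2c sinh(λt)) is a probability density on (−ct, ct), and the process X(t) has a purely absolutely continuous distribution. -/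
open Real MeasureTheory

lemma besselI0_nonneg (z : ℝ) : 0 ≤ besselI0 z := by
  apply tsum_nonneg
  intro k
  apply div_nonneg _ (sq_nonneg _)
  rw [pow_mul]
  positivity

lemma prod_aux (n : ℕ) : (∏ i ∈ Finset.range n, ((2*(i:ℝ)+2)/(2*i+3)))
    = 4^n * (n.factorial:ℝ)^2 / ((2*n+1).factorial) := by
  induction n with
  | zero => simp
  | succ k ih =>
    rw [Finset.prod_range_succ, ih]
    have e1 : 2*(k+1)+1 = ((2*k+1)+1)+1 := by ring
    have h1 : (((2*(k+1)+1).factorial : ℕ) : ℝ)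
        = ((2*k+3 : ℝ)) * ((2*k+2 : ℝ)) * (((2*k+1).factorial : ℕ) : ℝ) := by
      rw [e1, Nat.factorial_succ, Nat.factorial_succ]
      push_cast
      ring
    have h2 : (((k+1).factorial : ℕ) : ℝ) = ((k:ℝ)+1) * ((k.factorial : ℕ) : ℝ) := by
      rw [Nat.factorial_succ]; push_cast; ring
    have hf1 : (((2*k+1).factorial : ℕ) : ℝ) ≠ 0 := Nat.cast_ne_zero.2 (Nat.factorial_ne_zero _)
    have hf2 : ((k.factorial : ℕ) : ℝ) ≠ 0 := Nat.cast_ne_zero.2 (Nat.factorial_ne_zero _)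
    have h3 : (2*(k:ℝ)+3) ≠ 0 := by positivity
    rw [h1, h2]
    push_cast
    field_simp
    ring

lemma int_one (k : ℕ) : ∫ x in (-1:ℝ)..1, (1-x^2)^k
    = 2 * (4^k * (k.factorial:ℝ)^2 / ((2*k+1).factorial)) := by
  have h := intervalIntegral.integral_comp_smul_deriv (a := 0) (b := π)
    (f := Real.cos) (f' := fun x => -Real.sin x) (g := fun u : ℝ => (1-u^2)^k)
    (fun x _ => Real.hasDerivAt_cos x)
    (Continuous.continuousOn (by continuity)) (by continuity)
  have h2 : ∀ x : ℝ, (-Real.sin x) • (((fun u : ℝ => (1-u^2)^k)) ∘ Real.cos) x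
      = -(Real.sin x ^ (2*k+1)) := by
    intro x
    have : (1 : ℝ) - Real.cos x ^ 2 = Real.sin x ^ 2 := by
      have := Real.sin_sq_add_cos_sq x; linarith
    simp only [Function.comp, smul_eq_mul, this]
    rw [← pow_mul]
    ring
  simp only [h2] at h
  rw [intervalIntegral.integral_neg, Real.cos_zero, Real.cos_pi] at h
  rw [intervalIntegral.integral_symm (-1 : ℝ) 1] at h
  have h3 : (∫ x in (0:ℝ)..π, Real.sin x ^ (2*k+1)) = ∫ x in (-1:ℝ)..1, (1-x^2)^k := by
    have := neg_injective h; linarith [this]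
  rw [← h3, integral_sin_pow_odd, prod_aux]

lemma int_t {t : ℝ} (ht : 0 < t) (k : ℕ) : ∫ y in (-t)..t, (t^2-y^2)^k
    = t^(2*k+1) * (2 * (4^k * (k.factorial:ℝ)^2 / ((2*k+1).factorial))) := by
  have h := intervalIntegral.integral_comp_mul_left (a := -1) (b := 1)
    (f := fun y : ℝ => (t^2-y^2)^k) ht.ne'
  rw [mul_neg, mul_one] at h
  have h2 : ∀ x : ℝ, (t^2-(t*x)^2)^k = t^(2*k) * (1-x^2)^k := by
    intro x; rw [pow_mul, ← mul_pow]; ring_nf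
  simp only [h2] at h
  rw [intervalIntegral.integral_const_mul, int_one] at h
  rw [smul_eq_mul] at h
  have h' : (∫ y in (-t)..t, (t^2-y^2)^k) = t * (t^(2*k) * (2 * (4^k * (k.factorial:ℝ)^2 / ((2*k+1).factorial)))) := by
    rw [h]; field_simp
  rw [h']; ring

lemma main_int {lam t : ℝ} (hlam : 0 < lam) (ht : 0 < t) :
    ∫ y in (-t)..t, besselI0 (lam * Real.sqrt (t^2 - y^2)) = (2/lam) * Real.sinh (lam * t) := by
  set F : ℕ → ℝ → ℝ := fun k y => ((lam^2/4)^k / (k.factorial:ℝ)^2) * (t^2-y^2)^k with hF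
  have key : ∀ y ∈ Set.Ioc (-t) t, besselI0 (lam * Real.sqrt (t^2 - y^2)) = ∑' k, F k y := by
    intro y hy
    have hy2 : 0 ≤ t^2 - y^2 := by nlinarith [hy.1, hy.2, sq_nonneg (t - y), sq_nonneg (t + y)]
    unfold besselI0
    congr 1
    funext k
    have hs : Real.sqrt (t^2 - y^2) ^ 2 = t^2 - y^2 := Real.sq_sqrt hy2
    have e : (lam * Real.sqrt (t^2-y^2) / 2)^(2*k) = (lam^2/4)^k * (t^2-y^2)^k := by
      rw [pow_mul, show (lam * Real.sqrt (t^2-y^2) / 2)^2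
          = lam^2/4 * (Real.sqrt (t^2-y^2))^2 by ring, hs, mul_pow]
    rw [hF]
    simp only
    rw [e]
    ring
  have hle : -t ≤ t := by linarith
  rw [intervalIntegral.integral_of_le hle]
  have hint : ∀ k, ∫ y in (-t)..t, F k y
      = ((lam^2/4)^k / (k.factorial:ℝ)^2) * (t^(2*k+1) * (2 * (4^k * (k.factorial:ℝ)^2 / ((2*k+1).factorial)))) := by
    intro k
    rw [hF]
    simp only
    rw [intervalIntegral.integral_const_mul, int_t ht]
  have hval : ∀ k, ((lam^2/4)^k / (k.factorial:ℝ)^2) * (t^(2*k+1) * (2 * (4^k * (k.factorial:ℝ)^2 / ((2*k+1).factorial))))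
      = (2/lam) * ((lam*t)^(2*k+1) / ((2*k+1).factorial)) := by
    intro k
    have hf2 : ((k.factorial : ℕ) : ℝ) ≠ 0 := Nat.cast_ne_zero.2 (Nat.factorial_ne_zero _)
    have hf1 : (((2*k+1).factorial : ℕ) : ℝ) ≠ 0 := Nat.cast_ne_zero.2 (Nat.factorial_ne_zero _)
    have h4 : (4:ℝ)^k ≠ 0 := by positivity
    have e2 : (lam*t)^(2*k+1) = (lam^2)^k * lam * t^(2*k+1) := by
      rw [mul_pow, pow_succ, pow_mul]
    rw [div_pow, e2]
    field_simp
  have hsinh : HasSum (fun k : ℕ => (2/lam) * ((lam*t)^(2*k+1) / ((2*k+1).factorial)))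
      ((2/lam) * Real.sinh (lam*t)) := (Real.hasSum_sinh (lam*t)).mul_left _
  have hFcont : ∀ k, Continuous (F k) := by
    intro k; rw [hF]; fun_prop
  have hFint : ∀ k, Integrable (F k) (volume.restrict (Set.Ioc (-t) t)) := by
    intro k
    exact (hFcont k).integrableOn_Ioc
  have hFnn : ∀ k, ∀ y ∈ Set.Ioc (-t) t, 0 ≤ F k y := by
    intro k y hy
    have hy2 : 0 ≤ t^2 - y^2 := by nlinarith [hy.1, hy.2]
    rw [hF]
    simp only
    have : (0:ℝ) ≤ (lam^2/4)^k := by positivity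
    positivity
  have hnorm : ∀ k, ∫ y in Set.Ioc (-t) t, ‖F k y‖ = ∫ y in Set.Ioc (-t) t, F k y := by
    intro k
    refine setIntegral_congr_fun measurableSet_Ioc (fun y hy => ?_)
    exact Real.norm_of_nonneg (hFnn k y hy)
  have hIoc : ∀ k, ∫ y in Set.Ioc (-t) t, F k y = (2/lam) * ((lam*t)^(2*k+1) / ((2*k+1).factorial)) := by
    intro k
    rw [← intervalIntegral.integral_of_le hle, hint k, hval k]
  have hsum : Summable fun k => ∫ y in Set.Ioc (-t) t, ‖F k y‖ := by
    simp only [hnorm, hIoc]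
    exact hsinh.summable
  have hswap := MeasureTheory.integral_tsum_of_summable_integral_norm hFint hsum
  calc ∫ y in Set.Ioc (-t) t, besselI0 (lam * Real.sqrt (t^2 - y^2))
      = ∫ y in Set.Ioc (-t) t, ∑' k, F k y :=
        setIntegral_congr_fun measurableSet_Ioc key
    _ = ∑' k, ∫ y in Set.Ioc (-t) t, F k y := hswap.symm
    _ = (2/lam) * Real.sinh (lam*t) := by
        simp only [hIoc]; exact hsinh.tsum_eq

theorem telegraph_coth_rate_density_normalization
    (lam c t : ℝ) (hlam : 0 < lam) (hc : 0 < c) (ht : 0 < t) :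
    (∫ x in (-(c*t))..(c*t),
        lam * besselI0 ((lam/c) * Real.sqrt (c^2*t^2 - x^2))
          / (2 * c * Real.sinh (lam * t)) = 1) ∧
    (∫ y in (-t)..t, besselI0 (lam * Real.sqrt (t^2 - y^2))
        = (2/lam) * Real.sinh (lam * t)) ∧
    (∀ x ∈ Set.Ioo (-(c*t)) (c*t),
      0 ≤ lam * besselI0 ((lam/c) * Real.sqrt (c^2*t^2 - x^2))
            / (2 * c * Real.sinh (lam * t))) := by
  have hsh : 0 < Real.sinh (lam * t) := Real.sinh_pos_iff.2 (by positivity)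
  refine ⟨?_, main_int hlam ht, ?_⟩
  · have h0 : ∀ x : ℝ, lam * besselI0 ((lam/c) * Real.sqrt (c^2*t^2 - x^2)) / (2 * c * Real.sinh (lam * t))
        = (lam / (2 * c * Real.sinh (lam * t))) * besselI0 ((lam/c) * Real.sqrt (c^2*t^2 - x^2)) := by
      intro x; ring
    simp only [h0]
    rw [intervalIntegral.integral_const_mul]
    have hsub := intervalIntegral.integral_comp_mul_left (a := -t) (b := t)
      (f := fun x : ℝ => besselI0 ((lam/c) * Real.sqrt (c^2*t^2 - x^2))) hc.ne'
    rw [mul_neg] at hsub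
    have hpt : ∀ y : ℝ, besselI0 ((lam/c) * Real.sqrt (c^2*t^2 - (c*y)^2))
        = besselI0 (lam * Real.sqrt (t^2 - y^2)) := by
      intro y
      congr 1
      have e1 : c^2*t^2 - (c*y)^2 = c^2 * (t^2 - y^2) := by ring
      rw [e1, Real.sqrt_mul (sq_nonneg c), Real.sqrt_sq hc.le]
      field_simp
    simp only [hpt] at hsub
    rw [main_int hlam ht] at hsub
    have : (∫ x in (-(c*t))..(c*t), besselI0 ((lam/c) * Real.sqrt (c^2*t^2 - x^2)))
        = c * ((2/lam) * Real.sinh (lam*t)) := by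
      rw [smul_eq_mul] at hsub
      rw [hsub]
      field_simp
    rw [this]
    field_simp
  · intro x _
    have := besselI0_nonneg ((lam/c) * Real.sqrt (c^2*t^2 - x^2))
    positivity
end

section
/- Let λ > 0, c > 0 and t > 0. Then ∫_{−ct}^{ct} (1/(2c cosh(λt))) · ∂/∂t I₀( (λ/c)√(c²t² − x²) ) dx = 1 − 1/cosh(λt); equivalently, ∫_{−t}^{t} ∂/∂t I₀( λ√(t² − y²) ) dy = 2(cosh(λt) − 1). Hence the absolutely continuous component of the law of Y(t) has total mass 1 − sech(λt), the remaining mass 1/cosh(λt) being carried by the discrete component concentrated at x = ±ct. -/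
open Real MeasureTheory

open intervalIntegral

lemma summable_aux (q : ℝ) (hq : 0 ≤ q) :
    Summable (fun n : ℕ => (n : ℝ) * q ^ n / ((n.factorial : ℝ))^2) := by
  refine Summable.of_nonneg_of_le (fun n => by positivity)
    (fun n => ?_) (Real.summable_pow_div_factorial q)
  have h1 : (n : ℝ) ≤ (n.factorial : ℝ) := by exact_mod_cast Nat.self_le_factorial n
  have h2 : (0:ℝ) < (n.factorial : ℝ) := by positivity
  rw [div_le_div_iff₀ (by positivity) h2]
  calc (n : ℝ) * q ^ n * (n.factorial : ℝ) ≤ (n.factorial : ℝ) * q ^ n * (n.factorial : ℝ) := by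
        gcongr
    _ = q ^ n * (n.factorial : ℝ)^2 := by ring

lemma summable_aux2 (q : ℝ) (hq : 0 ≤ q) :
    Summable (fun n : ℕ => q ^ n / ((n.factorial : ℝ))^2) := by
  refine Summable.of_nonneg_of_le (fun n => by positivity)
    (fun n => ?_) (Real.summable_pow_div_factorial q)
  have h2 : (0:ℝ) < (n.factorial : ℝ) := by positivity
  rw [div_le_div_iff₀ (by positivity) h2]
  have h1 : (1 : ℝ) ≤ (n.factorial : ℝ) := by exact_mod_cast Nat.one_le_iff_ne_zero.mpr n.factorial_ne_zero
  calc q ^ n * (n.factorial : ℝ) ≤ q ^ n * ((n.factorial : ℝ) * (n.factorial : ℝ)) := by gcongr; exact le_mul_of_one_le_left h2.le h1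
    _ = q ^ n * (n.factorial : ℝ)^2 := by ring


set_option maxHeartbeats 1000000 in
lemma deriv_besselI0_sqrt (b c x t : ℝ) (hb : 0 < b) (hc : 0 < c) (ht : 0 < t)
    (hx : x^2 < c^2*t^2) :
    deriv (fun τ => besselI0 (b * Real.sqrt (c^2*τ^2 - x^2))) t
      = ∑' n : ℕ, (b/2)^(2*n) / ((n.factorial : ℝ))^2
          * ((n : ℝ) * (c^2*t^2 - x^2)^(n-1) * (2*c^2*t)) := by
  set R : ℝ := t + 1 with hR
  set M : ℝ := c^2*R^2 + x^2 + 1 with hM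
  have hMdef : (1:ℝ) ≤ M := by rw [hM]; nlinarith
  have hM0 : 0 < M := lt_of_lt_of_le one_pos hMdef
  clear_value R M
  set g : ℕ → ℝ → ℝ := fun n τ => (b/2)^(2*n) / ((n.factorial : ℝ))^2 * (c^2*τ^2 - x^2)^n
    with hg_def
  set g' : ℕ → ℝ → ℝ := fun n τ => (b/2)^(2*n) / ((n.factorial : ℝ))^2
      * ((n : ℝ) * (c^2*τ^2 - x^2)^(n-1) * (2*c^2*τ)) with hg'_def
  have hopen : IsOpen {τ : ℝ | 0 < c^2*τ^2 - x^2} := by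
    have : Continuous fun τ : ℝ => c^2*τ^2 - x^2 := by continuity
    exact isOpen_lt continuous_const this
  have htmem : t ∈ {τ : ℝ | 0 < c^2*τ^2 - x^2} := by
    simp only [Set.mem_setOf_eq]; linarith
  have heq : (fun τ => besselI0 (b * Real.sqrt (c^2*τ^2 - x^2)))
      =ᶠ[nhds t] (fun τ => ∑' n, g n τ) := by
    filter_upwards [hopen.mem_nhds htmem] with τ hτ
    have hτ' : (0:ℝ) < c^2*τ^2 - x^2 := hτ
    simp only [besselI0, hg_def]
    refine tsum_congr fun n => ?_
    have h1 : (b * Real.sqrt (c^2*τ^2 - x^2) / 2)^(2*n)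
        = (b/2)^(2*n) * (c^2*τ^2 - x^2)^n := by
      rw [show b * Real.sqrt (c^2*τ^2 - x^2) / 2 = (b/2) * Real.sqrt (c^2*τ^2 - x^2) by ring,
        mul_pow, pow_mul (Real.sqrt _), Real.sq_sqrt hτ'.le]
    rw [h1]
    ring
  rw [heq.deriv_eq]
  set u : ℕ → ℝ := fun n => 2*c^2*R * ((n:ℝ) * ((b/2)^2*M)^n / ((n.factorial : ℝ))^2) with hu
  have hu_sum : Summable u := (summable_aux _ (by positivity)).mul_left _
  have hderiv : ∀ (n : ℕ) (τ : ℝ), HasDerivAt (g n) (g' n τ) τ := by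
    intro n τ
    have hinner : HasDerivAt (fun τ : ℝ => c^2*τ^2 - x^2) (2*c^2*τ) τ := by
      have h : HasDerivAt (fun τ : ℝ => c^2*τ^2 - x^2) (c^2*(2*τ^1)) τ := by
        simpa using ((hasDerivAt_pow 2 τ).const_mul (c^2)).sub_const (x^2)
      convert h using 1 <;> ring
    have h2 := (hinner.pow n).const_mul ((b/2)^(2*n) / ((n.factorial : ℝ))^2)
    simpa [hg_def, hg'_def] using h2
  have habsM : ∀ τ : ℝ, -R ≤ τ → τ ≤ R → |c^2*τ^2 - x^2| ≤ M := by
    intro τ h1 h2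
    have key : (0:ℝ) ≤ (R - τ) * (R + τ) * c^2 :=
      mul_nonneg (mul_nonneg (by linarith) (by linarith)) (sq_nonneg c)
    rw [abs_le, hM]
    constructor <;> nlinarith [sq_nonneg τ, sq_nonneg x, mul_nonneg (sq_nonneg c) (sq_nonneg τ)]
  have hbound : ∀ (n : ℕ) (τ : ℝ), τ ∈ Set.Ioo (-R) R → ‖g' n τ‖ ≤ u n := by
    intro n τ hτ
    obtain ⟨h1, h2⟩ := Set.mem_Ioo.mp hτ
    have habs : |c^2*τ^2 - x^2| ≤ M := habsM τ h1.le h2.le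
    have hpow : |c^2*τ^2 - x^2|^(n-1) ≤ M^n := by
      calc |c^2*τ^2 - x^2|^(n-1) ≤ M^(n-1) := pow_le_pow_left₀ (abs_nonneg _) habs _
        _ ≤ M^n := pow_le_pow_right₀ hMdef (Nat.sub_le n 1)
    have hτR : |τ| ≤ R := by rw [abs_le]; exact ⟨h1.le, h2.le⟩
    have e1 : ‖g' n τ‖ = (b/2)^(2*n) / ((n.factorial : ℝ))^2
        * ((n : ℝ) * |c^2*τ^2 - x^2|^(n-1) * (2*c^2*|τ|)) := by
      simp only [hg'_def, Real.norm_eq_abs]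
      rw [abs_mul, abs_mul, abs_mul, abs_pow,
        abs_of_nonneg (show (0:ℝ) ≤ (b/2)^(2*n) / ((n.factorial : ℝ))^2 by positivity),
        Nat.abs_cast,
        show |2*c^2*τ| = 2*c^2*|τ| by rw [abs_mul, abs_of_nonneg (show (0:ℝ) ≤ 2*c^2 by positivity)]]
    rw [e1]
    calc (b/2)^(2*n) / ((n.factorial : ℝ))^2 * ((n : ℝ) * |c^2*τ^2 - x^2|^(n-1) * (2*c^2*|τ|))
        ≤ (b/2)^(2*n) / ((n.factorial : ℝ))^2 * ((n : ℝ) * M^n * (2*c^2*R)) := by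
          gcongr
      _ = u n := by simp only [hu, pow_mul, mul_pow]; ring
  have hg0 : Summable fun n => g n t := by
    refine Summable.of_norm ?_
    refine Summable.of_nonneg_of_le (fun n => norm_nonneg _) (fun n => ?_)
      (summable_aux2 ((b/2)^2*M) (by positivity))
    have habs : |c^2*t^2 - x^2| ≤ M := habsM t (by rw [hR]; linarith) (by rw [hR]; linarith)
    have e1 : ‖g n t‖ = (b/2)^(2*n) / ((n.factorial : ℝ))^2 * |c^2*t^2 - x^2|^n := by
      simp only [hg_def, Real.norm_eq_abs]
      rw [abs_mul, abs_pow,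
        abs_of_nonneg (show (0:ℝ) ≤ (b/2)^(2*n) / ((n.factorial : ℝ))^2 by positivity)]
    rw [e1]
    calc (b/2)^(2*n) / ((n.factorial : ℝ))^2 * |c^2*t^2 - x^2|^n
        ≤ (b/2)^(2*n) / ((n.factorial : ℝ))^2 * M^n := by
          gcongr
      _ = ((b/2)^2*M)^n / ((n.factorial : ℝ))^2 := by simp only [pow_mul, mul_pow]; ring
  have hT : t ∈ Set.Ioo (-R) R := by
    simp only [Set.mem_Ioo, hR]
    constructor <;> linarith
  exact (hasDerivAt_tsum_of_isPreconnected hu_sum isOpen_Ioo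
    (convex_Ioo _ _).isPreconnected (fun n y _ => hderiv n y)
    (fun n y hy => hbound n y hy) hT hg0 hT).deriv


lemma prod_id (k : ℕ) : (∏ i ∈ Finset.range k, ((2*(i:ℝ)+2)/(2*i+3)))
    = 4^k * ((k.factorial : ℝ))^2 / (((2*k+1).factorial : ℝ)) := by
  induction k with
  | zero => norm_num
  | succ k ih =>
    rw [Finset.prod_range_succ, ih]
    have h1 : ((2*(k+1)+1).factorial : ℝ) = (2*k+3) * ((2*k+2)) * ((2*k+1).factorial : ℝ) := by
      have : 2*(k+1)+1 = (2*k+2)+1 := by ring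
      rw [this, Nat.factorial_succ, Nat.factorial_succ]
      push_cast
      ring
    have h2 : (((k+1).factorial : ℝ)) = (k+1) * (k.factorial : ℝ) := by
      rw [Nat.factorial_succ]; push_cast; ring
    rw [h1, h2]
    have hf1 : ((2*k+1).factorial : ℝ) ≠ 0 := by positivity
    have hf2 : (2*(k:ℝ)+3) ≠ 0 := by positivity
    field_simp
    ring


lemma integral_pow_quad (a : ℝ) (k : ℕ) :
    ∫ x in (-a)..a, (a^2 - x^2)^k
      = a^(2*k+1) * (2 * (4^k * ((k.factorial : ℝ))^2 / (((2*k+1).factorial : ℝ)))) := by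
  have hderiv : ∀ θ ∈ Set.uIcc (0:ℝ) π,
      HasDerivAt (fun θ => -a * Real.cos θ) (a * Real.sin θ) θ := by
    intro θ _
    have h := (Real.hasDerivAt_cos θ).const_mul (-a)
    rw [show a * Real.sin θ = -a * -Real.sin θ by ring]
    exact h
  have h := intervalIntegral.integral_comp_smul_deriv hderiv
    (by fun_prop) (show Continuous fun x : ℝ => (a^2 - x^2)^k by fun_prop)
  have h0 : -a * Real.cos 0 = -a := by simp
  have hπ : -a * Real.cos π = a := by simp
  rw [h0, hπ] at h
  rw [← h]
  have e : ∀ θ : ℝ, (a * Real.sin θ) • (((fun x => (a^2 - x^2)^k) ∘ (fun θ => -a * Real.cos θ)) θ)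
      = a^(2*k+1) * (Real.sin θ)^(2*k+1) := by
    intro θ
    simp only [Function.comp_apply, smul_eq_mul]
    have h2 : a^2 - (-a*Real.cos θ)^2 = a^2 * Real.sin θ^2 := by
      have h3 := Real.sin_sq_add_cos_sq θ
      nlinarith [h3]
    rw [h2, mul_pow, ← pow_mul]
    ring
  rw [intervalIntegral.integral_congr (g := fun θ => a^(2*k+1) * (Real.sin θ)^(2*k+1))
    (fun θ _ => e θ)]
  rw [intervalIntegral.integral_const_mul, integral_sin_pow_odd, prod_id]


lemma coeff_id (b c t : ℝ) (k : ℕ) :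
    (b/2)^(2*(k+1))/((((k+1).factorial : ℝ)))^2 * ((((k+1):ℕ):ℝ) * (2*c^2*t))
      * ((c*t)^(2*k+1) * (2*(4^k * ((k.factorial : ℝ))^2/(((2*k+1).factorial : ℝ)))))
    = 2*c*((b*c*t)^(2*(k+1))/(((2*(k+1)).factorial : ℝ))) := by
  have h1 : ((2*(k+1)).factorial : ℝ) = (2*(k:ℝ)+2)*(((2*k+1).factorial : ℝ)) := by
    have : 2*(k+1) = (2*k+1)+1 := by ring
    rw [this, Nat.factorial_succ]
    push_cast
    ring
  have h2 : (((k+1).factorial : ℝ)) = ((k:ℝ)+1) * ((k.factorial : ℝ)) := by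
    rw [Nat.factorial_succ]; push_cast; ring
  have hf1 : ((2*k+1).factorial : ℝ) ≠ 0 := by positivity
  have hf2 : ((k.factorial : ℝ)) ≠ 0 := by positivity
  have hk1 : ((k:ℝ)+1) ≠ 0 := by positivity
  have hk2 : (2*(k:ℝ)+2) ≠ 0 := by positivity
  rw [h1, h2]
  push_cast
  rw [show (4:ℝ) = 2^2 by norm_num, ← pow_mul]
  field_simp
  have hh : (1/2:ℝ)^(k*2) * 2^(k*2) = 1 := by rw [← mul_pow]; norm_num
  ring_nf
  rw [mul_assoc, hh, mul_one]


set_option maxHeartbeats 1000000 in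
lemma main_integral (b c t : ℝ) (hb : 0 < b) (hc : 0 < c) (ht : 0 < t) :
    ∫ x in (-(c*t))..(c*t), deriv (fun τ => besselI0 (b * Real.sqrt (c^2*τ^2 - x^2))) t
      = 2*c*(Real.cosh (b*c*t) - 1) := by
  have ha : 0 < c*t := mul_pos hc ht
  have ha2 : (c*t)^2 = c^2*t^2 := by ring
  set a : ℝ := c*t with haa
  set F : ℕ → ℝ → ℝ := fun n x => (b/2)^(2*n) / ((n.factorial : ℝ))^2
      * ((n : ℝ) * (a^2 - x^2)^(n-1) * (2*c^2*t)) with hF_def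
  set r : ℝ := b*c*t with hr
  set W : ℕ → ℝ := fun n => if n = 0 then 0 else
      2*c*(r^(2*n)/(((2*n).factorial : ℝ))) with hW_def
  have hrpos : 0 < r := by rw [hr]; positivity
  have hW_nonneg : ∀ n, 0 ≤ W n := by
    intro n
    simp only [hW_def]
    split
    · exact le_refl 0
    · positivity
  -- pointwise identification of the integrand
  have hcongr : ∀ x : ℝ, x ∈ Set.Ioo (-a) a →
      deriv (fun τ => besselI0 (b * Real.sqrt (c^2*τ^2 - x^2))) t = ∑' n, F n x := by
    intro x hx
    obtain ⟨h1, h2⟩ := hx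
    have hx2 : x^2 < c^2*t^2 := by
      rw [← ha2]
      nlinarith [mul_pos (show (0:ℝ) < a - x by linarith) (show (0:ℝ) < a + x by linarith)]
    rw [deriv_besselI0_sqrt b c x t hb hc ht hx2]
    refine tsum_congr fun n => ?_
    simp only [hF_def]
    rw [← ha2]
  have hle : -a ≤ a := by linarith
  have step1 : (∫ x in (-a)..a, deriv (fun τ => besselI0 (b * Real.sqrt (c^2*τ^2 - x^2))) t)
      = ∫ x in (-a)..a, (∑' n, F n x) := by
    apply intervalIntegral.integral_congr_ae
    have hane : ∀ᵐ x : ℝ, x ≠ a := by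
      rw [MeasureTheory.ae_iff]
      simp only [not_not]
      rw [Set.setOf_eq_eq_singleton]
      exact Real.volume_singleton
    filter_upwards [hane] with x hxa hmem
    rw [Set.uIoc_of_le hle, Set.mem_Ioc] at hmem
    exact hcongr x ⟨hmem.1, lt_of_le_of_ne hmem.2 hxa⟩
  have hFcont : ∀ n, Continuous (F n) := by
    intro n
    simp only [hF_def]
    fun_prop
  have hFint : ∀ n : ℕ, IntegrableOn (F n) (Set.Ioc (-a) a) := fun n =>
    (hFcont n).integrableOn_Ioc
  have hFnonneg : ∀ n, ∀ x ∈ Set.Ioc (-a) a, 0 ≤ F n x := by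
    intro n x hx
    obtain ⟨h1, h2⟩ := hx
    have hxx : 0 ≤ a^2 - x^2 := by nlinarith
    simp only [hF_def]
    positivity
  have hVal : ∀ n : ℕ, (∫ x in Set.Ioc (-a) a, F n x) = W n := by
    intro n
    rw [← intervalIntegral.integral_of_le hle]
    cases n with
    | zero =>
      simp [hF_def, hW_def]
    | succ k =>
      have e : ∀ x : ℝ, F (k+1) x
          = ((b/2)^(2*(k+1)) / (((k+1).factorial : ℝ))^2 * ((((k+1):ℕ):ℝ) * (2*c^2*t)))
            * (a^2 - x^2)^k := by
        intro x
        simp only [hF_def, Nat.add_sub_cancel]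
        push_cast
        ring
      rw [intervalIntegral.integral_congr (g :=
        fun x => ((b/2)^(2*(k+1)) / (((k+1).factorial : ℝ))^2 * ((((k+1):ℕ):ℝ) * (2*c^2*t)))
            * (a^2 - x^2)^k) (fun x _ => e x)]
      rw [intervalIntegral.integral_const_mul, integral_pow_quad]
      simp only [hW_def]
      rw [if_neg (Nat.succ_ne_zero k)]
      rw [haa, hr] at *
      exact coeff_id b c t k
  have hcosh := Real.hasSum_cosh r
  have hWsum : Summable W := by
    refine Summable.of_nonneg_of_le hW_nonneg (fun n => ?_) (hcosh.summable.mul_left (2*c))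
    simp only [hW_def]
    split
    · positivity
    · exact le_refl _
  have hnormint : ∀ n, (∫ x in Set.Ioc (-a) a, ‖F n x‖) = W n := by
    intro n
    rw [← hVal n]
    exact setIntegral_congr_fun measurableSet_Ioc
      (fun x hx => Real.norm_of_nonneg (hFnonneg n x hx))
  have hsum2 : Summable (fun n => ∫ x in Set.Ioc (-a) a, ‖F n x‖) := by
    simp only [hnormint]
    exact hWsum
  have step2 : (∫ x in (-a)..a, (∑' n, F n x)) = ∑' n, W n := by
    rw [intervalIntegral.integral_of_le hle]
    rw [← MeasureTheory.integral_tsum_of_summable_integral_norm (fun n => hFint n) hsum2]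
    exact tsum_congr hVal
  have hsum3 : (∑' n, W n) = 2*c*(Real.cosh r - 1) := by
    rw [Summable.tsum_eq_zero_add hWsum]
    have hW0 : W 0 = 0 := by simp [hW_def]
    rw [hW0, zero_add]
    have hc2 := Summable.tsum_eq_zero_add hcosh.summable
    rw [hcosh.tsum_eq] at hc2
    norm_num at hc2
    calc (∑' k, W (k+1))
        = ∑' k, 2*c*(r^(2*(k+1))/(((2*(k+1)).factorial : ℝ))) := by
          refine tsum_congr fun k => ?_
          simp [hW_def]
      _ = 2*c* ∑' k, (r^(2*(k+1))/(((2*(k+1)).factorial : ℝ))) := tsum_mul_left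
      _ = 2*c*(Real.cosh r - 1) := by
          rw [show (∑' k, (r^(2*(k+1))/(((2*(k+1)).factorial : ℝ)))) = Real.cosh r - 1 by
            linarith [hc2]]
  rw [step1, step2, hsum3]


theorem telegraph_tanh_rate_ac_mass
    (lam c t : ℝ) (hlam : 0 < lam) (hc : 0 < c) (ht : 0 < t) :
    (∫ x in (-(c*t))..(c*t),
        (1 / (2 * c * Real.cosh (lam * t))) *
          deriv (fun τ => besselI0 ((lam/c) * Real.sqrt (c^2*τ^2 - x^2))) t
        = 1 - 1 / Real.cosh (lam * t)) ∧
    (∫ y in (-t)..t, deriv (fun τ => besselI0 (lam * Real.sqrt (τ^2 - y^2))) t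
        = 2 * (Real.cosh (lam * t) - 1)) := by
  have hcosh : 0 < Real.cosh (lam * t) := Real.cosh_pos _
  constructor
  · rw [intervalIntegral.integral_const_mul]
    have h := main_integral (lam/c) c t (by positivity) hc ht
    rw [show lam/c*c*t = lam*t by field_simp] at h
    rw [h]
    field_simp
  · have h := main_integral lam 1 t hlam one_pos ht
    have e : ∀ y : ℝ, (fun τ => besselI0 (lam * Real.sqrt (1^2*τ^2 - y^2)))
        = (fun τ => besselI0 (lam * Real.sqrt (τ^2 - y^2))) := by
      intro y; funext τ; norm_num
    simp only [one_mul, e] at h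
    rw [h]
    ring
end

section
/- Let λ > 0, let c : ℝ → (0,∞) be continuous, and let Φ_c(x) = ∫₀^x dw/c(w). Then the function q(x,t) = λ I₀( λ√(t² − Φ_c(x)²) ) / (2 sinh(λt)) satisfies the non-homogeneous telegraph equation with space-varying velocity ∂²q/∂t² + 2λ coth(λt) ∂q/∂t = c(x) ∂/∂x( c(x) ∂q/∂x ) for all (x,t) with t > 0 and |Φ_c(x)| < t. -/
set_option maxHeartbeats 2000000

open Real MeasureTheory

namespace TelegraphAux

noncomputable def ak (b : ℝ) (k : ℕ) : ℝ := b ^ k / ((k.factorial : ℝ))^2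
noncomputable def G0 (b u : ℝ) : ℝ := ∑' k : ℕ, ak b k * u ^ k
noncomputable def G1 (b u : ℝ) : ℝ := ∑' k : ℕ, ((k:ℝ)+1) * ak b (k+1) * u ^ k
noncomputable def G2 (b u : ℝ) : ℝ :=
  ∑' k : ℕ, ((k:ℝ)+1) * ((k:ℝ)+2) * ak b (k+2) * u ^ k

lemma fact_ge_one (k : ℕ) : (1:ℝ) ≤ (k.factorial : ℝ) := by
  exact_mod_cast Nat.one_le_iff_ne_zero.mpr k.factorial_ne_zero

lemma fact_pos (k : ℕ) : (0:ℝ) < (k.factorial : ℝ) := by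
  exact_mod_cast k.factorial_pos

lemma B0 (b R y : ℝ) (hy : |y| ≤ R) (k : ℕ) :
    ‖ak b k * y ^ k‖ ≤ (|b| * R) ^ k / (k.factorial : ℝ) := by
  have hF := fact_ge_one k
  have hFp := fact_pos k
  have h1 : ‖ak b k * y ^ k‖ = (|b| ^ k * |y| ^ k) / ((k.factorial : ℝ))^2 := by
    rw [Real.norm_eq_abs, abs_mul, abs_pow]
    unfold ak
    rw [abs_div, abs_pow, abs_of_pos (by positivity : (0:ℝ) < ((k.factorial : ℝ))^2)]
    ring
  rw [h1, mul_pow]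
  have h2 : (k.factorial:ℝ) ≤ ((k.factorial:ℝ))^2 := by nlinarith
  have hR : 0 ≤ R := (abs_nonneg y).trans hy
  have hyk : |y| ^ k ≤ R ^ k := pow_le_pow_left₀ (abs_nonneg y) hy k
  exact div_le_div₀ (by positivity) (by gcongr) hFp h2

lemma B1 (b R y : ℝ) (hy : |y| ≤ R) (k : ℕ) :
    ‖((k:ℝ)+1) * ak b (k+1) * y ^ k‖ ≤ |b| * ((|b| * R) ^ k / (k.factorial : ℝ)) := by
  have hF := fact_ge_one k
  have hFp := fact_pos k
  have hR : 0 ≤ R := (abs_nonneg y).trans hy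
  have h1 : ‖((k:ℝ)+1) * ak b (k+1) * y ^ k‖
      = ((k:ℝ)+1) * (|b| ^ (k+1) / (((k+1).factorial : ℝ))^2) * |y| ^ k := by
    rw [Real.norm_eq_abs, abs_mul, abs_mul, abs_pow,
      abs_of_nonneg (by positivity : (0:ℝ) ≤ (k:ℝ)+1)]
    unfold ak
    rw [abs_div, abs_pow,
      abs_of_pos (by positivity : (0:ℝ) < (((k+1).factorial : ℝ))^2)]
  rw [h1]
  have hfs : ((k+1).factorial : ℝ) = ((k:ℝ)+1) * (k.factorial : ℝ) := by
    rw [Nat.factorial_succ]; push_cast; ring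
  have e2 : ((k:ℝ)+1) * (|b| ^ (k+1) / (((k+1).factorial : ℝ))^2) * |y| ^ k
      = |b| * (|b| ^ k * (|y| ^ k / (((k:ℝ)+1) * ((k.factorial : ℝ))^2))) := by
    rw [hfs, pow_succ]
    field_simp
  rw [e2]
  have h3 : |b| * (|b| ^ k * (|y| ^ k / (((k:ℝ)+1) * ((k.factorial : ℝ))^2)))
      ≤ |b| * (|b| ^ k * (R ^ k / (k.factorial : ℝ))) := by
    have hk0 : (0:ℝ) ≤ (k:ℝ) := Nat.cast_nonneg k
    have h2 : (k.factorial:ℝ) ≤ ((k.factorial:ℝ))^2 := by nlinarith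
    gcongr
    nlinarith [h2, mul_nonneg hk0 (sq_nonneg ((k.factorial:ℝ))),
      mul_nonneg (mul_nonneg hk0 hk0) (sq_nonneg ((k.factorial:ℝ)))]
  calc _ ≤ |b| * (|b| ^ k * (R ^ k / (k.factorial : ℝ))) := h3
    _ = |b| * ((|b| * R) ^ k / (k.factorial : ℝ)) := by rw [mul_pow]; ring

lemma B2 (b R y : ℝ) (hy : |y| ≤ R) (k : ℕ) :
    ‖((k:ℝ)+1) * ((k:ℝ)+2) * ak b (k+2) * y ^ k‖
      ≤ |b|^2 * ((|b| * R) ^ k / (k.factorial : ℝ)) := by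
  have hF := fact_ge_one k
  have hFp := fact_pos k
  have hR : 0 ≤ R := (abs_nonneg y).trans hy
  have h1 : ‖((k:ℝ)+1) * ((k:ℝ)+2) * ak b (k+2) * y ^ k‖
      = ((k:ℝ)+1) * ((k:ℝ)+2) * (|b| ^ (k+2) / (((k+2).factorial : ℝ))^2) * |y| ^ k := by
    rw [Real.norm_eq_abs, abs_mul, abs_mul, abs_mul, abs_pow,
      abs_of_nonneg (by positivity : (0:ℝ) ≤ (k:ℝ)+1),
      abs_of_nonneg (by positivity : (0:ℝ) ≤ (k:ℝ)+2)]
    unfold ak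
    rw [abs_div, abs_pow,
      abs_of_pos (by positivity : (0:ℝ) < (((k+2).factorial : ℝ))^2)]
  rw [h1]
  have hfs : ((k+2).factorial : ℝ) = ((k:ℝ)+2) * (((k:ℝ)+1) * (k.factorial : ℝ)) := by
    show ((k+1+1).factorial : ℝ) = _
    rw [Nat.factorial_succ, Nat.factorial_succ]; push_cast; ring
  have e2 : ((k:ℝ)+1) * ((k:ℝ)+2) * (|b| ^ (k+2) / (((k+2).factorial : ℝ))^2) * |y| ^ k
      = |b|^2 * (|b| ^ k * (|y| ^ k / (((k:ℝ)+1) * ((k:ℝ)+2) * ((k.factorial : ℝ))^2))) := by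
    rw [hfs]
    have : |b| ^ (k+2) = |b|^2 * |b|^k := by ring
    rw [this]
    field_simp
  rw [e2]
  have h3 : |b|^2 * (|b| ^ k * (|y| ^ k / (((k:ℝ)+1) * ((k:ℝ)+2) * ((k.factorial : ℝ))^2)))
      ≤ |b|^2 * (|b| ^ k * (R ^ k / (k.factorial : ℝ))) := by
    have hk0 : (0:ℝ) ≤ (k:ℝ) := Nat.cast_nonneg k
    have h2 : (k.factorial:ℝ) ≤ ((k.factorial:ℝ))^2 := by nlinarith
    gcongr
    nlinarith [h2, mul_nonneg hk0 (sq_nonneg ((k.factorial:ℝ))),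
      mul_nonneg (mul_nonneg hk0 hk0) (sq_nonneg ((k.factorial:ℝ)))]
  calc _ ≤ |b|^2 * (|b| ^ k * (R ^ k / (k.factorial : ℝ))) := h3
    _ = |b|^2 * ((|b| * R) ^ k / (k.factorial : ℝ)) := by rw [mul_pow]; ring

lemma summable_base (x : ℝ) (C : ℝ) :
    Summable (fun k : ℕ => C * (x ^ k / (k.factorial : ℝ))) :=
  (Real.summable_pow_div_factorial x).mul_left C

lemma summable_G0 (b u : ℝ) : Summable (fun k : ℕ => ak b k * u ^ k) :=
  Summable.of_norm_bounded (by simpa using summable_base (|b| * |u|) 1)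
    (fun k => by simpa using B0 b |u| u le_rfl k)

lemma summable_G1 (b u : ℝ) :
    Summable (fun k : ℕ => ((k:ℝ)+1) * ak b (k+1) * u ^ k) :=
  Summable.of_norm_bounded (summable_base (|b| * |u|) |b|)
    (fun k => B1 b |u| u le_rfl k)

lemma summable_G2 (b u : ℝ) :
    Summable (fun k : ℕ => ((k:ℝ)+1) * ((k:ℝ)+2) * ak b (k+2) * u ^ k) :=
  Summable.of_norm_bounded (summable_base (|b| * |u|) (|b|^2))
    (fun k => B2 b |u| u le_rfl k)

lemma hasDerivAt_G0 (b u : ℝ) : HasDerivAt (fun v => G0 b v) (G1 b u) u := by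
  set R := |u| + 1 with hRdef
  have hmem : u ∈ Metric.ball (0:ℝ) R := by
    simp only [Metric.mem_ball, Real.dist_eq, sub_zero, hRdef]; linarith
  have hub : Summable (fun k : ℕ => |b| * ((|b| * R) ^ (k-1) / (((k-1).factorial : ℝ)))) := by
    apply (summable_nat_add_iff 1).1
    simpa using summable_base (|b| * R) |b|
  have hg : ∀ (k : ℕ) (y : ℝ), y ∈ Metric.ball (0:ℝ) R →
      HasDerivAt (fun z => ak b k * z ^ k) (ak b k * ((k:ℝ) * y ^ (k-1))) y :=
    fun k y _ => (hasDerivAt_pow k y).const_mul (ak b k)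
  have hg' : ∀ (k : ℕ) (y : ℝ), y ∈ Metric.ball (0:ℝ) R →
      ‖ak b k * ((k:ℝ) * y ^ (k-1))‖ ≤ |b| * ((|b| * R) ^ (k-1) / (((k-1).factorial : ℝ))) := by
    intro k y hy
    have hyR : |y| ≤ R := by
      simp only [Metric.mem_ball, Real.dist_eq, sub_zero] at hy; linarith
    match k with
    | 0 => simp <;> positivity
    | (k+1) =>
      have h1 : ak b (k+1) * (((k+1:ℕ):ℝ) * y ^ (k+1-1)) = ((k:ℝ)+1) * ak b (k+1) * y ^ k := by
        push_cast; ring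
      rw [h1]
      simpa using B1 b R y hyR k
  have key := hasDerivAt_tsum_of_isPreconnected hub Metric.isOpen_ball
    (convex_ball (0:ℝ) R).isPreconnected hg hg' hmem (summable_G0 b u) hmem
  have hsum' : Summable (fun k : ℕ => ak b k * ((k:ℝ) * u ^ (k-1))) :=
    Summable.of_norm_bounded hub (fun k => hg' k u hmem)
  have hval : ∑' k : ℕ, ak b k * ((k:ℝ) * u ^ (k-1)) = G1 b u := by
    rw [Summable.tsum_eq_zero_add hsum']
    simp only [Nat.cast_zero, zero_mul, mul_zero, zero_add]
    exact tsum_congr fun k => by push_cast; ring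
  simp only [G0]
  rw [← hval]
  exact key

lemma hasDerivAt_G1 (b u : ℝ) : HasDerivAt (fun v => G1 b v) (G2 b u) u := by
  set R := |u| + 1 with hRdef
  have hmem : u ∈ Metric.ball (0:ℝ) R := by
    simp only [Metric.mem_ball, Real.dist_eq, sub_zero, hRdef]; linarith
  have hub : Summable (fun k : ℕ => |b|^2 * ((|b| * R) ^ (k-1) / (((k-1).factorial : ℝ)))) := by
    apply (summable_nat_add_iff 1).1
    refine (summable_base (|b| * R) (|b|^2)).congr fun n => ?_
    simp only [Nat.add_sub_cancel]
  have hg : ∀ (k : ℕ) (y : ℝ), y ∈ Metric.ball (0:ℝ) R →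
      HasDerivAt (fun z => ((k:ℝ)+1) * ak b (k+1) * z ^ k)
        (((k:ℝ)+1) * ak b (k+1) * ((k:ℝ) * y ^ (k-1))) y :=
    fun k y _ => (hasDerivAt_pow k y).const_mul (((k:ℝ)+1) * ak b (k+1))
  have hg' : ∀ (k : ℕ) (y : ℝ), y ∈ Metric.ball (0:ℝ) R →
      ‖((k:ℝ)+1) * ak b (k+1) * ((k:ℝ) * y ^ (k-1))‖
        ≤ |b|^2 * ((|b| * R) ^ (k-1) / (((k-1).factorial : ℝ))) := by
    intro k y hy
    have hyR : |y| ≤ R := by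
      simp only [Metric.mem_ball, Real.dist_eq, sub_zero] at hy; linarith
    match k with
    | 0 => simp <;> positivity
    | (k+1) =>
      have h1 : (((k+1:ℕ):ℝ)+1) * ak b (k+1+1) * (((k+1:ℕ):ℝ) * y ^ (k+1-1))
          = ((k:ℝ)+1) * ((k:ℝ)+2) * ak b (k+2) * y ^ k := by
        have hidx : ak b (k+1+1) = ak b (k+2) := rfl
        rw [hidx]; push_cast; ring
      rw [h1]
      simpa using B2 b R y hyR k
  have key := hasDerivAt_tsum_of_isPreconnected hub Metric.isOpen_ball
    (convex_ball (0:ℝ) R).isPreconnected hg hg' hmem (summable_G1 b u) hmem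
  have hsum' : Summable (fun k : ℕ => ((k:ℝ)+1) * ak b (k+1) * ((k:ℝ) * u ^ (k-1))) :=
    Summable.of_norm_bounded hub (fun k => hg' k u hmem)
  have hval : ∑' k : ℕ, ((k:ℝ)+1) * ak b (k+1) * ((k:ℝ) * u ^ (k-1)) = G2 b u := by
    rw [Summable.tsum_eq_zero_add hsum']
    simp only [Nat.cast_zero, zero_mul, mul_zero, zero_add]
    refine tsum_congr fun k => ?_
    have hidx : ak b (k+1+1) = ak b (k+2) := rfl
    rw [hidx]; push_cast; ring
  simp only [G1]
  rw [← hval]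
  exact key

lemma ode_G (b u : ℝ) : 4*u*G2 b u + 4*G1 b u = 4*b*G0 b u := by
  have hstep : ∀ k : ℕ, ((k:ℝ)+1)^2 * ak b (k+1) = b * ak b k := by
    intro k
    unfold ak
    rw [Nat.factorial_succ]
    have h1 : ((k.factorial:ℝ)) ≠ 0 := ne_of_gt (fact_pos k)
    have h2 : ((k:ℝ)+1) ≠ 0 := by positivity
    push_cast
    field_simp
    ring
  have hd : Summable (fun k : ℕ => 4*(k:ℝ)*((k:ℝ)+1)*ak b (k+1)*u^k) := by
    apply (summable_nat_add_iff 1).1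
    refine ((summable_G2 b u).mul_left (4*u)).congr fun n => ?_
    have hidx : ak b (n+1+1) = ak b (n+2) := rfl
    push_cast [hidx]; ring
  have hsum3 : Summable (fun k : ℕ => 4*((k:ℝ)+1)*ak b (k+1)*u^k) :=
    ((summable_G1 b u).mul_left 4).congr fun n => by ring
  have e1 : ∑' k : ℕ, 4*(k:ℝ)*((k:ℝ)+1)*ak b (k+1)*u^k = 4*u*G2 b u := by
    rw [Summable.tsum_eq_zero_add hd]
    simp only [Nat.cast_zero, zero_mul, mul_zero, zero_add, G2]
    rw [← tsum_mul_left]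
    refine tsum_congr fun k => ?_
    have hidx : ak b (k+1+1) = ak b (k+2) := rfl
    push_cast [hidx]
    ring
  have e3 : 4*G1 b u = ∑' k : ℕ, 4*((k:ℝ)+1)*ak b (k+1)*u^k := by
    simp only [G1]
    rw [← tsum_mul_left]
    exact tsum_congr fun k => by ring
  have e4 : 4*b*G0 b u = ∑' k : ℕ, 4*b*ak b k*u^k := by
    simp only [G0]
    rw [← tsum_mul_left]
    exact tsum_congr fun k => by ring
  rw [← e1, e3, e4, ← Summable.tsum_add hd hsum3]
  refine tsum_congr fun k => ?_
  linear_combination (4*u^k) * hstep k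



lemma besselI0_eq_G0 (lam u : ℝ) (hu : 0 ≤ u) :
    besselI0 (lam * Real.sqrt u) = G0 (lam^2/4) u := by
  unfold besselI0 G0 ak
  refine tsum_congr fun k => ?_
  have h2 : (lam * Real.sqrt u / 2)^2 = lam^2/4 * u := by
    rw [div_pow, mul_pow, Real.sq_sqrt hu]; ring
  have h1 : (lam * Real.sqrt u / 2)^(2*k) = (lam^2/4)^k * u^k := by
    rw [pow_mul, h2, mul_pow]
  rw [h1]; ring

end TelegraphAux

open TelegraphAux in
theorem telegraph_coth_rate_space_varying_velocity
    (lam : ℝ) (hlam : 0 < lam)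
    (c : ℝ → ℝ) (hc : Continuous c) (hcpos : ∀ x, 0 < c x)
    (q : ℝ → ℝ → ℝ)
    (hq : ∀ x, ∀ t : ℝ,
      q x t = lam * besselI0 (lam * Real.sqrt (t^2 - (Phi c x)^2))
        / (2 * Real.sinh (lam * t))) :
    ∀ x t : ℝ, 0 < t → |Phi c x| < t →
      iteratedDeriv 2 (fun s => q x s) t
        + 2 * lam * coth (lam * t) * deriv (fun s => q x s) t
        = c x * deriv (fun y => c y * deriv (fun z => q z t) y) x := by
  intro x t ht hPhi
  have hu : 0 < t^2 - (Phi c x)^2 := by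
    nlinarith [sq_abs (Phi c x), abs_nonneg (Phi c x)]
  have hsh_pos : 0 < Real.sinh (lam*t) := Real.sinh_pos_iff.2 (mul_pos hlam ht)
  have hsh : Real.sinh (lam*t) ≠ 0 := ne_of_gt hsh_pos
  have hcinv : Continuous fun w => (c w)⁻¹ := hc.inv₀ fun w => (hcpos w).ne'
  have hPhiD : ∀ y, HasDerivAt (Phi c) (c y)⁻¹ y := fun y =>
    (hcinv.integral_hasStrictDerivAt 0 y).hasDerivAt
  have hPhiC : Continuous (Phi c) := by
    rw [continuous_iff_continuousAt]; exact fun y => (hPhiD y).continuousAt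
  have hG0' := TelegraphAux.hasDerivAt_G0 (lam^2/4)
  have hG1' := TelegraphAux.hasDerivAt_G1 (lam^2/4)
  -- time-direction auxiliary functions
  set Fq : ℝ → ℝ := fun s =>
    (lam/2) * (G0 (lam^2/4) (s^2 - (Phi c x)^2) * (Real.sinh (lam*s))⁻¹) with hFqdef
  set Fq1 : ℝ → ℝ := fun s =>
    (lam/2) * (G1 (lam^2/4) (s^2 - (Phi c x)^2) * (2*s) * (Real.sinh (lam*s))⁻¹
      + G0 (lam^2/4) (s^2 - (Phi c x)^2)
          * (-(Real.cosh (lam*s) * lam) / (Real.sinh (lam*s))^2)) with hFq1def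
  have hopen_t : IsOpen {s : ℝ | 0 < s ∧ 0 < s^2 - (Phi c x)^2} := by
    have : {s : ℝ | 0 < s ∧ 0 < s^2 - (Phi c x)^2}
        = {s : ℝ | 0 < s} ∩ {s : ℝ | 0 < s^2 - (Phi c x)^2} := rfl
    rw [this]
    exact (isOpen_lt continuous_const continuous_id).inter
      (isOpen_lt continuous_const (by continuity))
  have hmem_t : t ∈ {s : ℝ | 0 < s ∧ 0 < s^2 - (Phi c x)^2} := ⟨ht, hu⟩
  have hev_at : ∀ s ∈ {s : ℝ | 0 < s ∧ 0 < s^2 - (Phi c x)^2},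
      (fun s' => q x s') =ᶠ[nhds s] Fq := by
    intro s hs
    filter_upwards [hopen_t.mem_nhds hs] with r hr
    have hshr : Real.sinh (lam*r) ≠ 0 := ne_of_gt (Real.sinh_pos_iff.2 (mul_pos hlam hr.1))
    rw [hq x r, besselI0_eq_G0 lam _ (le_of_lt hr.2), hFqdef]
    field_simp
  have hFq1at : ∀ s, 0 < s → HasDerivAt Fq (Fq1 s) s := by
    intro s hs
    have hshs : Real.sinh (lam*s) ≠ 0 := ne_of_gt (Real.sinh_pos_iff.2 (mul_pos hlam hs))
    have h1 : HasDerivAt (fun r : ℝ => r^2 - (Phi c x)^2) (2*s) s := by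
      simpa using (hasDerivAt_pow 2 s).sub_const ((Phi c x)^2)
    have h2 : HasDerivAt (fun r : ℝ => G0 (lam^2/4) (r^2 - (Phi c x)^2))
        (G1 (lam^2/4) (s^2 - (Phi c x)^2) * (2*s)) s := (hG0' _).comp s h1
    have h3 : HasDerivAt (fun r : ℝ => lam * r) lam s := by
      simpa using (hasDerivAt_id s).const_mul lam
    have h4 : HasDerivAt (fun r : ℝ => Real.sinh (lam*r)) (Real.cosh (lam*s) * lam) s :=
      (Real.hasDerivAt_sinh _).comp s h3
    have h5 : HasDerivAt (fun r : ℝ => (Real.sinh (lam*r))⁻¹)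
        (-(Real.cosh (lam*s) * lam) / (Real.sinh (lam*s))^2) s := h4.inv hshs
    have h6 := (h2.fun_mul h5).const_mul (lam/2)
    rw [hFqdef, hFq1def]
    convert h6 using 1 <;> ring
  have hqderiv_ev : deriv (fun s => q x s) =ᶠ[nhds t] Fq1 := by
    filter_upwards [hopen_t.mem_nhds hmem_t] with s hs
    rw [Filter.EventuallyEq.deriv_eq (hev_at s hs), (hFq1at s hs.1).deriv]
  have hd1 : deriv (fun s => q x s) t = Fq1 t := by
    rw [Filter.EventuallyEq.deriv_eq (hev_at t hmem_t), (hFq1at t ht).deriv]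
  -- second time derivative
  have h1t : HasDerivAt (fun r : ℝ => r^2 - (Phi c x)^2) (2*t) t := by
    simpa using (hasDerivAt_pow 2 t).sub_const ((Phi c x)^2)
  have h3t : HasDerivAt (fun r : ℝ => lam * r) lam t := by
    simpa using (hasDerivAt_id t).const_mul lam
  have h4t : HasDerivAt (fun r : ℝ => Real.sinh (lam*r)) (Real.cosh (lam*t) * lam) t :=
    (Real.hasDerivAt_sinh _).comp t h3t
  have h5t : HasDerivAt (fun r : ℝ => (Real.sinh (lam*r))⁻¹)
      (-(Real.cosh (lam*t) * lam) / (Real.sinh (lam*t))^2) t := h4t.inv hsh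
  have hG0c : HasDerivAt (fun r : ℝ => G0 (lam^2/4) (r^2 - (Phi c x)^2))
      (G1 (lam^2/4) (t^2 - (Phi c x)^2) * (2*t)) t := (hG0' _).comp t h1t
  have hG1c : HasDerivAt (fun r : ℝ => G1 (lam^2/4) (r^2 - (Phi c x)^2))
      (G2 (lam^2/4) (t^2 - (Phi c x)^2) * (2*t)) t := (hG1' _).comp t h1t
  have hmul2 : HasDerivAt (fun r : ℝ => 2*r) (2:ℝ) t := by
    simpa using (hasDerivAt_id t).const_mul (2:ℝ)
  have hT1 := (hG1c.fun_mul hmul2).fun_mul h5t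
  have hnum : HasDerivAt (fun r : ℝ => -(Real.cosh (lam*r) * lam))
      (-(Real.sinh (lam*t) * lam * lam)) t := by
    have := (((Real.hasDerivAt_cosh (lam*t)).comp t h3t).mul_const lam).neg
    exact this.congr_deriv (by ring)
  have hden : HasDerivAt (fun r : ℝ => (Real.sinh (lam*r))^2)
      ((2:ℝ) * Real.sinh (lam*t) ^ 1 * (Real.cosh (lam*t) * lam)) t := by
    exact_mod_cast h4t.pow 2
  have hQt := hnum.fun_div hden (pow_ne_zero 2 hsh)
  have hT2 := hG0c.fun_mul hQt
  have hFq2 := (hT1.fun_add hT2).const_mul (lam/2)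
  have e2 : iteratedDeriv 2 (fun s => q x s) t
      = deriv Fq1 t := by
    rw [show (2:ℕ) = 1+1 from rfl, iteratedDeriv_succ, iteratedDeriv_one]
    exact Filter.EventuallyEq.deriv_eq hqderiv_ev
  -- spatial part
  have hUopen : IsOpen {y : ℝ | 0 < t^2 - (Phi c y)^2} :=
    isOpen_lt continuous_const (continuous_const.sub (hPhiC.pow 2))
  have hxU : x ∈ {y : ℝ | 0 < t^2 - (Phi c y)^2} := hu
  set Qx : ℝ → ℝ := fun z =>
    (lam/2) * (G0 (lam^2/4) (t^2 - (Phi c z)^2) * (Real.sinh (lam*t))⁻¹) with hQxdef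
  have hevx : ∀ y ∈ {y : ℝ | 0 < t^2 - (Phi c y)^2}, (fun z => q z t) =ᶠ[nhds y] Qx := by
    intro y hy
    filter_upwards [hUopen.mem_nhds hy] with z hz
    rw [hq z t, besselI0_eq_G0 lam _ (le_of_lt hz), hQxdef]
    field_simp
  have hQxD : ∀ y, HasDerivAt Qx
      ((lam/2) * (G1 (lam^2/4) (t^2 - (Phi c y)^2)
        * (-(2 * Phi c y ^ 1 * (c y)⁻¹)) * (Real.sinh (lam*t))⁻¹)) y := by
    intro y
    have hin : HasDerivAt (fun z => t^2 - (Phi c z)^2)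
        (-(2 * Phi c y ^ 1 * (c y)⁻¹)) y := by
      have := ((hPhiD y).fun_pow 2).const_sub (t^2)
      exact this.congr_deriv (by push_cast; ring)
    have := (((hG0' _).comp y hin).mul_const ((Real.sinh (lam*t))⁻¹)).const_mul (lam/2)
    rw [hQxdef]
    exact this.congr_deriv (by ring)
  have hW : (fun y => c y * deriv (fun z => q z t) y) =ᶠ[nhds x]
      (fun y => -lam * (Phi c y * G1 (lam^2/4) (t^2 - (Phi c y)^2))
        * (Real.sinh (lam*t))⁻¹) := by
    filter_upwards [hUopen.mem_nhds hxU] with y hy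
    rw [Filter.EventuallyEq.deriv_eq (hevx y hy), (hQxD y).deriv]
    have hcy : c y ≠ 0 := (hcpos y).ne'
    field_simp
  have hin_x : HasDerivAt (fun z => t^2 - (Phi c z)^2)
      (-(2 * Phi c x ^ 1 * (c x)⁻¹)) x := by
    have := ((hPhiD x).fun_pow 2).const_sub (t^2)
    exact this.congr_deriv (by push_cast; ring)
  have hG1cx : HasDerivAt (fun z => G1 (lam^2/4) (t^2 - (Phi c z)^2))
      (G2 (lam^2/4) (t^2 - (Phi c x)^2) * (-(2 * Phi c x ^ 1 * (c x)⁻¹))) x :=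
    (hG1' _).comp x hin_x
  have hV := (((hPhiD x).fun_mul hG1cx).const_mul (-lam)).mul_const ((Real.sinh (lam*t))⁻¹)
  have eR : deriv (fun y => c y * deriv (fun z => q z t) y) x
      = -lam * ((c x)⁻¹ * G1 (lam^2/4) (t^2 - (Phi c x)^2)
          + Phi c x * (G2 (lam^2/4) (t^2 - (Phi c x)^2)
            * (-(2 * Phi c x ^ 1 * (c x)⁻¹)))) * (Real.sinh (lam*t))⁻¹ := by
    rw [Filter.EventuallyEq.deriv_eq hW, hV.deriv]
  rw [e2, hd1, eR]
  simp only [hFq1def]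
  rw [hFq2.deriv]
  have hODE := TelegraphAux.ode_G (lam^2/4) (t^2 - (Phi c x)^2)
  have hcx : c x ≠ 0 := (hcpos x).ne'
  simp only [coth]
  field_simp
  linear_combination (Real.sinh (lam*t)^2) * hODE
end

section
/- Let α > 0, let c : ℝ → (0,∞) be continuous, and let Φ_c(x) = ∫₀^x dw/c(w). Then the function v(x,t) = (1/(B(α,1/2) · t)) · (1 − Φ_c(x)²/t²)^{α−1} satisfies the Euler–Poisson–Darboux equation with space-varying velocity ∂²v/∂t² + (2α/t) ∂v/∂t = c(x) ∂/∂x( c(x) ∂v/∂x ) for all (x,t) with t > 0 and |Φ_c(x)| < t. -/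
open Real MeasureTheory

/-- The Euler Beta function, `B(a,b) = Γ(a)Γ(b)/Γ(a+b)`. -/
noncomputable def betaFn (a b : ℝ) : ℝ := Real.Gamma a * Real.Gamma b / Real.Gamma (a + b)

private lemma gpos {u s : ℝ} (hs : 0 < s) (hg : u^2 < s^2) : 0 < 1 - u^2/s^2 := by
  rw [sub_pos, div_lt_one (by positivity)]
  exact hg

private lemma hg_deriv (u : ℝ) {s : ℝ} (hs : s ≠ 0) :
    HasDerivAt (fun r : ℝ => 1 - u^2/r^2) (2*u^2/s^3) s := by
  have h2 : HasDerivAt (fun r : ℝ => r^2) (2*s) s := by simpa using hasDerivAt_pow 2 s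
  have h := ((hasDerivAt_const s (u^2)).div h2 (pow_ne_zero 2 hs)).const_sub 1
  refine h.congr_deriv ?_
  field_simp
  ring

private lemma time1 (α u : ℝ) {s : ℝ} (hs : 0 < s) (hg : u^2 < s^2) :
    HasDerivAt (fun r : ℝ => r⁻¹ * (1 - u^2/r^2)^(α-1))
      (-(s^2)⁻¹ * (1 - u^2/s^2)^(α-1)
        + s⁻¹ * (2*u^2/s^3 * (α-1) * (1 - u^2/s^2)^(α-2))) s := by
  have hgne : (1 - u^2/s^2) ≠ 0 := (gpos hs hg).ne'
  have hinv : HasDerivAt (fun r : ℝ => r⁻¹) (-(s^2)⁻¹) s := by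
    simpa using hasDerivAt_inv hs.ne'
  have hpow : HasDerivAt (fun r : ℝ => (1 - u^2/r^2)^(α-1))
      ((2*u^2/s^3) * (α-1) * (1 - u^2/s^2)^(α-1-1)) s :=
    (hg_deriv u hs.ne').rpow_const (Or.inl hgne)
  have h := hinv.mul hpow
  refine h.congr_deriv ?_
  rw [show α-1-1 = α-2 by ring]

private lemma time2 (α u : ℝ) {s : ℝ} (hs : 0 < s) (hg : u^2 < s^2) :
    HasDerivAt (fun r : ℝ => -(r^2)⁻¹ * (1 - u^2/r^2)^(α-1)
        + r⁻¹ * (2*u^2/r^3 * (α-1) * (1 - u^2/r^2)^(α-2)))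
      (2/s^3 * (1 - u^2/s^2)^(α-1)
        - 10*u^2/s^5 * (α-1) * (1 - u^2/s^2)^(α-2)
        + 4*u^4/s^7 * (α-1) * (α-2) * (1 - u^2/s^2)^(α-3)) s := by
  have hgne : (1 - u^2/s^2) ≠ 0 := (gpos hs hg).ne'
  have h2 : HasDerivAt (fun r : ℝ => r^2) (2*s) s := by simpa using hasDerivAt_pow 2 s
  have h3 : HasDerivAt (fun r : ℝ => r^3) (3*s^2) s := by simpa using hasDerivAt_pow 3 s
  have hinv : HasDerivAt (fun r : ℝ => r⁻¹) (-(s^2)⁻¹) s := by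
    simpa using hasDerivAt_inv hs.ne'
  have hA : HasDerivAt (fun r : ℝ => -(r^2)⁻¹) (2*s/(s^2)^2) s := by
    have h := (h2.inv (pow_ne_zero 2 hs.ne')).neg
    refine h.congr_deriv ?_
    field_simp
  have hB : HasDerivAt (fun r : ℝ => (1 - u^2/r^2)^(α-1))
      ((2*u^2/s^3) * (α-1) * (1 - u^2/s^2)^(α-1-1)) s :=
    (hg_deriv u hs.ne').rpow_const (Or.inl hgne)
  have hB2 : HasDerivAt (fun r : ℝ => (1 - u^2/r^2)^(α-2))
      ((2*u^2/s^3) * (α-2) * (1 - u^2/s^2)^(α-2-1)) s :=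
    (hg_deriv u hs.ne').rpow_const (Or.inl hgne)
  have hE : HasDerivAt (fun r : ℝ => 2*u^2/r^3) (-(6*u^2/s^4)) s := by
    have h := (hasDerivAt_const s (2*u^2)).div h3 (pow_ne_zero 3 hs.ne')
    refine h.congr_deriv ?_
    field_simp
    ring
  have h := (hA.mul hB).add (hinv.mul ((hE.mul_const (α-1)).mul hB2))
  refine h.congr_deriv ?_
  rw [show α-1-1 = α-2 by ring, show α-2-1 = α-3 by ring]
  simp only [Pi.mul_apply]
  field_simp
  ring

private lemma hgx_deriv (t : ℝ) (w : ℝ) :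
    HasDerivAt (fun p : ℝ => 1 - p^2/t^2) (-(2*w/t^2)) w := by
  have h2 : HasDerivAt (fun p : ℝ => p^2) (2*w) w := by simpa using hasDerivAt_pow 2 w
  have h := (h2.div_const (t^2)).const_sub 1
  convert h using 1

private lemma space1 (α : ℝ) {t : ℝ} (ht : 0 < t) {w : ℝ} (hg : w^2 < t^2) :
    HasDerivAt (fun p : ℝ => t⁻¹ * (1 - p^2/t^2)^(α-1))
      (t⁻¹ * (-(2*w/t^2) * (α-1) * (1 - w^2/t^2)^(α-2))) w := by
  have hgne : (1 - w^2/t^2) ≠ 0 := (gpos ht hg).ne'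
  have h := (((hgx_deriv t w).rpow_const (p := α-1) (Or.inl hgne)).const_mul t⁻¹)
  refine h.congr_deriv ?_
  rw [show α-1-1 = α-2 by ring]

private lemma space2 (α : ℝ) {t : ℝ} (ht : 0 < t) {w : ℝ} (hg : w^2 < t^2) :
    HasDerivAt (fun p : ℝ => t⁻¹ * (-(2*p/t^2) * (α-1) * (1 - p^2/t^2)^(α-2)))
      (t⁻¹ * (-(2/t^2) * (α-1) * (1 - w^2/t^2)^(α-2)
        + (2*w/t^2) * (α-1) * (2*w/t^2) * (α-2) * (1 - w^2/t^2)^(α-3))) w := by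
  have hgne : (1 - w^2/t^2) ≠ 0 := (gpos ht hg).ne'
  have hlin : HasDerivAt (fun p : ℝ => -(2*p/t^2) * (α-1)) (-(2/t^2) * (α-1)) w := by
    have h := ((((hasDerivAt_id w).const_mul 2).div_const (t^2)).neg).mul_const (α-1)
    refine h.congr_deriv ?_
    ring
  have hpow : HasDerivAt (fun p : ℝ => (1 - p^2/t^2)^(α-2))
      (-(2*w/t^2) * (α-2) * (1 - w^2/t^2)^(α-2-1)) w :=
    (hgx_deriv t w).rpow_const (Or.inl hgne)
  have h := (hlin.mul hpow).const_mul t⁻¹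
  refine h.congr_deriv ?_
  rw [show α-2-1 = α-3 by ring]
  ring

private lemma Phi_hasDerivAt (c : ℝ → ℝ) (hc : Continuous c) (hcpos : ∀ x, 0 < c x) (y : ℝ) :
    HasDerivAt (Phi c) (c y)⁻¹ y := by
  have hcont : Continuous fun w => (c w)⁻¹ := hc.inv₀ fun w => (hcpos w).ne'
  exact intervalIntegral.integral_hasDerivAt_right (hcont.intervalIntegrable _ _)
    (hcont.stronglyMeasurable.stronglyMeasurableAtFilter) hcont.continuousAt

theorem EPD_space_varying_velocity_solution
    (α : ℝ) (hα : 0 < α)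
    (c : ℝ → ℝ) (hc : Continuous c) (hcpos : ∀ x, 0 < c x)
    (v : ℝ → ℝ → ℝ)
    (hv : ∀ x, ∀ t : ℝ,
      v x t = (1 / (betaFn α (1/2) * t)) * (1 - (Phi c x)^2 / t^2) ^ (α - 1)) :
    ∀ x t : ℝ, 0 < t → |Phi c x| < t →
      iteratedDeriv 2 (fun s => v x s) t + (2*α/t) * deriv (fun s => v x s) t
        = c x * deriv (fun y => c y * deriv (fun z => v z t) y) x := by
  intro x t ht habs
  set C : ℝ := (betaFn α (1/2))⁻¹ with hC
  set u : ℝ := Phi c x with hu_def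
  have hu : u^2 < t^2 := by
    obtain ⟨h1, h2⟩ := abs_lt.mp habs
    nlinarith
  have hPhi := Phi_hasDerivAt c hc hcpos
  have hPhicont : Continuous (Phi c) :=
    continuous_iff_continuousAt.mpr fun y => (hPhi y).continuousAt
  have hfun_t : (fun s => v x s) = fun s => C * (s⁻¹ * (1 - u^2/s^2)^(α-1)) := by
    funext s
    rw [hv x s, one_div, mul_inv, hC]
    ring
  have hfun_x : (fun z => v z t) = fun z => C * (t⁻¹ * (1 - (Phi c z)^2/t^2)^(α-1)) := by
    funext z
    rw [hv z t, one_div, mul_inv, hC]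
    ring
  -- time derivatives
  have hd1 : ∀ s : ℝ, 0 < s → u^2 < s^2 →
      HasDerivAt (fun r => C * (r⁻¹ * (1 - u^2/r^2)^(α-1)))
        (C * (-(s^2)⁻¹ * (1 - u^2/s^2)^(α-1)
          + s⁻¹ * (2*u^2/s^3 * (α-1) * (1 - u^2/s^2)^(α-2)))) s :=
    fun s hs hgs => (time1 α u hs hgs).const_mul C
  have hevt : ∀ᶠ s in nhds t, 0 < s ∧ u^2 < s^2 := by
    have h1 : ∀ᶠ s in nhds t, 0 < s := eventually_gt_nhds ht
    have h2 : ∀ᶠ s in nhds t, u^2 < s^2 :=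
      ContinuousAt.eventually_lt continuousAt_const ((continuous_pow 2).continuousAt) hu
    exact h1.and h2
  have hderivfun : deriv (fun s => v x s) =ᶠ[nhds t]
      fun s => C * (-(s^2)⁻¹ * (1 - u^2/s^2)^(α-1)
        + s⁻¹ * (2*u^2/s^3 * (α-1) * (1 - u^2/s^2)^(α-2))) := by
    rw [hfun_t]
    filter_upwards [hevt] with s hs
    exact (hd1 s hs.1 hs.2).deriv
  have hderiv1 : deriv (fun s => v x s) t
      = C * (-(t^2)⁻¹ * (1 - u^2/t^2)^(α-1)
        + t⁻¹ * (2*u^2/t^3 * (α-1) * (1 - u^2/t^2)^(α-2))) := by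
    rw [hfun_t]
    exact (hd1 t ht hu).deriv
  have hD2 : HasDerivAt
      (fun s => C * (-(s^2)⁻¹ * (1 - u^2/s^2)^(α-1)
        + s⁻¹ * (2*u^2/s^3 * (α-1) * (1 - u^2/s^2)^(α-2))))
      (C * (2/t^3 * (1 - u^2/t^2)^(α-1)
        - 10*u^2/t^5 * (α-1) * (1 - u^2/t^2)^(α-2)
        + 4*u^4/t^7 * (α-1) * (α-2) * (1 - u^2/t^2)^(α-3))) t :=
    (time2 α u ht hu).const_mul C
  have hitd : iteratedDeriv 2 (fun s => v x s) t
      = C * (2/t^3 * (1 - u^2/t^2)^(α-1)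
        - 10*u^2/t^5 * (α-1) * (1 - u^2/t^2)^(α-2)
        + 4*u^4/t^7 * (α-1) * (α-2) * (1 - u^2/t^2)^(α-3)) := by
    have e : iteratedDeriv 2 (fun s => v x s) = deriv (iteratedDeriv 1 (fun s => v x s)) :=
      iteratedDeriv_succ
    rw [e, iteratedDeriv_one, hderivfun.deriv_eq]
    exact hD2.deriv
  -- space derivatives
  have hevx : ∀ᶠ y in nhds x, (Phi c y)^2 < t^2 :=
    ContinuousAt.eventually_lt ((hPhicont.pow 2).continuousAt) continuousAt_const hu
  have hdz : ∀ y : ℝ, (Phi c y)^2 < t^2 →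
      HasDerivAt (fun z => C * (t⁻¹ * (1 - (Phi c z)^2/t^2)^(α-1)))
        (C * (t⁻¹ * (-(2*(Phi c y)/t^2) * (α-1) * (1 - (Phi c y)^2/t^2)^(α-2)) * (c y)⁻¹)) y :=
    fun y hy => ((space1 α ht hy).comp y (hPhi y)).const_mul C
  have hrhsfun : (fun y => c y * deriv (fun z => v z t) y) =ᶠ[nhds x]
      fun y => C * (t⁻¹ * (-(2*(Phi c y)/t^2) * (α-1) * (1 - (Phi c y)^2/t^2)^(α-2))) := by
    filter_upwards [hevx] with y hy
    rw [hfun_x, (hdz y hy).deriv]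
    field_simp [(hcpos y).ne']
  have hDU2 : HasDerivAt
      (fun y => C * (t⁻¹ * (-(2*(Phi c y)/t^2) * (α-1) * (1 - (Phi c y)^2/t^2)^(α-2))))
      (C * (t⁻¹ * (-(2/t^2) * (α-1) * (1 - u^2/t^2)^(α-2)
        + (2*u/t^2) * (α-1) * (2*u/t^2) * (α-2) * (1 - u^2/t^2)^(α-3)) * (c x)⁻¹)) x :=
    by have := ((space2 α ht hu).comp x (hPhi x)).const_mul C; exact this
  have hrhs : c x * deriv (fun y => c y * deriv (fun z => v z t) y) x
      = C * (t⁻¹ * (-(2/t^2) * (α-1) * (1 - u^2/t^2)^(α-2)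
        + (2*u/t^2) * (α-1) * (2*u/t^2) * (α-2) * (1 - u^2/t^2)^(α-3))) := by
    rw [hrhsfun.deriv_eq, hDU2.deriv]
    field_simp [(hcpos x).ne']
  rw [hitd, hderiv1, hrhs]
  have hgp : (0:ℝ) < 1 - u^2/t^2 := gpos ht hu
  rw [show α-1 = (α-3)+2 by ring, show α-2 = (α-3)+1 by ring,
    Real.rpow_add hgp, Real.rpow_add hgp, Real.rpow_two, Real.rpow_one]
  field_simp
  ring
end

section
/- Let α > 0, t > 0, let c : ℝ → (0,∞) be continuous with Φ_c(x) = ∫₀^x dw/c(w) a surjection of ℝ onto ℝ. Then the function p(x) = (1/(B(α,1/2) · c(x) · t)) · (1 − Φ_c(x)²/t²)^{α−1} is nonnegative on the set D = {x ∈ ℝ : |Φ_c(x)| < t} and satisfies ∫_D p(x) dx = 1; that is, p is a probability density on D. -/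
open Real MeasureTheory

lemma betaFn_pos {a b : ℝ} (ha : 0 < a) (hb : 0 < b) : 0 < betaFn a b := by
  unfold betaFn
  have h1 := Real.Gamma_pos_of_pos ha
  have h2 := Real.Gamma_pos_of_pos hb
  have h3 := Real.Gamma_pos_of_pos (add_pos ha hb)
  positivity

lemma real_betaIntegral {a b : ℝ} (ha : 0 < a) (hb : 0 < b) :
    ∫ x in (0:ℝ)..1, x ^ (a-1) * (1-x) ^ (b-1) = betaFn a b := by
  have h := Complex.Gamma_mul_Gamma_eq_betaIntegral (s := (a:ℂ)) (t := (b:ℂ))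
      (by simpa using ha) (by simpa using hb)
  have hne : Complex.Gamma ((a:ℂ) + b) ≠ 0 := by
    rw [← Complex.ofReal_add, Complex.Gamma_ofReal]
    exact_mod_cast (Real.Gamma_pos_of_pos (add_pos ha hb)).ne'
  have hbeta : Complex.betaIntegral a b = ((betaFn a b : ℝ) : ℂ) := by
    have h2 : Complex.betaIntegral a b
        = Complex.Gamma a * Complex.Gamma b / Complex.Gamma ((a:ℂ)+b) := by
      rw [eq_div_iff hne, mul_comm]
      exact h.symm
    rw [h2, ← Complex.ofReal_add, Complex.Gamma_ofReal, Complex.Gamma_ofReal,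
      Complex.Gamma_ofReal, betaFn]
    push_cast
    ring
  have hint : Complex.betaIntegral a b
      = ((∫ x in (0:ℝ)..1, x ^ (a-1) * (1-x) ^ (b-1) : ℝ) : ℂ) := by
    rw [Complex.betaIntegral, ← intervalIntegral.integral_ofReal]
    refine intervalIntegral.integral_congr fun x hx => ?_
    rw [Set.uIcc_of_le zero_le_one] at hx
    rw [Complex.ofReal_mul, Complex.ofReal_cpow hx.1, Complex.ofReal_cpow (by linarith [hx.2])]
    push_cast
    ring
  exact_mod_cast hint.symm.trans hbeta

lemma duplication_beta {α : ℝ} (hα : 0 < α) :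
    2 * (4:ℝ) ^ (α - 1) * betaFn α α = betaFn α (1/2) := by
  have h4 : (4:ℝ) ^ (α-1) = 2 ^ (2*(α-1)) := by
    rw [show (4:ℝ) = (2:ℝ) ^ (2:ℝ) by
      rw [show (2:ℝ) = ((2:ℕ):ℝ) by norm_num, Real.rpow_natCast]; norm_num,
      ← Real.rpow_mul (by norm_num)]
  have hdup := Real.Gamma_mul_Gamma_add_half α
  have g1 : 0 < Real.Gamma α := Real.Gamma_pos_of_pos hα
  have g2 : 0 < Real.Gamma (α + 1/2) := Real.Gamma_pos_of_pos (by linarith)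
  have g3 : 0 < Real.Gamma (2*α) := Real.Gamma_pos_of_pos (by linarith)
  have hpow : (2:ℝ) ^ (2*(α-1)) * 2 ^ (1-2*α) = 2⁻¹ := by
    rw [← Real.rpow_add two_pos, show 2*(α-1)+(1-2*α) = -1 by ring, Real.rpow_neg_one]
  unfold betaFn
  rw [Real.Gamma_one_half_eq, show α + α = 2*α by ring, h4, ← mul_div_assoc,
    div_eq_div_iff g3.ne' g2.ne']
  linear_combination (2 * (2:ℝ)^(2*(α-1)) * Real.Gamma α) * hdup
    + (2 * Real.Gamma α * Real.Gamma (2*α) * √π) * hpow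

theorem EPD_space_varying_velocity_density
    (α t : ℝ) (hα : 0 < α) (ht : 0 < t)
    (c : ℝ → ℝ) (hc : Continuous c) (hcpos : ∀ x, 0 < c x)
    (hsurj : Function.Surjective (Phi c))
    (p : ℝ → ℝ)
    (hp : ∀ x : ℝ,
      p x = (1 / (betaFn α (1/2) * c x * t)) * (1 - (Phi c x)^2 / t^2) ^ (α - 1)) :
    (∀ x ∈ {x : ℝ | |Phi c x| < t}, 0 ≤ p x) ∧
    ∫ x in {x : ℝ | |Phi c x| < t}, p x = 1 := by
  have hBpos : 0 < betaFn α (1/2) := betaFn_pos hα one_half_pos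
  -- nonnegativity
  have hnonneg : ∀ x ∈ {x : ℝ | |Phi c x| < t}, 0 ≤ p x := by
    intro x hx
    have hx' : |Phi c x| < t := hx
    have hbase : 0 ≤ 1 - (Phi c x)^2 / t^2 := by
      have h1 : (Phi c x)^2 < t^2 := by
        calc (Phi c x)^2 = |Phi c x|^2 := (sq_abs _).symm
        _ < t^2 := by
          apply pow_lt_pow_left₀ hx' (abs_nonneg _)
          norm_num
      have := (div_lt_one (by positivity : (0:ℝ) < t^2)).mpr h1
      linarith
    rw [hp x]
    have hc' := hcpos x
    positivity
  refine ⟨hnonneg, ?_⟩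
  -- derivative of Phi
  have hcont_inv : Continuous fun w => (c w)⁻¹ := hc.inv₀ fun x => (hcpos x).ne'
  have hderiv : ∀ x, HasDerivAt (Phi c) (c x)⁻¹ x := fun x =>
    (hcont_inv.integral_hasStrictDerivAt 0 x).hasDerivAt
  have hPhiCont : Continuous (Phi c) := by
    have : Differentiable ℝ (Phi c) := fun x => (hderiv x).differentiableAt
    exact this.continuous
  have hmono : StrictMono (Phi c) := by
    apply strictMono_of_deriv_pos
    intro x
    rw [(hderiv x).deriv]
    exact inv_pos.mpr (hcpos x)
  have hsmeas : MeasurableSet {x : ℝ | |Phi c x| < t} :=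
    (isOpen_lt (continuous_abs.comp hPhiCont) continuous_const).measurableSet
  -- image of s under Phi is Ioo (-t) t
  have hpre : {x : ℝ | |Phi c x| < t} = Phi c ⁻¹' Set.Ioo (-t) t := by
    ext x; simp [Set.mem_Ioo, abs_lt]
  have himg : Phi c '' {x : ℝ | |Phi c x| < t} = Set.Ioo (-t) t := by
    rw [hpre, Set.image_preimage_eq _ hsurj]
  -- change of variables with Phi
  set g : ℝ → ℝ := fun y => (1 / (betaFn α (1/2) * t)) * (1 - y^2 / t^2) ^ (α - 1) with hg
  have hcov1 : ∫ y in Set.Ioo (-t) t, g y = ∫ x in {x : ℝ | |Phi c x| < t}, p x := by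
    rw [← himg]
    rw [integral_image_eq_integral_abs_deriv_smul hsmeas
      (fun x _ => (hderiv x).hasDerivWithinAt) hmono.injective.injOn g]
    refine setIntegral_congr_fun hsmeas fun x _ => ?_
    rw [hp x, hg]
    have hcx := hcpos x
    rw [abs_of_pos (inv_pos.mpr hcx)]
    rw [smul_eq_mul, ← mul_assoc]
    congr 1
    field_simp
  -- change of variables with affine map onto (0,1)
  set f : ℝ → ℝ := fun u => 2*t*u - t with hf
  have hfimg : f '' Set.Ioo 0 1 = Set.Ioo (-t) t := by
    ext y
    constructor
    · rintro ⟨u, hu, rfl⟩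
      obtain ⟨h0, h1⟩ := hu
      simp only [hf, Set.mem_Ioo]
      constructor
      · nlinarith [mul_pos ht h0]
      · nlinarith [mul_pos ht (sub_pos.mpr h1)]
    · intro hy
      obtain ⟨h0, h1⟩ := hy
      refine ⟨(y + t) / (2*t), ⟨div_pos (by linarith) (by positivity), ?_⟩, ?_⟩
      · rw [div_lt_one (by positivity)]; linarith
      · simp only [hf]; field_simp; ring
  have hcov2 : ∫ y in Set.Ioo (-t) t, g y
      = ∫ u in Set.Ioo (0:ℝ) 1, (2*t) * g (2*t*u - t) := by
    rw [← hfimg, integral_image_eq_integral_abs_deriv_smul measurableSet_Ioo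
      (f' := fun _ => 2*t)
      (fun u _ => (show HasDerivAt f (2*t) u by
        simpa [hf] using ((hasDerivAt_id u).const_mul (2*t)).sub_const t).hasDerivWithinAt)
      (fun u _ v _ huv => by
        simp only [hf] at huv
        have h2t : (2*t) ≠ 0 := by positivity
        exact mul_left_cancel₀ h2t (by linarith)) g]
    refine setIntegral_congr_fun measurableSet_Ioo fun u _ => ?_
    rw [abs_of_pos (by positivity : (0:ℝ) < 2*t)]
    simp [hf, smul_eq_mul]
  -- compute the resulting beta integral
  have hval : ∫ u in Set.Ioo (0:ℝ) 1, (2*t) * g (2*t*u - t)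
      = (2 / betaFn α (1/2)) * (4:ℝ)^(α-1)
          * ∫ u in Set.Ioo (0:ℝ) 1, u ^ (α-1) * (1-u) ^ (α-1) := by
    rw [← integral_const_mul]
    refine setIntegral_congr_fun measurableSet_Ioo fun u hu => ?_
    obtain ⟨h0, h1⟩ := hu
    have hsimp : 1 - (2*t*u - t)^2 / t^2 = 4*u*(1-u) := by
      field_simp
      ring
    rw [hg]
    simp only
    rw [hsimp]
    rw [show (4:ℝ)*u*(1-u) = 4*(u*(1-u)) by ring,
      Real.mul_rpow (by norm_num) (by nlinarith),
      Real.mul_rpow (by linarith) (by linarith)]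
    field_simp
  have hbeta_int : ∫ u in Set.Ioo (0:ℝ) 1, u ^ (α-1) * (1-u) ^ (α-1) = betaFn α α := by
    rw [← MeasureTheory.integral_Ioc_eq_integral_Ioo,
      ← intervalIntegral.integral_of_le zero_le_one]
    exact real_betaIntegral hα hα
  rw [← hcov1, hcov2, hval, hbeta_int]
  have := duplication_beta hα
  field_simp
  linarith [this]
end

section
/- Let λ > 0, let c₁, c₂ : ℝ → (0,∞) be continuous, and let Φ₁(x) = ∫₀^x dw/c₁(w), Φ₂(y) = ∫₀^y dz/c₂(z). Then the function p(x,y,t) = (λ/(2π)) · exp( −λt + λ√(t² − Φ₁(x)² − Φ₂(y)²) ) / √(t² − Φ₁(x)² − Φ₂(y)²) satisfies the planar damped wave equation with space-varying velocities ∂²p/∂t² + 2λ ∂p/∂t = c₁(x) ∂/∂x( c₁(x) ∂p/∂x ) + c₂(y) ∂/∂y( c₂(y) ∂p/∂y ) for all (x,y,t) with t > 0 and Φ₁(x)² + Φ₂(y)² < t². -/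
open Real MeasureTheory

noncomputable def gg (lam q : ℝ) : ℝ := Real.exp (lam * Real.sqrt q) / Real.sqrt q
noncomputable def gg1 (lam q : ℝ) : ℝ :=
  Real.exp (lam * Real.sqrt q) * (lam * Real.sqrt q - 1) / (2 * q * Real.sqrt q)
noncomputable def gg2 (lam q : ℝ) : ℝ :=
  Real.exp (lam * Real.sqrt q) * (lam ^ 2 * q - 3 * (lam * Real.sqrt q) + 3) / (4 * q ^ 2 * Real.sqrt q)

lemma hasDerivAt_Phi (c : ℝ → ℝ) (hc : Continuous c) (hpos : ∀ w, 0 < c w) (x : ℝ) :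
    HasDerivAt (Phi c) ((c x)⁻¹) x :=
  ((hc.inv₀ fun w => (hpos w).ne').integral_hasStrictDerivAt 0 x).hasDerivAt

lemma hasDerivAt_gg (lam q : ℝ) (hq : 0 < q) : HasDerivAt (gg lam) (gg1 lam q) q := by
  have hr : 0 < Real.sqrt q := Real.sqrt_pos.2 hq
  have hs : HasDerivAt Real.sqrt (1 / (2 * Real.sqrt q)) q := Real.hasDerivAt_sqrt hq.ne'
  have htop : HasDerivAt (fun q => Real.exp (lam * Real.sqrt q))
      (Real.exp (lam * Real.sqrt q) * (lam * (1 / (2 * Real.sqrt q)))) q := by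
    simpa [mul_comm] using ((hs.const_mul lam).exp)
  have h := htop.div hs hr.ne'
  refine h.congr_deriv ?_
  unfold gg1
  have h2 : Real.sqrt q * Real.sqrt q = q := Real.mul_self_sqrt hq.le
  obtain ⟨r, hrpos, rfl⟩ : ∃ r : ℝ, 0 < r ∧ r * r = q := ⟨_, hr, h2⟩
  rw [Real.sqrt_mul_self hrpos.le]
  field_simp

lemma hasDerivAt_gg1 (lam q : ℝ) (hq : 0 < q) : HasDerivAt (gg1 lam) (gg2 lam q) q := by
  have hr : 0 < Real.sqrt q := Real.sqrt_pos.2 hq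
  have hs : HasDerivAt Real.sqrt (1 / (2 * Real.sqrt q)) q := Real.hasDerivAt_sqrt hq.ne'
  have htop : HasDerivAt (fun q => Real.exp (lam * Real.sqrt q))
      (Real.exp (lam * Real.sqrt q) * (lam * (1 / (2 * Real.sqrt q)))) q := by
    simpa [mul_comm] using ((hs.const_mul lam).exp)
  have hN : HasDerivAt (fun q => Real.exp (lam * Real.sqrt q) * (lam * Real.sqrt q - 1))
      (Real.exp (lam * Real.sqrt q) * (lam * (1 / (2 * Real.sqrt q))) * (lam * Real.sqrt q - 1)
        + Real.exp (lam * Real.sqrt q) * (lam * (1 / (2 * Real.sqrt q)))) q :=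
    htop.mul ((hs.const_mul lam).sub_const 1)
  have hD : HasDerivAt (fun q => 2 * q * Real.sqrt q)
      ((2 * 1) * Real.sqrt q + (2 * q) * (1 / (2 * Real.sqrt q))) q := by
    exact (((hasDerivAt_id q).const_mul 2).mul hs)
  have hDne : 2 * q * Real.sqrt q ≠ 0 := by positivity
  have h := hN.div hD hDne
  refine h.congr_deriv ?_
  unfold gg2
  have h2 : Real.sqrt q * Real.sqrt q = q := Real.mul_self_sqrt hq.le
  obtain ⟨r, hrpos, rfl⟩ : ∃ r : ℝ, 0 < r ∧ r * r = q := ⟨_, hr, h2⟩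
  rw [Real.sqrt_mul_self hrpos.le]
  field_simp
  ring

lemma key_gg (lam q : ℝ) (hq : 0 < q) :
    lam ^ 2 * gg lam q = 6 * gg1 lam q + 4 * q * gg2 lam q := by
  have hr : 0 < Real.sqrt q := Real.sqrt_pos.2 hq
  unfold gg gg1 gg2
  have h2 : Real.sqrt q * Real.sqrt q = q := Real.mul_self_sqrt hq.le
  obtain ⟨r, hrpos, rfl⟩ : ∃ r : ℝ, 0 < r ∧ r * r = q := ⟨_, hr, h2⟩
  rw [Real.sqrt_mul_self hrpos.le]
  field_simp
  ring

theorem planar_damped_wave_space_varying_velocities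
    (lam : ℝ) (hlam : 0 < lam)
    (c₁ c₂ : ℝ → ℝ) (hc₁ : Continuous c₁) (hc₂ : Continuous c₂)
    (hc₁pos : ∀ x, 0 < c₁ x) (hc₂pos : ∀ y, 0 < c₂ y)
    (p : ℝ → ℝ → ℝ → ℝ)
    (hp : ∀ x y, ∀ t : ℝ,
      p x y t = (lam / (2 * Real.pi)) *
        Real.exp (-(lam*t) + lam * Real.sqrt (t^2 - (Phi c₁ x)^2 - (Phi c₂ y)^2))
          / Real.sqrt (t^2 - (Phi c₁ x)^2 - (Phi c₂ y)^2)) :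
    ∀ x y t : ℝ, 0 < t → (Phi c₁ x)^2 + (Phi c₂ y)^2 < t^2 →
      iteratedDeriv 2 (fun s => p x y s) t + 2 * lam * deriv (fun s => p x y s) t
        = c₁ x * deriv (fun x' => c₁ x' * deriv (fun x'' => p x'' y t) x') x
          + c₂ y * deriv (fun y' => c₂ y' * deriv (fun y'' => p x y'' t) y') y := by
  intro x y t ht hlt
  have hq : 0 < t ^ 2 - Phi c₁ x ^ 2 - Phi c₂ y ^ 2 := by linarith
  set K : ℝ := lam / (2 * Real.pi) with hK
  have hrep : ∀ a b s : ℝ, p a b s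
      = K * Real.exp (-(lam * s)) * gg lam (s ^ 2 - Phi c₁ a ^ 2 - Phi c₂ b ^ 2) := by
    intro a b s
    rw [hp]
    unfold gg
    rw [Real.exp_add]
    ring
  have hPhic₁ : Continuous (Phi c₁) :=
    Differentiable.continuous fun x' => (hasDerivAt_Phi c₁ hc₁ hc₁pos x').differentiableAt
  have hPhic₂ : Continuous (Phi c₂) :=
    Differentiable.continuous fun y' => (hasDerivAt_Phi c₂ hc₂ hc₂pos y').differentiableAt
  -- x derivatives
  have hQd : ∀ x', HasDerivAt (fun x'' => t ^ 2 - Phi c₁ x'' ^ 2 - Phi c₂ y ^ 2)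
      (-(2 * Phi c₁ x' * (c₁ x')⁻¹)) x' := by
    intro x'
    have h1 : HasDerivAt (fun x'' => Phi c₁ x'' ^ 2) (2 * Phi c₁ x' * (c₁ x')⁻¹) x' := by
      exact ((hasDerivAt_Phi c₁ hc₁ hc₁pos x').pow 2).congr_deriv (by norm_num)
    simpa using ((hasDerivAt_const x' (t ^ 2)).sub h1).sub_const (Phi c₂ y ^ 2)
  have hpx : ∀ x', 0 < t ^ 2 - Phi c₁ x' ^ 2 - Phi c₂ y ^ 2 →
      HasDerivAt (fun x'' => p x'' y t)
        (K * Real.exp (-(lam * t)) * (gg1 lam (t ^ 2 - Phi c₁ x' ^ 2 - Phi c₂ y ^ 2)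
          * (-(2 * Phi c₁ x' * (c₁ x')⁻¹)))) x' := by
    intro x' hx'
    have hfun : (fun x'' => p x'' y t)
        = fun x'' => K * Real.exp (-(lam * t)) * gg lam (t ^ 2 - Phi c₁ x'' ^ 2 - Phi c₂ y ^ 2) :=
      funext fun a => hrep a y t
    rw [hfun]
    exact ((hasDerivAt_gg lam _ hx').comp x' (hQd x')).const_mul (K * Real.exp (-(lam * t)))
  have hmemX : {x' : ℝ | 0 < t ^ 2 - Phi c₁ x' ^ 2 - Phi c₂ y ^ 2} ∈ nhds x := by
    have hc : Continuous fun x' : ℝ => t ^ 2 - Phi c₁ x' ^ 2 - Phi c₂ y ^ 2 := by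
      exact (continuous_const.sub (hPhic₁.pow 2)).sub continuous_const
    exact (isOpen_lt continuous_const hc).mem_nhds hq
  have hEvx : (fun x' => c₁ x' * deriv (fun x'' => p x'' y t) x')
      =ᶠ[nhds x] fun x' => K * Real.exp (-(lam * t)) *
        (gg1 lam (t ^ 2 - Phi c₁ x' ^ 2 - Phi c₂ y ^ 2) * (-(2 * Phi c₁ x'))) := by
    filter_upwards [hmemX] with x' hx'
    rw [(hpx x' hx').deriv]
    field_simp [(hc₁pos x').ne']
  have hnicex : HasDerivAt (fun x' => K * Real.exp (-(lam * t)) *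
      (gg1 lam (t ^ 2 - Phi c₁ x' ^ 2 - Phi c₂ y ^ 2) * (-(2 * Phi c₁ x'))))
      (K * Real.exp (-(lam * t)) *
        ((gg2 lam (t ^ 2 - Phi c₁ x ^ 2 - Phi c₂ y ^ 2) * (-(2 * Phi c₁ x * (c₁ x)⁻¹)))
            * (-(2 * Phi c₁ x))
          + gg1 lam (t ^ 2 - Phi c₁ x ^ 2 - Phi c₂ y ^ 2) * (-(2 * (c₁ x)⁻¹)))) x := by
    have h1 := (hasDerivAt_gg1 lam _ hq).comp x (hQd x)
    have h2 : HasDerivAt (fun x' => -(2 * Phi c₁ x')) (-(2 * (c₁ x)⁻¹)) x := by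
      exact ((hasDerivAt_Phi c₁ hc₁ hc₁pos x).const_mul 2).neg
    exact (h1.mul h2).const_mul _
  have hXfinal : c₁ x * deriv (fun x' => c₁ x' * deriv (fun x'' => p x'' y t) x') x
      = K * Real.exp (-(lam * t)) *
          (4 * Phi c₁ x ^ 2 * gg2 lam (t ^ 2 - Phi c₁ x ^ 2 - Phi c₂ y ^ 2)
            - 2 * gg1 lam (t ^ 2 - Phi c₁ x ^ 2 - Phi c₂ y ^ 2)) := by
    rw [hEvx.deriv_eq, hnicex.deriv]
    field_simp [(hc₁pos x).ne']
    ring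
  -- y derivatives
  have hRd : ∀ y', HasDerivAt (fun y'' => t ^ 2 - Phi c₁ x ^ 2 - Phi c₂ y'' ^ 2)
      (-(2 * Phi c₂ y' * (c₂ y')⁻¹)) y' := by
    intro y'
    have h1 : HasDerivAt (fun y'' => Phi c₂ y'' ^ 2) (2 * Phi c₂ y' * (c₂ y')⁻¹) y' := by
      exact ((hasDerivAt_Phi c₂ hc₂ hc₂pos y').pow 2).congr_deriv (by norm_num)
    exact ((hasDerivAt_const y' (t ^ 2 - Phi c₁ x ^ 2)).sub h1).congr_deriv (by ring)
  have hpy : ∀ y', 0 < t ^ 2 - Phi c₁ x ^ 2 - Phi c₂ y' ^ 2 →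
      HasDerivAt (fun y'' => p x y'' t)
        (K * Real.exp (-(lam * t)) * (gg1 lam (t ^ 2 - Phi c₁ x ^ 2 - Phi c₂ y' ^ 2)
          * (-(2 * Phi c₂ y' * (c₂ y')⁻¹)))) y' := by
    intro y' hy'
    have hfun : (fun y'' => p x y'' t)
        = fun y'' => K * Real.exp (-(lam * t)) * gg lam (t ^ 2 - Phi c₁ x ^ 2 - Phi c₂ y'' ^ 2) :=
      funext fun b => hrep x b t
    rw [hfun]
    exact ((hasDerivAt_gg lam _ hy').comp y' (hRd y')).const_mul (K * Real.exp (-(lam * t)))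
  have hmemY : {y' : ℝ | 0 < t ^ 2 - Phi c₁ x ^ 2 - Phi c₂ y' ^ 2} ∈ nhds y := by
    have hc : Continuous fun y' : ℝ => t ^ 2 - Phi c₁ x ^ 2 - Phi c₂ y' ^ 2 := by
      exact continuous_const.sub (hPhic₂.pow 2)
    exact (isOpen_lt continuous_const hc).mem_nhds hq
  have hEvy : (fun y' => c₂ y' * deriv (fun y'' => p x y'' t) y')
      =ᶠ[nhds y] fun y' => K * Real.exp (-(lam * t)) *
        (gg1 lam (t ^ 2 - Phi c₁ x ^ 2 - Phi c₂ y' ^ 2) * (-(2 * Phi c₂ y'))) := by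
    filter_upwards [hmemY] with y' hy'
    rw [(hpy y' hy').deriv]
    field_simp [(hc₂pos y').ne']
  have hnicey : HasDerivAt (fun y' => K * Real.exp (-(lam * t)) *
      (gg1 lam (t ^ 2 - Phi c₁ x ^ 2 - Phi c₂ y' ^ 2) * (-(2 * Phi c₂ y'))))
      (K * Real.exp (-(lam * t)) *
        ((gg2 lam (t ^ 2 - Phi c₁ x ^ 2 - Phi c₂ y ^ 2) * (-(2 * Phi c₂ y * (c₂ y)⁻¹)))
            * (-(2 * Phi c₂ y))
          + gg1 lam (t ^ 2 - Phi c₁ x ^ 2 - Phi c₂ y ^ 2) * (-(2 * (c₂ y)⁻¹)))) y := by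
    have h1 := (hasDerivAt_gg1 lam _ hq).comp y (hRd y)
    have h2 : HasDerivAt (fun y' => -(2 * Phi c₂ y')) (-(2 * (c₂ y)⁻¹)) y := by
      exact ((hasDerivAt_Phi c₂ hc₂ hc₂pos y).const_mul 2).neg
    exact (h1.mul h2).const_mul _
  have hYfinal : c₂ y * deriv (fun y' => c₂ y' * deriv (fun y'' => p x y'' t) y') y
      = K * Real.exp (-(lam * t)) *
          (4 * Phi c₂ y ^ 2 * gg2 lam (t ^ 2 - Phi c₁ x ^ 2 - Phi c₂ y ^ 2)
            - 2 * gg1 lam (t ^ 2 - Phi c₁ x ^ 2 - Phi c₂ y ^ 2)) := by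
    rw [hEvy.deriv_eq, hnicey.deriv]
    field_simp [(hc₂pos y).ne']
    ring
  -- t derivatives
  have hSd : ∀ s : ℝ, HasDerivAt (fun s' => s' ^ 2 - Phi c₁ x ^ 2 - Phi c₂ y ^ 2) (2 * s) s := by
    intro s
    simpa using ((hasDerivAt_pow 2 s).sub_const (Phi c₁ x ^ 2)).sub_const (Phi c₂ y ^ 2)
  have hEd : ∀ s : ℝ, HasDerivAt (fun s' => Real.exp (-(lam * s')))
      (Real.exp (-(lam * s)) * (-lam)) s := by
    intro s
    have h0 : HasDerivAt (fun s' : ℝ => -(lam * s')) (-lam) s := by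
      exact (((hasDerivAt_id s).const_mul lam).neg).congr_deriv (by ring)
    exact h0.exp
  have hpt : ∀ s : ℝ, 0 < s ^ 2 - Phi c₁ x ^ 2 - Phi c₂ y ^ 2 →
      HasDerivAt (fun s' => p x y s')
        (K * (Real.exp (-(lam * s)) * (-lam) * gg lam (s ^ 2 - Phi c₁ x ^ 2 - Phi c₂ y ^ 2)
          + Real.exp (-(lam * s)) * (gg1 lam (s ^ 2 - Phi c₁ x ^ 2 - Phi c₂ y ^ 2) * (2 * s)))) s := by
    intro s hs
    have hfun : (fun s' => p x y s')
        = fun s' => K * (Real.exp (-(lam * s')) * gg lam (s' ^ 2 - Phi c₁ x ^ 2 - Phi c₂ y ^ 2)) := by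
      funext s'
      rw [hrep x y s']
      ring
    rw [hfun]
    exact ((hEd s).mul ((hasDerivAt_gg lam _ hs).comp s (hSd s))).const_mul K
  have hEvT : deriv (fun s => p x y s) =ᶠ[nhds t] fun s =>
      K * (Real.exp (-(lam * s)) * (-lam) * gg lam (s ^ 2 - Phi c₁ x ^ 2 - Phi c₂ y ^ 2)
        + Real.exp (-(lam * s)) * (gg1 lam (s ^ 2 - Phi c₁ x ^ 2 - Phi c₂ y ^ 2) * (2 * s))) := by
    have hc : Continuous fun s : ℝ => s ^ 2 - Phi c₁ x ^ 2 - Phi c₂ y ^ 2 := by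
      exact ((continuous_pow 2).sub continuous_const).sub continuous_const
    have hmemT : {s : ℝ | 0 < s ^ 2 - Phi c₁ x ^ 2 - Phi c₂ y ^ 2} ∈ nhds t :=
      (isOpen_lt continuous_const hc).mem_nhds hq
    filter_upwards [hmemT] with s hs
    exact (hpt s hs).deriv
  have hT1 : deriv (fun s => p x y s) t
      = K * (Real.exp (-(lam * t)) * (-lam) * gg lam (t ^ 2 - Phi c₁ x ^ 2 - Phi c₂ y ^ 2)
        + Real.exp (-(lam * t)) * (gg1 lam (t ^ 2 - Phi c₁ x ^ 2 - Phi c₂ y ^ 2) * (2 * t))) :=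
    (hpt t hq).deriv
  have hniceT : HasDerivAt (fun s =>
      K * (Real.exp (-(lam * s)) * (-lam) * gg lam (s ^ 2 - Phi c₁ x ^ 2 - Phi c₂ y ^ 2)
        + Real.exp (-(lam * s)) * (gg1 lam (s ^ 2 - Phi c₁ x ^ 2 - Phi c₂ y ^ 2) * (2 * s))))
      (K * ((Real.exp (-(lam * t)) * (-lam) * (-lam)
              * gg lam (t ^ 2 - Phi c₁ x ^ 2 - Phi c₂ y ^ 2)
            + Real.exp (-(lam * t)) * (-lam)
              * (gg1 lam (t ^ 2 - Phi c₁ x ^ 2 - Phi c₂ y ^ 2) * (2 * t)))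
          + (Real.exp (-(lam * t)) * (-lam)
              * (gg1 lam (t ^ 2 - Phi c₁ x ^ 2 - Phi c₂ y ^ 2) * (2 * t))
            + Real.exp (-(lam * t))
              * ((gg2 lam (t ^ 2 - Phi c₁ x ^ 2 - Phi c₂ y ^ 2) * (2 * t)) * (2 * t)
                + gg1 lam (t ^ 2 - Phi c₁ x ^ 2 - Phi c₂ y ^ 2) * 2)))) t := by
    have ha : HasDerivAt (fun s => Real.exp (-(lam * s)) * (-lam)
        * gg lam (s ^ 2 - Phi c₁ x ^ 2 - Phi c₂ y ^ 2))
        (Real.exp (-(lam * t)) * (-lam) * (-lam) * gg lam (t ^ 2 - Phi c₁ x ^ 2 - Phi c₂ y ^ 2)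
          + Real.exp (-(lam * t)) * (-lam)
            * (gg1 lam (t ^ 2 - Phi c₁ x ^ 2 - Phi c₂ y ^ 2) * (2 * t))) t := by
      have := ((hEd t).mul_const (-lam)).mul ((hasDerivAt_gg lam _ hq).comp t (hSd t))
      exact this
    have hb : HasDerivAt (fun s => Real.exp (-(lam * s))
        * (gg1 lam (s ^ 2 - Phi c₁ x ^ 2 - Phi c₂ y ^ 2) * (2 * s)))
        (Real.exp (-(lam * t)) * (-lam)
            * (gg1 lam (t ^ 2 - Phi c₁ x ^ 2 - Phi c₂ y ^ 2) * (2 * t))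
          + Real.exp (-(lam * t))
            * ((gg2 lam (t ^ 2 - Phi c₁ x ^ 2 - Phi c₂ y ^ 2) * (2 * t)) * (2 * t)
              + gg1 lam (t ^ 2 - Phi c₁ x ^ 2 - Phi c₂ y ^ 2) * 2)) t := by
      have hinner : HasDerivAt (fun s => gg1 lam (s ^ 2 - Phi c₁ x ^ 2 - Phi c₂ y ^ 2) * (2 * s))
          ((gg2 lam (t ^ 2 - Phi c₁ x ^ 2 - Phi c₂ y ^ 2) * (2 * t)) * (2 * t)
            + gg1 lam (t ^ 2 - Phi c₁ x ^ 2 - Phi c₂ y ^ 2) * 2) t := by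
        have h2t : HasDerivAt (fun s : ℝ => 2 * s) 2 t := by
          simpa using (hasDerivAt_id t).const_mul 2
        exact ((hasDerivAt_gg1 lam _ hq).comp t (hSd t)).mul h2t
      exact (hEd t).mul hinner
    exact (ha.add hb).const_mul K
  have hT2 : iteratedDeriv 2 (fun s => p x y s) t
      = K * ((Real.exp (-(lam * t)) * (-lam) * (-lam)
              * gg lam (t ^ 2 - Phi c₁ x ^ 2 - Phi c₂ y ^ 2)
            + Real.exp (-(lam * t)) * (-lam)
              * (gg1 lam (t ^ 2 - Phi c₁ x ^ 2 - Phi c₂ y ^ 2) * (2 * t)))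
          + (Real.exp (-(lam * t)) * (-lam)
              * (gg1 lam (t ^ 2 - Phi c₁ x ^ 2 - Phi c₂ y ^ 2) * (2 * t))
            + Real.exp (-(lam * t))
              * ((gg2 lam (t ^ 2 - Phi c₁ x ^ 2 - Phi c₂ y ^ 2) * (2 * t)) * (2 * t)
                + gg1 lam (t ^ 2 - Phi c₁ x ^ 2 - Phi c₂ y ^ 2) * 2))) := by
    rw [iteratedDeriv_succ, iteratedDeriv_one, hEvT.deriv_eq, hniceT.deriv]
  rw [hT2, hT1, hXfinal, hYfinal]
  have key := key_gg lam (t ^ 2 - Phi c₁ x ^ 2 - Phi c₂ y ^ 2) hq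
  linear_combination (-(K * Real.exp (-(lam * t)))) * key
end

section
/- Let λ > 0, t > 0, let c₁, c₂ : ℝ → (0,∞) be continuous such that Φ₁(x) = ∫₀^x dw/c₁(w) and Φ₂(y) = ∫₀^y dz/c₂(z) are surjections of ℝ onto ℝ, and let D = {(x,y) : Φ₁(x)² + Φ₂(y)² < t²}. Then ∬_D (λ/(2π c₁(x) c₂(y))) · exp( −λt + λ√(t² − Φ₁(x)² − Φ₂(y)²) ) / √(t² − Φ₁(x)² − Φ₂(y)²) dx dy = 1 − e^{−λt}; equivalently, ∬_{{u²+v²<t²}} (λ/(2π)) e^{−λt + λ√(t²−u²−v²)} / √(t²−u²−v²) du dv = 1 − e^{−λt}. Hence the absolutely continuous component of the planar law has total mass 1 − e^{−λt}. -/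
open Real MeasureTheory

lemma aux_disc (lam t : ℝ) (hlam : 0 < lam) (ht : 0 < t) :
    (∫ z in {z : ℝ × ℝ | z.1^2 + z.2^2 < t^2},
        (lam / (2 * Real.pi)) *
          Real.exp (-(lam*t) + lam * Real.sqrt (t^2 - z.1^2 - z.2^2))
            / Real.sqrt (t^2 - z.1^2 - z.2^2))
      = 1 - Real.exp (-(lam*t)) := by
  have hpi : (0:ℝ) < Real.pi := Real.pi_pos
  set G : ℝ × ℝ → ℝ := fun z =>
    lam / (2 * Real.pi) * Real.exp (-(lam*t) + lam * Real.sqrt (t^2 - z.1^2 - z.2^2))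
      / Real.sqrt (t^2 - z.1^2 - z.2^2) with hG
  set D : Set (ℝ × ℝ) := {z : ℝ × ℝ | z.1^2 + z.2^2 < t^2} with hD
  have hDopen : IsOpen D := isOpen_lt (by fun_prop) continuous_const
  have hDmeas : MeasurableSet D := hDopen.measurableSet
  set k : ℝ → ℝ := fun r =>
    r * (lam / (2 * Real.pi) * Real.exp (-(lam*t) + lam * Real.sqrt (t^2 - r^2))
      / Real.sqrt (t^2 - r^2)) with hk
  set h : ℝ → ℝ := (Set.Ioo (0:ℝ) t).indicator k with hh
  have h1 : ∫ z in D, G z = ∫ z, D.indicator G z := (integral_indicator hDmeas).symm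
  rw [h1, ← integral_comp_polarCoord_symm (D.indicator G)]
  have h2 : ∀ p ∈ polarCoord.target,
      p.1 • (D.indicator G) (polarCoord.symm p) = (fun r => h r) p.1 * (fun _ : ℝ => (1:ℝ)) p.2 := by
    rintro ⟨r, θ⟩ hp
    have hr : 0 < r := hp.1
    have hsymm : polarCoord.symm (r, θ) = (r * Real.cos θ, r * Real.sin θ) := rfl
    have hsq : (r * Real.cos θ)^2 + (r * Real.sin θ)^2 = r^2 := by
      nlinarith [Real.sin_sq_add_cos_sq θ]
    by_cases hrt : r < t
    · have hmem : ((r * Real.cos θ, r * Real.sin θ) : ℝ × ℝ) ∈ D := by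
        simp only [hD, Set.mem_setOf_eq, hsq]
        nlinarith
      have hmem' : r ∈ Set.Ioo (0:ℝ) t := ⟨hr, hrt⟩
      simp only [hsymm, smul_eq_mul, mul_one, hh]
      rw [Set.indicator_of_mem hmem, Set.indicator_of_mem hmem']
      simp only [hG, hk]
      rw [show t^2 - (r * Real.cos θ)^2 - (r * Real.sin θ)^2 = t^2 - r^2 by nlinarith]
    · have hmem : ((r * Real.cos θ, r * Real.sin θ) : ℝ × ℝ) ∉ D := by
        simp only [hD, Set.mem_setOf_eq, hsq, not_lt]
        nlinarith [not_lt.mp hrt]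
      have hmem' : r ∉ Set.Ioo (0:ℝ) t := fun hc => hrt hc.2
      simp only [hsymm, smul_eq_mul, mul_one, hh]
      rw [Set.indicator_of_notMem hmem, Set.indicator_of_notMem hmem']
      exact mul_zero r
  rw [setIntegral_congr_fun polarCoord.open_target.measurableSet h2]
  have htarget : polarCoord.target = Set.Ioi (0:ℝ) ×ˢ Set.Ioo (-Real.pi) Real.pi := rfl
  rw [htarget, Measure.volume_eq_prod,
    MeasureTheory.setIntegral_prod_mul (L := ℝ) (fun r => h r) (fun _ : ℝ => (1:ℝ))
      (Set.Ioi (0:ℝ)) (Set.Ioo (-Real.pi) Real.pi)]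
  have hθint : (∫ _ in Set.Ioo (-Real.pi) Real.pi, (1:ℝ)) = 2 * Real.pi := by
    rw [setIntegral_const, Real.volume_real_Ioo_of_le (by linarith), smul_eq_mul, mul_one]
    ring
  have hrint : (∫ r in Set.Ioi (0:ℝ), h r) = ∫ r in Set.Ioo (0:ℝ) t, k r := by
    rw [hh, setIntegral_indicator measurableSet_Ioo,
      show Set.Ioi (0:ℝ) ∩ Set.Ioo 0 t = Set.Ioo 0 t from
        Set.ext fun x => ⟨fun hx => hx.2, fun hx => ⟨hx.1, hx⟩⟩]
  rw [hθint, hrint]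
  -- now compute the radial integral by the fundamental theorem of calculus
  set F : ℝ → ℝ := fun r => -(Real.exp (-(lam*t)) / (2 * Real.pi)) *
      Real.exp (lam * Real.sqrt (t^2 - r^2)) with hF
  have hFcont : ContinuousOn F (Set.Icc 0 t) := by
    apply Continuous.continuousOn
    fun_prop
  have hFder : ∀ r ∈ Set.Ioo (0:ℝ) t, HasDerivAt F (k r) r := by
    intro r hr
    have h1 : 0 < t^2 - r^2 := by nlinarith [hr.1, hr.2]
    have hsqrt_pos : 0 < Real.sqrt (t^2 - r^2) := Real.sqrt_pos.mpr h1
    have hin : HasDerivAt (fun r : ℝ => t^2 - r^2) (-(2*r)) r := by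
      simpa using (hasDerivAt_pow 2 r).const_sub (t^2)
    have hs : HasDerivAt (fun r => Real.sqrt (t^2 - r^2)) (-r / Real.sqrt (t^2 - r^2)) r := by
      have := (Real.hasDerivAt_sqrt h1.ne').comp r hin
      refine this.congr_deriv ?_
      field_simp
    have hexp := (((hs.const_mul lam).exp).const_mul
      (-(Real.exp (-(lam*t)) / (2 * Real.pi))))
    refine hexp.congr_deriv ?_
    rw [hk]
    simp only
    rw [Real.exp_add]
    field_simp
  have hknn : ∀ r ∈ Set.Ioo (0:ℝ) t, 0 ≤ k r := by
    intro r hr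
    apply mul_nonneg hr.1.le
    positivity
  have hint : IntervalIntegrable k volume 0 t := by
    apply intervalIntegral.intervalIntegrable_deriv_of_nonneg
    · rwa [Set.uIcc_of_le ht.le]
    · simpa [min_eq_left ht.le, max_eq_right ht.le] using hFder
    · simpa [min_eq_left ht.le, max_eq_right ht.le] using hknn
  have hFTC := intervalIntegral.integral_eq_sub_of_hasDerivAt_of_le ht.le hFcont hFder hint
  have hIoo : (∫ r in Set.Ioo (0:ℝ) t, k r) = F t - F 0 := by
    rw [← MeasureTheory.integral_Ioc_eq_integral_Ioo, ← intervalIntegral.integral_of_le ht.le]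
    exact hFTC
  rw [hIoo]
  have hFt : F t = -(Real.exp (-(lam*t)) / (2 * Real.pi)) := by
    simp [hF]
  have hF0 : F 0 = -(1 / (2 * Real.pi)) := by
    have h0 : t^2 - (0:ℝ)^2 = t^2 := by norm_num
    simp only [hF, h0, Real.sqrt_sq ht.le]
    rw [neg_mul, neg_inj, div_mul_eq_mul_div, ← Real.exp_add]
    simp
  rw [hFt, hF0]
  field_simp
  ring
set_option maxHeartbeats 800000 in
theorem planar_ac_component_total_mass
    (lam t : ℝ) (hlam : 0 < lam) (ht : 0 < t)
    (c₁ c₂ : ℝ → ℝ) (hc₁ : Continuous c₁) (hc₂ : Continuous c₂)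
    (hc₁pos : ∀ x, 0 < c₁ x) (hc₂pos : ∀ y, 0 < c₂ y)
    (hsurj₁ : Function.Surjective (Phi c₁)) (hsurj₂ : Function.Surjective (Phi c₂)) :
    (∫ z in {z : ℝ × ℝ | (Phi c₁ z.1)^2 + (Phi c₂ z.2)^2 < t^2},
        (lam / (2 * Real.pi * c₁ z.1 * c₂ z.2)) *
          Real.exp (-(lam*t) + lam * Real.sqrt (t^2 - (Phi c₁ z.1)^2 - (Phi c₂ z.2)^2))
            / Real.sqrt (t^2 - (Phi c₁ z.1)^2 - (Phi c₂ z.2)^2)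
      = 1 - Real.exp (-(lam*t))) ∧
    (∫ z in {z : ℝ × ℝ | z.1^2 + z.2^2 < t^2},
        (lam / (2 * Real.pi)) *
          Real.exp (-(lam*t) + lam * Real.sqrt (t^2 - z.1^2 - z.2^2))
            / Real.sqrt (t^2 - z.1^2 - z.2^2)
      = 1 - Real.exp (-(lam*t))) := by
  have key := aux_disc lam t hlam ht
  refine ⟨?_, key⟩
  have hic₁ : Continuous fun w => (c₁ w)⁻¹ := hc₁.inv₀ fun x => (hc₁pos x).ne'
  have hic₂ : Continuous fun w => (c₂ w)⁻¹ := hc₂.inv₀ fun x => (hc₂pos x).ne'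
  have hPhi₁ : ∀ x, HasDerivAt (Phi c₁) (c₁ x)⁻¹ x := fun x =>
    intervalIntegral.integral_hasDerivAt_right (hic₁.intervalIntegrable 0 x)
      (hic₁.stronglyMeasurableAtFilter _ _) hic₁.continuousAt
  have hPhi₂ : ∀ y, HasDerivAt (Phi c₂) (c₂ y)⁻¹ y := fun y =>
    intervalIntegral.integral_hasDerivAt_right (hic₂.intervalIntegrable 0 y)
      (hic₂.stronglyMeasurableAtFilter _ _) hic₂.continuousAt
  have hPhicont₁ : Continuous (Phi c₁) :=
    continuous_iff_continuousAt.2 fun x => (hPhi₁ x).continuousAt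
  have hPhicont₂ : Continuous (Phi c₂) :=
    continuous_iff_continuousAt.2 fun y => (hPhi₂ y).continuousAt
  have hmono₁ : StrictMono (Phi c₁) :=
    strictMono_of_hasDerivAt_pos hPhi₁ fun x => inv_pos.mpr (hc₁pos x)
  have hmono₂ : StrictMono (Phi c₂) :=
    strictMono_of_hasDerivAt_pos hPhi₂ fun y => inv_pos.mpr (hc₂pos y)
  set f : ℝ × ℝ → ℝ × ℝ := fun z => (Phi c₁ z.1, Phi c₂ z.2) with hf
  set f' : ℝ × ℝ → (ℝ × ℝ) →L[ℝ] (ℝ × ℝ) := fun z =>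
    LinearMap.toContinuousLinearMap (Matrix.toLin (Module.Basis.finTwoProd ℝ) (Module.Basis.finTwoProd ℝ)
      !![(c₁ z.1)⁻¹, 0; 0, (c₂ z.2)⁻¹]) with hf'
  have hder : ∀ z : ℝ × ℝ, HasFDerivAt f (f' z) z := by
    intro z
    have h1 : HasFDerivAt (fun z : ℝ × ℝ => Phi c₁ z.1)
        ((c₁ z.1)⁻¹ • ContinuousLinearMap.fst ℝ ℝ ℝ) z :=
      (hPhi₁ z.1).comp_hasFDerivAt z hasFDerivAt_fst
    have h2 : HasFDerivAt (fun z : ℝ × ℝ => Phi c₂ z.2)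
        ((c₂ z.2)⁻¹ • ContinuousLinearMap.snd ℝ ℝ ℝ) z :=
      (hPhi₂ z.2).comp_hasFDerivAt z hasFDerivAt_snd
    have h3 := h1.prodMk h2
    rw [hf']
    simp only [Matrix.toLin_finTwoProd_toContinuousLinearMap]
    refine h3.congr_fderiv ?_
    ext <;> simp
  have hdet : ∀ z : ℝ × ℝ, (f' z).det = (c₁ z.1)⁻¹ * (c₂ z.2)⁻¹ := by
    intro z
    simp [hf', LinearMap.det_toContinuousLinearMap, LinearMap.det_toLin,
      Matrix.det_fin_two_of]
  set D : Set (ℝ × ℝ) := {z : ℝ × ℝ | z.1^2 + z.2^2 < t^2} with hD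
  have hDopen : IsOpen D := isOpen_lt (by fun_prop) continuous_const
  set s : Set (ℝ × ℝ) := {z : ℝ × ℝ | (Phi c₁ z.1)^2 + (Phi c₂ z.2)^2 < t^2} with hs
  have hpre : s = f ⁻¹' D := rfl
  have hfc : Continuous f := (hPhicont₁.comp continuous_fst).prodMk
    (hPhicont₂.comp continuous_snd)
  have hsmeas : MeasurableSet s := by
    rw [hpre]; exact (hDopen.preimage hfc).measurableSet
  have hinj : Function.Injective f := by
    intro a b hab
    have h1 : Phi c₁ a.1 = Phi c₁ b.1 := congrArg Prod.fst hab
    have h2 : Phi c₂ a.2 = Phi c₂ b.2 := congrArg Prod.snd hab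
    exact Prod.ext (hmono₁.injective h1) (hmono₂.injective h2)
  have hfsurj : Function.Surjective f := by
    rintro ⟨u, v⟩
    obtain ⟨x, hx⟩ := hsurj₁ u
    obtain ⟨y, hy⟩ := hsurj₂ v
    exact ⟨(x, y), by simp [hf, hx, hy]⟩
  have himg : f '' s = D := by
    rw [hpre]; exact Set.image_preimage_eq D hfsurj
  set G : ℝ × ℝ → ℝ := fun z =>
    lam / (2 * Real.pi) * Real.exp (-(lam*t) + lam * Real.sqrt (t^2 - z.1^2 - z.2^2))
      / Real.sqrt (t^2 - z.1^2 - z.2^2) with hG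
  have hcov := integral_image_eq_integral_abs_det_fderiv_smul (μ := volume) hsmeas
    (fun z _ => (hder z).hasFDerivWithinAt) hinj.injOn G
  rw [himg] at hcov
  have hpt : ∀ z : ℝ × ℝ, |(f' z).det| • G (f z) =
      (lam / (2 * Real.pi * c₁ z.1 * c₂ z.2)) *
        Real.exp (-(lam*t) + lam * Real.sqrt (t^2 - (Phi c₁ z.1)^2 - (Phi c₂ z.2)^2))
          / Real.sqrt (t^2 - (Phi c₁ z.1)^2 - (Phi c₂ z.2)^2) := by
    intro z
    rw [hdet, abs_of_pos (mul_pos (inv_pos.mpr (hc₁pos z.1)) (inv_pos.mpr (hc₂pos z.2)))]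
    simp only [smul_eq_mul, hG, hf]
    have hc1 : c₁ z.1 ≠ 0 := (hc₁pos z.1).ne'
    have hc2 : c₂ z.2 ≠ 0 := (hc₂pos z.2).ne'
    have hpi : Real.pi ≠ 0 := Real.pi_ne_zero
    field_simp
  calc ∫ z in s,
        (lam / (2 * Real.pi * c₁ z.1 * c₂ z.2)) *
          Real.exp (-(lam*t) + lam * Real.sqrt (t^2 - (Phi c₁ z.1)^2 - (Phi c₂ z.2)^2))
            / Real.sqrt (t^2 - (Phi c₁ z.1)^2 - (Phi c₂ z.2)^2)
      = ∫ z in s, |(f' z).det| • G (f z) := by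
        exact setIntegral_congr_fun hsmeas fun z _ => (hpt z).symm
    _ = ∫ z in D, G z := hcov.symm
    _ = 1 - Real.exp (-(lam*t)) := key
end
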